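/- arXiv:2212.05674 — 8 statements merged into one kernel-verified Lean document; each statement's English description precedes it below -/
import Mathlib

section
/- Let 0 < r₂ < r₁ and let W₁ and W₂ be the solutions of the F̃-ODE with initial slopes r₁ and r₂ respectively. For i = 1, 2 let c_i = inf{ x > 0 : W_i(x) = 0 } (with the infimum of the empty set taken to be +∞), and define Y_i(x) = ∫₀ˣ W_i(s) ds + (1/α)·((σ²/2)·r_i − F̃(−p)). Then for every x ∈ [0, c₁ ∧ c₂): W₂'(x) < W₁'(x); W₂(x) ≤ W₁(x), with equality only at x = 0; and Y₂(x) < Y₁(x). -/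
open Set Filter

/-- The Legendre–Fenchel transform `F(y) = sup_{u ≥ 0} (u·y − C(u))`. -/
noncomputable def LF (C : ℝ → ℝ) (y : ℝ) : ℝ :=
  sSup ((fun u => u * y - C u) '' Set.Ici (0 : ℝ))

noncomputable def gg (C h : ℝ → ℝ) (y : ℝ) : ℝ := if deriv C 0 ≤ y then h y else 0

section helpers

variable {C h : ℝ → ℝ}

/-- C is nonnegative on `Ici 0`. -/
lemma C_nonneg (hCanti : AntitoneOn C (Set.Ici 0)) (hClim : Tendsto C atTop (nhds 0))
    {u : ℝ} (hu : 0 ≤ u) : 0 ≤ C u := by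
  refine le_of_tendsto hClim ?_
  filter_upwards [eventually_ge_atTop u] with v hv
  exact hCanti hu (le_trans hu hv) hv

/-- deriv C is strictly monotone on `Ici 0`. -/
lemma derivC_mono (hC2 : ContDiff ℝ 2 C) (hC'' : ∀ u ≥ (0 : ℝ), 0 < deriv (deriv C) u) :
    StrictMonoOn (deriv C) (Set.Ici 0) := by
  refine strictMonoOn_of_deriv_pos (convex_Ici 0)
    ((hC2.continuous_deriv one_le_two).continuousOn) ?_
  intro x hx
  rw [interior_Ici] at hx
  exact hC'' x (le_of_lt hx)

/-- deriv C is negative on `Ici 0`. -/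
lemma derivC_neg (hC2 : ContDiff ℝ 2 C) (hCanti : AntitoneOn C (Set.Ici 0))
    (hC'' : ∀ u ≥ (0 : ℝ), 0 < deriv (deriv C) u) {u : ℝ} (hu : 0 ≤ u) : deriv C u < 0 := by
  by_contra hcon
  push_neg at hcon
  have hmono : StrictMonoOn C (Set.Ici u) := by
    refine strictMonoOn_of_deriv_pos (convex_Ici u) hC2.continuous.continuousOn ?_
    intro x hx
    rw [interior_Ici] at hx
    have := (derivC_mono hC2 hC'') (mem_Ici.2 hu) (mem_Ici.2 (le_of_lt (lt_of_le_of_lt hu hx))) hx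
    linarith
  have h1 : C u < C (u + 1) := hmono (mem_Ici.2 le_rfl) (mem_Ici.2 (by linarith)) (by linarith)
  have h2 : C (u + 1) ≤ C u := hCanti (mem_Ici.2 hu) (mem_Ici.2 (by linarith)) (by linarith)
  linarith

/-- Tangent line inequality for the convex function C. -/
lemma tangent (hC2 : ContDiff ℝ 2 C) (hC'' : ∀ u ≥ (0 : ℝ), 0 < deriv (deriv C) u)
    {u v : ℝ} (hu : 0 ≤ u) (hv : 0 ≤ v) : C v + deriv C v * (u - v) ≤ C u := by
  have hmono := derivC_mono hC2 hC''
  rcases lt_trichotomy u v with hlt | heq | hgt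
  · obtain ⟨ξ, hξ, hslope⟩ := exists_deriv_eq_slope C hlt hC2.continuous.continuousOn
      (hC2.differentiable two_ne_zero).differentiableOn
    have hle : deriv C ξ < deriv C v :=
      hmono (mem_Ici.2 (le_of_lt (lt_of_le_of_lt hu hξ.1))) (mem_Ici.2 hv) hξ.2
    have hvu : 0 < v - u := by linarith
    have : C v - C u = deriv C ξ * (v - u) := by
      field_simp at hslope; linarith [hslope]
    nlinarith
  · simp [heq]
  · obtain ⟨ξ, hξ, hslope⟩ := exists_deriv_eq_slope C hgt hC2.continuous.continuousOn
      (hC2.differentiable two_ne_zero).differentiableOn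
    have hle : deriv C v < deriv C ξ :=
      hmono (mem_Ici.2 hv) (mem_Ici.2 (le_of_lt (lt_of_le_of_lt hv hξ.1))) hξ.1
    have hvu : 0 < u - v := by linarith
    have : C u - C v = deriv C ξ * (u - v) := by
      field_simp at hslope; linarith [hslope]
    nlinarith

end helpers

section legendre

variable {C h : ℝ → ℝ}

lemma gg_nonneg (hinv₂ : ∀ y : ℝ, deriv C 0 ≤ y → y < 0 → 0 ≤ h y ∧ deriv C (h y) = y)
    {y : ℝ} (hy : y < 0) : 0 ≤ gg C h y := by
  unfold gg
  split_ifs with hb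
  · exact (hinv₂ y hb hy).1
  · exact le_refl 0

lemma LF_isGreatest (hC2 : ContDiff ℝ 2 C) (hC'' : ∀ u ≥ (0 : ℝ), 0 < deriv (deriv C) u)
    (hinv₂ : ∀ y : ℝ, deriv C 0 ≤ y → y < 0 → 0 ≤ h y ∧ deriv C (h y) = y)
    {y : ℝ} (hy : y < 0) :
    IsGreatest ((fun u => u * y - C u) '' Set.Ici (0 : ℝ)) (gg C h y * y - C (gg C h y)) := by
  constructor
  · exact ⟨gg C h y, gg_nonneg hinv₂ hy, rfl⟩
  · rintro a ⟨u, hu, rfl⟩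
    simp only [mem_Ici] at hu
    show u * y - C u ≤ gg C h y * y - C (gg C h y)
    unfold gg
    split_ifs with hb
    · obtain ⟨hh0, hh1⟩ := hinv₂ y hb hy
      have := tangent hC2 hC'' hu hh0
      rw [hh1] at this
      nlinarith
    · push_neg at hb
      have := tangent hC2 hC'' hu (le_refl (0:ℝ))
      have huy : u * y ≤ u * deriv C 0 := by nlinarith
      simp only [sub_zero] at this
      nlinarith

lemma LF_eq (hC2 : ContDiff ℝ 2 C) (hC'' : ∀ u ≥ (0 : ℝ), 0 < deriv (deriv C) u)
    (hinv₂ : ∀ y : ℝ, deriv C 0 ≤ y → y < 0 → 0 ≤ h y ∧ deriv C (h y) = y)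
    {y : ℝ} (hy : y < 0) : LF C y = gg C h y * y - C (gg C h y) :=
  (LF_isGreatest hC2 hC'' hinv₂ hy).csSup_eq

lemma LF_subgrad (hC2 : ContDiff ℝ 2 C) (hC'' : ∀ u ≥ (0 : ℝ), 0 < deriv (deriv C) u)
    (hinv₂ : ∀ y : ℝ, deriv C 0 ≤ y → y < 0 → 0 ≤ h y ∧ deriv C (h y) = y)
    {y z : ℝ} (hy : y < 0) (hz : z < 0) :
    gg C h y * (z - y) ≤ LF C z - LF C y := by
  have h1 : gg C h y * z - C (gg C h y) ≤ LF C z := by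
    rw [LF_eq hC2 hC'' hinv₂ hz]
    exact (LF_isGreatest hC2 hC'' hinv₂ hz).2 ⟨gg C h y, gg_nonneg hinv₂ hy, rfl⟩
  rw [LF_eq hC2 hC'' hinv₂ hy]
  nlinarith [h1]

end legendre

section ggcont

variable {C h : ℝ → ℝ}

lemma gg_cont (hC2 : ContDiff ℝ 2 C) (hCanti : AntitoneOn C (Set.Ici 0))
    (hC'' : ∀ u ≥ (0 : ℝ), 0 < deriv (deriv C) u)
    (hinv₁ : ∀ u ≥ (0 : ℝ), h (deriv C u) = u)
    (hinv₂ : ∀ y : ℝ, deriv C 0 ≤ y → y < 0 → 0 ≤ h y ∧ deriv C (h y) = y)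
    {y : ℝ} (hy : y < 0) {ε : ℝ} (hε : 0 < ε) :
    ∀ᶠ z in nhds y, |gg C h z - gg C h y| ≤ ε := by
  have hmono := derivC_mono hC2 hC''
  rcases lt_trichotomy y (deriv C 0) with hlt | heq | hgt
  · filter_upwards [Iio_mem_nhds hlt] with z hz
    rw [mem_Iio] at hz
    simp only [gg, if_neg (not_le.2 hz), if_neg (not_le.2 hlt), sub_zero, abs_zero]
    exact le_of_lt hε
  · -- y = deriv C 0
    have hggy : gg C h y = 0 := by
      simp only [gg, heq, if_pos le_rfl]
      exact hinv₁ 0 le_rfl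
    have htb : deriv C 0 < deriv C ε := hmono (mem_Ici.2 le_rfl) (mem_Ici.2 (le_of_lt hε)) hε
    have ht0 : deriv C ε < 0 := derivC_neg hC2 hCanti hC'' (le_of_lt hε)
    filter_upwards [Iio_mem_nhds (show y < deriv C ε by rw [heq]; exact htb)] with z hz
    rw [mem_Iio] at hz
    rw [hggy, sub_zero]
    by_cases hbz : deriv C 0 ≤ z
    · have hz0 : z < 0 := lt_trans hz ht0
      obtain ⟨hh0, hh1⟩ := hinv₂ z hbz hz0
      have : h z < ε := by
        have := (hmono.lt_iff_lt (mem_Ici.2 hh0) (mem_Ici.2 (le_of_lt hε))).1 (by rw [hh1]; exact hz)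
        exact this
      rw [gg, if_pos hbz, abs_of_nonneg hh0]
      exact le_of_lt this
    · rw [gg, if_neg hbz, abs_zero]; exact le_of_lt hε
  · -- deriv C 0 < y
    obtain ⟨hu0, hCu⟩ := hinv₂ y (le_of_lt hgt) hy
    set u := h y with hudef
    have hupos : 0 < u := by
      rcases eq_or_lt_of_le hu0 with hq | hq
      · exfalso; rw [← hq] at hCu; rw [← hCu] at hgt; exact lt_irrefl _ hgt
      · exact hq
    set e := min ε u with hedef
    have he : 0 < e := lt_min hε hupos
    have heu : e ≤ u := min_le_right _ _
    have heε : e ≤ ε := min_le_left _ _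
    have ha0 : 0 < u - e / 2 := by linarith
    have hl : deriv C (u - e / 2) < y := by
      rw [← hCu]; exact hmono (mem_Ici.2 (le_of_lt ha0)) (mem_Ici.2 hu0) (by linarith)
    have hr : y < deriv C (u + ε) := by
      rw [← hCu]; exact hmono (mem_Ici.2 hu0) (mem_Ici.2 (by linarith)) (by linarith)
    filter_upwards [Ioo_mem_nhds hl hr] with z hz
    rw [mem_Ioo] at hz
    have hbz : deriv C 0 < z := by
      refine lt_trans ?_ hz.1
      exact hmono (mem_Ici.2 le_rfl) (mem_Ici.2 (le_of_lt ha0)) ha0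
    have hz0 : z < 0 := lt_trans hz.2 (derivC_neg hC2 hCanti hC'' (by linarith))
    obtain ⟨hhz0, hhz1⟩ := hinv₂ z (le_of_lt hbz) hz0
    have h1 : h z < u + ε := by
      refine (hmono.lt_iff_lt (mem_Ici.2 hhz0) (mem_Ici.2 (by linarith))).1 ?_
      rw [hhz1]; exact hz.2
    have h2 : u - e / 2 < h z := by
      refine (hmono.lt_iff_lt (mem_Ici.2 (le_of_lt ha0)) (mem_Ici.2 hhz0)).1 ?_
      rw [hhz1]; exact hz.1
    have hggz : gg C h z = h z := by rw [gg, if_pos (le_of_lt hbz)]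
    have hggy : gg C h y = u := by rw [gg, if_pos (le_of_lt hgt)]
    rw [hggz, hggy, abs_le]
    constructor <;> linarith

lemma LF_hasDerivAt (hC2 : ContDiff ℝ 2 C) (hCanti : AntitoneOn C (Set.Ici 0))
    (hC'' : ∀ u ≥ (0 : ℝ), 0 < deriv (deriv C) u)
    (hinv₁ : ∀ u ≥ (0 : ℝ), h (deriv C u) = u)
    (hinv₂ : ∀ y : ℝ, deriv C 0 ≤ y → y < 0 → 0 ≤ h y ∧ deriv C (h y) = y)
    {y : ℝ} (hy : y < 0) : HasDerivAt (LF C) (gg C h y) y := by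
  rw [hasDerivAt_iff_isLittleO]
  rw [Asymptotics.isLittleO_iff]
  intro c hc
  filter_upwards [gg_cont hC2 hCanti hC'' hinv₁ hinv₂ hy hc, Iio_mem_nhds hy] with z hgz hz0
  rw [mem_Iio] at hz0
  have hA1 : gg C h y * (z - y) ≤ LF C z - LF C y := LF_subgrad hC2 hC'' hinv₂ hy hz0
  have hA2 : gg C h z * (y - z) ≤ LF C y - LF C z := LF_subgrad hC2 hC'' hinv₂ hz0 hy
  have hA : 0 ≤ LF C z - LF C y - gg C h y * (z - y) := by linarith
  have hB : LF C z - LF C y - gg C h y * (z - y) ≤ (gg C h z - gg C h y) * (z - y) := by nlinarith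
  have hC3 : (gg C h z - gg C h y) * (z - y) ≤ |gg C h z - gg C h y| * |z - y| := by
    calc (gg C h z - gg C h y) * (z - y) ≤ |(gg C h z - gg C h y) * (z - y)| := le_abs_self _
      _ = |gg C h z - gg C h y| * |z - y| := abs_mul _ _
  simp only [Real.norm_eq_abs, smul_eq_mul]
  rw [abs_of_nonneg (by linarith : (0:ℝ) ≤ LF C z - LF C y - (z - y) * gg C h y)]
  calc LF C z - LF C y - (z - y) * gg C h y ≤ |gg C h z - gg C h y| * |z - y| := by nlinarith
    _ ≤ c * |z - y| := by
        apply mul_le_mul_of_nonneg_right hgz (abs_nonneg _)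

end ggcont

/-- The linear extension `F̃` of the Legendre transform: `F̃(y) = F(y)` for `y ≤ -δ`, and
`F̃(y) = h(-δ)·(y+δ) + F(-δ)` for `y > -δ`, where `h = (C')⁻¹` (so `h(-δ) = F'(-δ)`). -/
noncomputable def Ftilde (C h : ℝ → ℝ) (δ : ℝ) (y : ℝ) : ℝ :=
  if y ≤ -δ then LF C y else h (-δ) * (y + δ) + LF C (-δ)

noncomputable def GG (C h : ℝ → ℝ) (δ : ℝ) (y : ℝ) : ℝ := gg C h (min y (-δ))

section ftilde

variable {C h : ℝ → ℝ} {δ : ℝ}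

lemma Ftilde_hasDerivAt (hC2 : ContDiff ℝ 2 C) (hCanti : AntitoneOn C (Set.Ici 0))
    (hC'' : ∀ u ≥ (0 : ℝ), 0 < deriv (deriv C) u)
    (hinv₁ : ∀ u ≥ (0 : ℝ), h (deriv C u) = u)
    (hinv₂ : ∀ y : ℝ, deriv C 0 ≤ y → y < 0 → 0 ≤ h y ∧ deriv C (h y) = y)
    (hδ0 : 0 < δ) (hδb : deriv C 0 < -δ) (y : ℝ) :
    HasDerivAt (Ftilde C h δ) (GG C h δ y) y := by
  have hδneg : -δ < 0 := by linarith
  have hggδ : gg C h (-δ) = h (-δ) := by rw [gg, if_pos (le_of_lt hδb)]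
  have hlin : ∀ t : ℝ, HasDerivAt (fun z => h (-δ) * (z + δ) + LF C (-δ)) (h (-δ)) t := by
    intro t
    have : HasDerivAt (fun z : ℝ => z + δ) 1 t := (hasDerivAt_id t).add_const δ
    simpa using ((this.const_mul (h (-δ))).add_const (LF C (-δ)))
  rcases lt_trichotomy y (-δ) with hlt | heq | hgt
  · have hD : HasDerivAt (LF C) (gg C h y) y :=
      LF_hasDerivAt hC2 hCanti hC'' hinv₁ hinv₂ (lt_trans hlt hδneg)
    have hGG : GG C h δ y = gg C h y := by rw [GG, min_eq_left (le_of_lt hlt)]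
    rw [hGG]
    refine hD.congr_of_eventuallyEq ?_
    filter_upwards [Iio_mem_nhds hlt] with z hz
    rw [mem_Iio] at hz
    rw [Ftilde, if_pos (le_of_lt hz)]
  · subst heq
    have hGG : GG C h δ (-δ) = h (-δ) := by rw [GG, min_self, hggδ]
    rw [hGG]
    have hD : HasDerivAt (LF C) (h (-δ)) (-δ) := by
      rw [← hggδ]; exact LF_hasDerivAt hC2 hCanti hC'' hinv₁ hinv₂ hδneg
    have hleft : HasDerivWithinAt (Ftilde C h δ) (h (-δ)) (Iic (-δ)) (-δ) := by
      refine (hD.hasDerivWithinAt).congr ?_ ?_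
      · intro z hz
        rw [mem_Iic] at hz
        rw [Ftilde, if_pos hz]
      · rw [Ftilde, if_pos le_rfl]
    have hright : HasDerivWithinAt (Ftilde C h δ) (h (-δ)) (Ici (-δ)) (-δ) := by
      refine ((hlin (-δ)).hasDerivWithinAt).congr ?_ ?_
      · intro z hz
        rw [mem_Ici] at hz
        rcases eq_or_lt_of_le hz with hq | hq
        · rw [← hq, Ftilde, if_pos le_rfl]; ring
        · rw [Ftilde, if_neg (not_le.2 hq)]
      · rw [Ftilde, if_pos le_rfl]; ring
    have := hleft.union hright
    rw [Iic_union_Ici] at this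
    rw [← hasDerivWithinAt_univ]
    exact this
  · have hGG : GG C h δ y = h (-δ) := by rw [GG, min_eq_right (le_of_lt hgt), hggδ]
    rw [hGG]
    refine (hlin y).congr_of_eventuallyEq ?_
    filter_upwards [Ioi_mem_nhds hgt] with z hz
    rw [mem_Ioi] at hz
    rw [Ftilde, if_neg (not_le.2 hz)]

lemma GG_nonneg (hinv₂ : ∀ y : ℝ, deriv C 0 ≤ y → y < 0 → 0 ≤ h y ∧ deriv C (h y) = y)
    (hδ0 : 0 < δ) (y : ℝ) : 0 ≤ GG C h δ y := by
  rw [GG]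
  exact gg_nonneg hinv₂ (lt_of_le_of_lt (min_le_right _ _) (by linarith))

lemma Ftilde_mono (hC2 : ContDiff ℝ 2 C) (hCanti : AntitoneOn C (Set.Ici 0))
    (hC'' : ∀ u ≥ (0 : ℝ), 0 < deriv (deriv C) u)
    (hinv₁ : ∀ u ≥ (0 : ℝ), h (deriv C u) = u)
    (hinv₂ : ∀ y : ℝ, deriv C 0 ≤ y → y < 0 → 0 ≤ h y ∧ deriv C (h y) = y)
    (hδ0 : 0 < δ) (hδb : deriv C 0 < -δ) : Monotone (Ftilde C h δ) := by
  refine monotone_of_deriv_nonneg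
    (fun y => (Ftilde_hasDerivAt hC2 hCanti hC'' hinv₁ hinv₂ hδ0 hδb y).differentiableAt) ?_
  intro y
  rw [(Ftilde_hasDerivAt hC2 hCanti hC'' hinv₁ hinv₂ hδ0 hδb y).deriv]
  exact GG_nonneg hinv₂ hδ0 y

end ftilde

/-- `W` solves the `F̃`-ODE
`(σ²/2)W'' − F̃'(W)W' − θxW' − (θ+α)W = 0` on `[0,∞)` with `W(0) = -p`, `W'(0) = r`. -/
def SolvesFtildeODE (C h : ℝ → ℝ) (δ σ θ α p r : ℝ) (W : ℝ → ℝ) : Prop :=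
  ContDiff ℝ 2 W ∧ W 0 = -p ∧ deriv W 0 = r ∧
  ∀ x ≥ (0 : ℝ),
    σ ^ 2 / 2 * deriv (deriv W) x - deriv (Ftilde C h δ) (W x) * deriv W x
      - θ * x * deriv W x - (θ + α) * W x = 0

section energy

variable {C h : ℝ → ℝ} {δ σ θ α p r : ℝ} {W : ℝ → ℝ}

lemma energy (hC2 : ContDiff ℝ 2 C) (hCanti : AntitoneOn C (Set.Ici 0))
    (hC'' : ∀ u ≥ (0 : ℝ), 0 < deriv (deriv C) u)
    (hinv₁ : ∀ u ≥ (0 : ℝ), h (deriv C u) = u)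
    (hinv₂ : ∀ y : ℝ, deriv C 0 ≤ y → y < 0 → 0 ≤ h y ∧ deriv C (h y) = y)
    (hδ0 : 0 < δ) (hδb : deriv C 0 < -δ)
    (hW : SolvesFtildeODE C h δ σ θ α p r W) :
    ∀ x ≥ (0 : ℝ),
      σ ^ 2 / 2 * deriv W x - Ftilde C h δ (W x) - θ * x * W x
        - α * ∫ s in (0:ℝ)..x, W s = σ ^ 2 / 2 * r - Ftilde C h δ (-p) := by
  obtain ⟨hWreg, hW0, hW'0, hODE⟩ := hW
  have hWc : Continuous W := hWreg.continuous
  have hW2 : ContDiff ℝ (1 + 1 : WithTop ℕ∞) W := by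
    rw [one_add_one_eq_two]; exact hWreg
  have hWd : Differentiable ℝ W := hWreg.differentiable two_ne_zero
  have hW'd : Differentiable ℝ (deriv W) := by
    have := (contDiff_succ_iff_deriv.mp hW2).2.2
    exact this.differentiable one_ne_zero
  set E : ℝ → ℝ := fun x =>
    σ ^ 2 / 2 * deriv W x - Ftilde C h δ (W x) - θ * x * W x - α * ∫ s in (0:ℝ)..x, W s
    with hEdef
  have hE : ∀ t : ℝ, t ≥ 0 → HasDerivAt E 0 t := by
    intro t ht
    have hdW : HasDerivAt W (deriv W t) t := (hWd t).hasDerivAt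
    have hddW : HasDerivAt (deriv W) (deriv (deriv W) t) t := (hW'd t).hasDerivAt
    have hFt := Ftilde_hasDerivAt hC2 hCanti hC'' hinv₁ hinv₂ hδ0 hδb (W t)
    have hF : HasDerivAt (fun x => Ftilde C h δ (W x)) (GG C h δ (W t) * deriv W t) t := by
      simpa [Function.comp_def] using hFt.comp t hdW
    have hθt : HasDerivAt (fun x => θ * x * W x) (θ * 1 * W t + θ * t * deriv W t) t :=
      ((hasDerivAt_id t).const_mul θ).mul hdW
    have hI : HasDerivAt (fun x => ∫ s in (0:ℝ)..x, W s) (W t) t :=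
      intervalIntegral.integral_hasDerivAt_right (hWc.intervalIntegrable 0 t)
        (hWc.stronglyMeasurableAtFilter _ _) hWc.continuousAt
    have combine := (((hddW.const_mul (σ ^ 2 / 2)).sub hF).sub hθt).sub (hI.const_mul α)
    have h0 : σ ^ 2 / 2 * deriv (deriv W) t - GG C h δ (W t) * deriv W t
        - (θ * 1 * W t + θ * t * deriv W t) - α * W t = 0 := by
      have hode := hODE t ht
      rw [hFt.deriv] at hode
      linarith
    rw [h0] at combine
    exact combine
  intro x hx
  have hconst := constant_of_has_deriv_right_zero
    (f := E) (a := 0) (b := x)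
    (fun t ht => ((hE t ht.1).continuousAt).continuousWithinAt)
    (fun t ht => (hE t ht.1).hasDerivWithinAt)
  have hEx : E x = E 0 := hconst x ⟨hx, le_rfl⟩
  have hE0 : E 0 = σ ^ 2 / 2 * r - Ftilde C h δ (-p) := by
    simp only [hEdef, hW0, hW'0, intervalIntegral.integral_same]
    ring
  show E x = σ ^ 2 / 2 * r - Ftilde C h δ (-p)
  rw [hEx, hE0]

end energy

/-- Comparison lemma: if `0 < r₂ < r₁` and `Wᵢ` solve the `F̃`-ODE with initial slopes `rᵢ`, then
on `[0, c₁ ∧ c₂)` (where `cᵢ` is the first zero of `Wᵢ`, encoded here by the hypothesis that both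
solutions are negative on `[0, x]`) one has `W₂'(x) < W₁'(x)`, `W₂(x) ≤ W₁(x)` with equality only at
`x = 0`, and `Y₂(x) < Y₁(x)` where `Yᵢ(x) = ∫₀ˣ Wᵢ + (1/α)((σ²/2)rᵢ − F̃(−p))`. -/
theorem statement2
    (C h : ℝ → ℝ) (σ θ α p δ : ℝ)
    (hσ : 0 < σ) (hθ : 0 < θ) (hα : 0 < α) (hp : 0 < p)
    (hC2 : ContDiff ℝ 2 C)
    (hCanti : AntitoneOn C (Set.Ici 0))
    (hCconv : ConvexOn ℝ (Set.Ici 0) C)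
    (hC0 : 0 < C 0)
    (hClim : Tendsto C atTop (nhds 0))
    (hC'' : ∀ u ≥ (0 : ℝ), 0 < deriv (deriv C) u)
    (hC'0 : deriv C 0 < 0)
    (hinv₁ : ∀ u ≥ (0 : ℝ), h (deriv C u) = u)
    (hinv₂ : ∀ y : ℝ, deriv C 0 ≤ y → y < 0 → 0 ≤ h y ∧ deriv C (h y) = y)
    (hδ0 : 0 < δ) (hδ : δ < min p (-deriv C 0))
    (r₁ r₂ : ℝ) (hr₂ : 0 < r₂) (hr₁₂ : r₂ < r₁)
    (W₁ W₂ : ℝ → ℝ)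
    (hW₁ : SolvesFtildeODE C h δ σ θ α p r₁ W₁)
    (hW₂ : SolvesFtildeODE C h δ σ θ α p r₂ W₂) :
    ∀ x ≥ (0 : ℝ),
      (∀ y ∈ Set.Icc (0 : ℝ) x, W₁ y < 0 ∧ W₂ y < 0) →
      deriv W₂ x < deriv W₁ x ∧
      W₂ x ≤ W₁ x ∧ (W₂ x = W₁ x → x = 0) ∧
      (∫ s in (0 : ℝ)..x, W₂ s) + 1 / α * (σ ^ 2 / 2 * r₂ - Ftilde C h δ (-p))
        < (∫ s in (0 : ℝ)..x, W₁ s) + 1 / α * (σ ^ 2 / 2 * r₁ - Ftilde C h δ (-p)) := by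
  have hδb : deriv C 0 < -δ := by
    have := lt_min_iff.mp hδ
    linarith [this.2]
  have hσ2 : (0:ℝ) < σ ^ 2 / 2 := by positivity
  have e1 := energy hC2 hCanti hC'' hinv₁ hinv₂ hδ0 hδb hW₁
  have e2 := energy hC2 hCanti hC'' hinv₁ hinv₂ hδ0 hδb hW₂
  have hW₁c : Continuous W₁ := hW₁.1.continuous
  have hW₂c : Continuous W₂ := hW₂.1.continuous
  have hW₁d : Differentiable ℝ W₁ := hW₁.1.differentiable two_ne_zero
  have hW₂d : Differentiable ℝ W₂ := hW₂.1.differentiable two_ne_zero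
  have hW₁'c : Continuous (deriv W₁) := hW₁.1.continuous_deriv one_le_two
  have hW₂'c : Continuous (deriv W₂) := hW₂.1.continuous_deriv one_le_two
  have hFmono := Ftilde_mono hC2 hCanti hC'' hinv₁ hinv₂ hδ0 hδb
  -- the key positivity of the derivative difference
  have hderivD : ∀ y : ℝ, deriv (fun s => W₁ s - W₂ s) y = deriv W₁ y - deriv W₂ y :=
    fun y => deriv_sub (hW₁d y) (hW₂d y)
  have hpos : ∀ t ≥ (0:ℝ), 0 < deriv W₁ t - deriv W₂ t := by
    by_contra hcon
    push_neg at hcon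
    obtain ⟨t₀, ht₀0, ht₀⟩ := hcon
    set S : Set ℝ := {t | 0 ≤ t} ∩ {t | deriv W₁ t - deriv W₂ t ≤ 0} with hSdef
    have hSne : S.Nonempty := ⟨t₀, ht₀0, ht₀⟩
    have hSbdd : BddBelow S := ⟨0, fun t ht => ht.1⟩
    have hSclosed : IsClosed S :=
      (isClosed_le continuous_const continuous_id).inter
        (isClosed_le (hW₁'c.sub hW₂'c) continuous_const)
    set x₀ := sInf S with hx₀def
    have hx₀S : x₀ ∈ S := hSclosed.csInf_mem hSne hSbdd
    have hx₀0 : 0 ≤ x₀ := hx₀S.1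
    have hx₀le : deriv W₁ x₀ - deriv W₂ x₀ ≤ 0 := hx₀S.2
    have hx₀pos : 0 < x₀ := by
      rcases eq_or_lt_of_le hx₀0 with hq | hq
      · exfalso
        rw [← hq] at hx₀le
        rw [hW₁.2.2.1, hW₂.2.2.1] at hx₀le
        linarith
      · exact hq
    have hbelow : ∀ y, 0 ≤ y → y < x₀ → 0 < deriv W₁ y - deriv W₂ y := by
      intro y hy0 hyx
      by_contra hyc
      push_neg at hyc
      have : x₀ ≤ y := csInf_le hSbdd ⟨hy0, hyc⟩
      linarith
    have hDmono : MonotoneOn (fun s => W₁ s - W₂ s) (Icc 0 x₀) := by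
      refine monotoneOn_of_deriv_nonneg (convex_Icc 0 x₀)
        ((hW₁c.sub hW₂c).continuousOn) ((hW₁d.sub hW₂d).differentiableOn) ?_
      intro y hy
      rw [interior_Icc] at hy
      rw [hderivD y]
      exact le_of_lt (hbelow y (le_of_lt hy.1) hy.2)
    have hD0 : W₁ 0 - W₂ 0 = 0 := by rw [hW₁.2.1, hW₂.2.1]; ring
    have hDnn : ∀ y ∈ Icc (0:ℝ) x₀, 0 ≤ W₁ y - W₂ y := by
      intro y hy
      have := hDmono (left_mem_Icc.2 hx₀0) hy hy.1
      simpa [hD0] using this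
    have hint : 0 ≤ ∫ s in (0:ℝ)..x₀, (W₁ s - W₂ s) :=
      intervalIntegral.integral_nonneg hx₀0 hDnn
    have hsub : (∫ s in (0:ℝ)..x₀, W₁ s) - ∫ s in (0:ℝ)..x₀, W₂ s
        = ∫ s in (0:ℝ)..x₀, (W₁ s - W₂ s) :=
      (intervalIntegral.integral_sub (hW₁c.intervalIntegrable 0 x₀)
        (hW₂c.intervalIntegrable 0 x₀)).symm
    have hFle : Ftilde C h δ (W₂ x₀) ≤ Ftilde C h δ (W₁ x₀) := by
      apply hFmono
      have := hDnn x₀ (right_mem_Icc.2 hx₀0)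
      linarith
    have hθx : 0 ≤ θ * x₀ * (W₁ x₀ - W₂ x₀) := by
      apply mul_nonneg (mul_nonneg (le_of_lt hθ) hx₀0) (hDnn x₀ (right_mem_Icc.2 hx₀0))
    have he1 := e1 x₀ hx₀0
    have he2 := e2 x₀ hx₀0
    nlinarith [he1, he2, hsub, hint, hFle, hθx, hσ2, hr₁₂,
      mul_le_mul_of_nonneg_left hx₀le (le_of_lt hσ2)]
  -- conclusions
  intro x hx _
  have hDmonoX : MonotoneOn (fun s => W₁ s - W₂ s) (Icc 0 x) := by
    refine monotoneOn_of_deriv_nonneg (convex_Icc 0 x)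
      ((hW₁c.sub hW₂c).continuousOn) ((hW₁d.sub hW₂d).differentiableOn) ?_
    intro y hy
    rw [interior_Icc] at hy
    rw [hderivD y]
    exact le_of_lt (hpos y (le_of_lt hy.1))
  have hD0 : W₁ 0 - W₂ 0 = 0 := by rw [hW₁.2.1, hW₂.2.1]; ring
  have hDnn : ∀ y ∈ Icc (0:ℝ) x, 0 ≤ W₁ y - W₂ y := by
    intro y hy
    have := hDmonoX (left_mem_Icc.2 hx) hy hy.1
    simpa [hD0] using this
  refine ⟨by linarith [hpos x hx], by linarith [hDnn x (right_mem_Icc.2 hx)], ?_, ?_⟩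
  · intro heq
    by_contra hxne
    have hx0 : 0 < x := lt_of_le_of_ne hx (Ne.symm hxne)
    have hstrict : StrictMonoOn (fun s => W₁ s - W₂ s) (Icc 0 x) := by
      refine strictMonoOn_of_deriv_pos (convex_Icc 0 x)
        ((hW₁c.sub hW₂c).continuousOn) ?_
      intro y hy
      rw [interior_Icc] at hy
      rw [hderivD y]
      exact hpos y (le_of_lt hy.1)
    have h2 : W₁ 0 - W₂ 0 < W₁ x - W₂ x :=
      hstrict (left_mem_Icc.2 hx) (right_mem_Icc.2 hx) hx0
    rw [hD0, heq] at h2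
    simp at h2
  · have hint : 0 ≤ ∫ s in (0:ℝ)..x, (W₁ s - W₂ s) :=
      intervalIntegral.integral_nonneg hx hDnn
    have hsub : (∫ s in (0:ℝ)..x, W₁ s) - ∫ s in (0:ℝ)..x, W₂ s
        = ∫ s in (0:ℝ)..x, (W₁ s - W₂ s) :=
      (intervalIntegral.integral_sub (hW₁c.intervalIntegrable 0 x)
        (hW₂c.intervalIntegrable 0 x)).symm
    have hr : 1 / α * (σ ^ 2 / 2 * r₂ - Ftilde C h δ (-p))
        < 1 / α * (σ ^ 2 / 2 * r₁ - Ftilde C h δ (-p)) := by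
      apply mul_lt_mul_of_pos_left _ (by positivity : (0:ℝ) < 1 / α)
      nlinarith
    linarith
end

section
/- Let 0 < c < ∞ and suppose W : [0, c) → ℝ solves the integral equation with parameter r (for some r ≥ 0) and satisfies W(x) < 0 for all x ∈ [0, c). If W(x) → 0 as x → c⁻, then the limit lim_{x → c⁻} W'(x) exists and is strictly positive. In other words, a strictly negative solution of the integral equation cannot reach the level 0 tangentially. -/
open Set Filter

lemma lf_nonpos (C : ℝ → ℝ) (hC : ∀ u ≥ (0:ℝ), 0 ≤ C u) {y : ℝ} (hy : y ≤ 0) :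
    LF C y ≤ 0 := by
  apply Real.sSup_le _ le_rfl
  rintro z ⟨u, hu, rfl⟩
  have h1 : u * y ≤ 0 := mul_nonpos_of_nonneg_of_nonpos hu hy
  have h2 := hC u hu
  simp only
  linarith

lemma le_lf (C : ℝ → ℝ) (hC : ∀ u ≥ (0:ℝ), 0 ≤ C u) {y : ℝ} (hy : y ≤ 0)
    {u : ℝ} (hu : 0 ≤ u) : u * y - C u ≤ LF C y := by
  apply le_csSup
  · refine ⟨0, ?_⟩
    rintro z ⟨v, hv, rfl⟩
    have h1 : v * y ≤ 0 := mul_nonpos_of_nonneg_of_nonpos hv hy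
    have h2 := hC v hv
    simp only
    linarith
  · exact ⟨u, hu, rfl⟩

set_option maxHeartbeats 1000000 in
/-- A strictly negative continuously differentiable solution `W` (with derivative `W'`) on
`[0, c)` of the integral equation `(σ²/2)W'(x) = F(W(x)) + θxW(x) + α∫₀ˣW + αK_r`, with
`W(x) → 0` as `x → c⁻`, cannot reach the level `0` tangentially: the limit of `W'` at `c⁻`
exists and is strictly positive. -/
theorem statement3
    (C : ℝ → ℝ) (σ θ α p : ℝ)
    (hσ : 0 < σ) (hθ : 0 < θ) (hα : 0 < α) (hp : 0 < p)
    (hC2 : ContDiff ℝ 2 C)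
    (hCanti : AntitoneOn C (Set.Ici 0))
    (hCconv : ConvexOn ℝ (Set.Ici 0) C)
    (hC0 : 0 < C 0)
    (hClim : Tendsto C atTop (nhds 0))
    (hC'' : ∀ u ≥ (0 : ℝ), 0 < deriv (deriv C) u)
    (hC'0 : deriv C 0 < 0)
    (c r : ℝ) (hc : 0 < c) (hr : 0 ≤ r)
    (W W' : ℝ → ℝ)
    (hW0 : W 0 = -p)
    (hderiv : ∀ x ∈ Set.Ico (0 : ℝ) c, HasDerivAt W (W' x) x)
    (hW'cont : ContinuousOn W' (Set.Ico 0 c))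
    (hIE : ∀ x ∈ Set.Ico (0 : ℝ) c,
      σ ^ 2 / 2 * W' x
        = LF C (W x) + θ * x * W x + α * ∫ s in (0 : ℝ)..x, W s
          + α * (1 / α * (σ ^ 2 / 2 * r - LF C (-p))))
    (hneg : ∀ x ∈ Set.Ico (0 : ℝ) c, W x < 0)
    (hlim : Tendsto W (nhdsWithin c (Set.Iio c)) (nhds 0)) :
    ∃ L : ℝ, 0 < L ∧ Tendsto W' (nhdsWithin c (Set.Iio c)) (nhds L) := by
  have hσ2 : (0:ℝ) < σ ^ 2 := by positivity
  -- C is nonnegative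
  have hCpos : ∀ u ≥ (0:ℝ), 0 ≤ C u := by
    intro u hu
    refine le_of_tendsto hClim ?_
    filter_upwards [eventually_ge_atTop u] with v hv
    exact hCanti hu (le_trans hu hv) hv
  -- continuity of W on [0,c)
  have hWcont : ContinuousOn W (Set.Ico 0 c) := fun x hx =>
    (hderiv x hx).continuousAt.continuousWithinAt
  -- the truncated function
  obtain ⟨We, hWe_def⟩ : ∃ f : ℝ → ℝ, f = (Set.Ico 0 c).indicator W := ⟨_, rfl⟩
  have hWe_meas : MeasureTheory.AEStronglyMeasurable We MeasureTheory.volume := by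
    rw [hWe_def]
    exact (aestronglyMeasurable_indicator_iff measurableSet_Ico).2
      (hWcont.aestronglyMeasurable measurableSet_Ico)
  -- a global bound on We
  obtain ⟨M, hM⟩ : ∃ M : ℝ, ∀ x, |We x| ≤ M := by
    have h1 : ∀ᶠ x in nhdsWithin c (Set.Iio c), |W x| < 1 := by
      have := Metric.tendsto_nhds.mp hlim 1 one_pos
      filter_upwards [this] with x hx
      rw [Real.dist_eq, sub_zero] at hx
      exact hx
    rw [eventually_iff, mem_nhdsLT_iff_exists_Ioo_subset] at h1
    obtain ⟨l, hl, hsub⟩ := h1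
    set b : ℝ := max l 0 with hb_def
    have hbc : b < c := max_lt hl hc
    have hcomp : IsCompact (Set.Icc (0:ℝ) b) := isCompact_Icc
    obtain ⟨M1, hM1⟩ := hcomp.exists_bound_of_continuousOn
      (hWcont.mono (fun x (hx : x ∈ Set.Icc (0:ℝ) b) =>
        Set.mem_Ico.mpr ⟨hx.1, lt_of_le_of_lt hx.2 hbc⟩))
    refine ⟨max M1 1, fun x => ?_⟩
    by_cases hx : x ∈ Set.Ico (0:ℝ) c
    · rw [hWe_def, Set.indicator_of_mem hx]
      rcases le_or_gt x b with h | h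
      · exact le_trans (hM1 x (Set.mem_Icc.mpr ⟨hx.1, h⟩)) (le_max_left _ _)
      · have : x ∈ Set.Ioo l c :=
          Set.mem_Ioo.mpr ⟨lt_of_le_of_lt (le_max_left l 0) h, hx.2⟩
        exact le_trans (le_of_lt (hsub this)) (le_max_right _ _)
    · rw [hWe_def, Set.indicator_of_notMem hx]
      simp only [abs_zero]
      exact le_trans zero_le_one (le_max_right _ _)
  -- interval integrability of We
  have hWe_int : ∀ a b : ℝ, IntervalIntegrable We MeasureTheory.volume a b := by
    intro a b
    rw [intervalIntegrable_iff]
    refine MeasureTheory.Integrable.mono' (g := fun _ => M)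
      (MeasureTheory.integrableOn_const measure_Ioc_lt_top.ne) hWe_meas.restrict ?_
    exact MeasureTheory.ae_of_all _ fun x => hM x
  -- the constant E = α * K_r (nonnegative)
  set E : ℝ := α * (1 / α * (σ ^ 2 / 2 * r - LF C (-p))) with hE_def
  have hE_eq : E = σ ^ 2 / 2 * r - LF C (-p) := by
    rw [hE_def, ← mul_assoc, mul_one_div, div_self hα.ne', one_mul]
  have hE_nonneg : 0 ≤ E := by
    have h1 : LF C (-p) ≤ 0 := lf_nonpos C hCpos (by linarith)
    have h2 : 0 ≤ σ ^ 2 / 2 * r := mul_nonneg (by positivity) hr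
    rw [hE_eq]; linarith
  -- the truncated shifted function and its primitive
  obtain ⟨We2, hWe2_def⟩ : ∃ f : ℝ → ℝ, f = fun s => We s + E := ⟨_, rfl⟩
  have hWe2_eval : ∀ s ∈ Set.Ico (0:ℝ) c, We2 s = W s + E := by
    intro s hs
    rw [hWe2_def]
    show We s + E = W s + E
    rw [hWe_def, Set.indicator_of_mem hs]
  have hWe2_int : ∀ a b : ℝ, IntervalIntegrable We2 MeasureTheory.volume a b := by
    intro a b
    rw [hWe2_def]
    exact (hWe_int a b).add intervalIntegrable_const
  obtain ⟨G2, hG2_def⟩ : ∃ f : ℝ → ℝ, f = fun x => ∫ s in (0:ℝ)..x, We2 s := ⟨_, rfl⟩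
  have hG2cont : Continuous G2 := by
    rw [hG2_def]
    exact intervalIntegral.continuous_primitive hWe2_int 0
  -- G2 agrees with the primitive of W + E on [0,c)
  have hG2eq : ∀ x ∈ Set.Ico (0:ℝ) c, G2 x = ∫ s in (0:ℝ)..x, (W s + E) := by
    intro x hx
    rw [hG2_def]
    apply intervalIntegral.integral_congr
    intro s hs
    rw [Set.uIcc_of_le hx.1] at hs
    exact hWe2_eval s ⟨hs.1, lt_of_le_of_lt hs.2 hx.2⟩
  -- derivative of G2
  have hG2deriv : ∀ x ∈ Set.Ioo (0:ℝ) c, HasDerivAt G2 (W x + E) x := by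
    intro x hx
    have hcontAt : ContinuousAt We2 x := by
      have hmem : Set.Ioo (0:ℝ) c ∈ nhds x := Ioo_mem_nhds hx.1 hx.2
      have hWc : ContinuousAt (fun s => W s + E) x :=
        (hderiv x ⟨hx.1.le, hx.2⟩).continuousAt.add continuousAt_const
      refine ContinuousAt.congr hWc ?_
      filter_upwards [hmem] with s hs
      exact (hWe2_eval s ⟨hs.1.le, hs.2⟩).symm
    have hWe2_meas : MeasureTheory.AEStronglyMeasurable We2 MeasureTheory.volume := by
      rw [hWe2_def]
      exact hWe_meas.add MeasureTheory.aestronglyMeasurable_const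
    have h1 := intervalIntegral.integral_hasDerivAt_right (hWe2_int 0 x)
      hWe2_meas.stronglyMeasurableAtFilter hcontAt
    rw [hWe2_eval x ⟨hx.1.le, hx.2⟩] at h1
    rw [hG2_def]
    exact h1
  -- adjacent-interval decomposition
  have hadd : ∀ x : ℝ, G2 x + ∫ s in x..c, We2 s = G2 c := by
    intro x
    rw [hG2_def]
    exact intervalIntegral.integral_add_adjacent_intervals (hWe2_int 0 x) (hWe2_int x c)
  set A : ℝ := α * G2 c with hA_def
  have hIE' : ∀ x ∈ Set.Ico (0:ℝ) c,
      σ ^ 2 / 2 * W' x = LF C (W x) + θ * x * W x + α * (G2 x - G2 c) + A := by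
    intro x hx
    have h1 := hIE x hx
    have h2 := hG2eq x hx
    rw [h1, ← h2, hA_def]; ring
  -- eventually in the filter, x ∈ Ioo 0 c
  have hIoo_mem : Set.Ioo (0:ℝ) c ∈ nhdsWithin c (Set.Iio c) :=
    Ioo_mem_nhdsLT hc
  -- limit of LF C (W x)
  have hF0 : Tendsto (fun x => LF C (W x)) (nhdsWithin c (Set.Iio c)) (nhds 0) := by
    rw [Metric.tendsto_nhds]
    intro ε hε
    obtain ⟨u0, hu0⟩ := (hClim.eventually (gt_mem_nhds (half_pos hε))).exists_forall_of_atTop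
    set u : ℝ := max u0 0 with hu_def
    have hu_nonneg : (0:ℝ) ≤ u := le_max_right _ _
    have hCu : C u < ε / 2 := hu0 u (le_max_left _ _)
    have h2 : ∀ᶠ x in nhdsWithin c (Set.Iio c), |u * W x| < ε / 2 := by
      have h3 : Tendsto (fun x => u * W x) (nhdsWithin c (Set.Iio c)) (nhds 0) := by
        simpa using hlim.const_mul u
      have := Metric.tendsto_nhds.mp h3 (ε / 2) (half_pos hε)
      filter_upwards [this] with x hx
      rw [Real.dist_eq, sub_zero] at hx
      exact hx
    filter_upwards [h2, hIoo_mem] with x hx hx'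
    have hWx : W x < 0 := hneg x ⟨hx'.1.le, hx'.2⟩
    have h3 : LF C (W x) ≤ 0 := lf_nonpos C hCpos hWx.le
    have h4 : u * W x - C u ≤ LF C (W x) := le_lf C hCpos hWx.le hu_nonneg
    have h5 : -(ε/2) < u * W x := neg_lt_of_abs_lt hx
    rw [Real.dist_eq, sub_zero, abs_lt]
    constructor <;> linarith
  -- limit of θ x W x
  have hθlim : Tendsto (fun x => θ * x * W x) (nhdsWithin c (Set.Iio c)) (nhds 0) := by
    have h1 : Tendsto (fun x : ℝ => θ * x) (nhdsWithin c (Set.Iio c)) (nhds (θ * c)) :=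
      ((continuous_const.mul continuous_id).tendsto c).mono_left nhdsWithin_le_nhds
    simpa using h1.mul hlim
  -- limit of α (G2 x - G2 c)
  have hGlim : Tendsto (fun x => α * (G2 x - G2 c)) (nhdsWithin c (Set.Iio c)) (nhds 0) := by
    have h1 : Tendsto G2 (nhdsWithin c (Set.Iio c)) (nhds (G2 c)) :=
      (hG2cont.tendsto c).mono_left nhdsWithin_le_nhds
    simpa using (h1.sub_const (G2 c)).const_mul α
  -- limit of σ²/2 W'
  have hAlim : Tendsto (fun x => σ ^ 2 / 2 * W' x) (nhdsWithin c (Set.Iio c)) (nhds A) := by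
    have hsum : Tendsto (fun x => LF C (W x) + θ * x * W x + α * (G2 x - G2 c) + A)
        (nhdsWithin c (Set.Iio c)) (nhds A) := by
      have := ((hF0.add hθlim).add hGlim).add (tendsto_const_nhds (x := A))
      simpa using this
    refine hsum.congr' ?_
    filter_upwards [hIoo_mem] with x hx
    exact (hIE' x ⟨hx.1.le, hx.2⟩).symm
  have hW'lim : Tendsto W' (nhdsWithin c (Set.Iio c)) (nhds (2 / σ ^ 2 * A)) := by
    have := hAlim.const_mul (2 / σ ^ 2)
    refine this.congr (fun x => ?_)
    field_simp
  refine ⟨2 / σ ^ 2 * A, ?_, hW'lim⟩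
  -- positivity of the limit
  by_contra hL
  push_neg at hL
  have hA0 : A ≤ 0 := by
    by_contra hA0
    push_neg at hA0
    have : 0 < 2 / σ ^ 2 * A := by positivity
    linarith
  -- the auxiliary function g
  obtain ⟨g, hg_def⟩ : ∃ f : ℝ → ℝ, f = fun x => G2 x - G2 c := ⟨_, rfl⟩
  have hgx : ∀ y : ℝ, g y = G2 y - G2 c := fun y => by rw [hg_def]
  have hgcont : Continuous g := by
    rw [hg_def]; exact hG2cont.sub continuous_const
  have hglim : Tendsto g (nhdsWithin c (Set.Iio c)) (nhds 0) := by
    rw [hg_def]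
    have h1 : Tendsto G2 (nhdsWithin c (Set.Iio c)) (nhds (G2 c)) :=
      (hG2cont.tendsto c).mono_left nhdsWithin_le_nhds
    simpa using h1.sub_const (G2 c)
  -- key differential inequality
  have hW'le : ∀ x ∈ Set.Ioo (0:ℝ) c, σ ^ 2 / 2 * W' x ≤ α * g x := by
    intro x hx
    have h1 := hIE' x ⟨hx.1.le, hx.2⟩
    have hWx : W x < 0 := hneg x ⟨hx.1.le, hx.2⟩
    have h2 : LF C (W x) ≤ 0 := lf_nonpos C hCpos hWx.le
    have h3 : θ * x * W x ≤ 0 :=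
      mul_nonpos_of_nonneg_of_nonpos (mul_nonneg hθ.le hx.1.le) hWx.le
    rw [hgx x]
    linarith
  rcases eq_or_lt_of_le hE_nonneg with hE0 | hEpos
  · -- Case E = 0 : Grönwall-type argument
    have hgderiv : ∀ x ∈ Set.Ioo (0:ℝ) c, HasDerivAt g (W x) x := by
      intro x hx
      have h1 := (hG2deriv x hx).sub_const (G2 c)
      rw [hg_def]
      have h2 : W x + E = W x := by rw [← hE0]; ring
      rwa [h2] at h1
    have hgpos : ∀ x ∈ Set.Ico (0:ℝ) c, 0 < g x := by
      intro x hx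
      have hneg' : (∫ s in x..c, We2 s) < 0 := by
        have hpos : 0 < ∫ s in x..c, -We2 s := by
          apply intervalIntegral.intervalIntegral_pos_of_pos_on ((hWe2_int x c).neg)
          · intro s hs
            have hs' : s ∈ Set.Ico (0:ℝ) c := ⟨le_trans hx.1 hs.1.le, hs.2⟩
            show 0 < -We2 s
            rw [hWe2_eval s hs', ← hE0, add_zero]
            simpa using hneg s hs'
          · exact hx.2
        rw [intervalIntegral.integral_neg] at hpos
        linarith
      have h1 := hadd x
      rw [hgx x]
      linarith
    set K' : ℝ := 2 * α / σ ^ 2 with hK'_def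
    have hK'pos : 0 < K' := by positivity
    have hW'le2 : ∀ x ∈ Set.Ioo (0:ℝ) c, W' x ≤ K' * g x := by
      intro x hx
      have h4 := hW'le x hx
      rw [hK'_def, div_mul_eq_mul_div, le_div_iff₀ hσ2]
      nlinarith
    -- monotonicity of φ = W² - K' g²
    obtain ⟨φ, hφ_def⟩ : ∃ f : ℝ → ℝ, f = fun x => (W x) ^ 2 - K' * (g x) ^ 2 := ⟨_, rfl⟩
    have hφx : ∀ y : ℝ, φ y = (W y) ^ 2 - K' * (g y) ^ 2 := fun y => by rw [hφ_def]
    have hφderiv : ∀ x ∈ Set.Ioo (0:ℝ) c,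
        HasDerivAt φ (2 * W x * W' x - K' * (2 * g x * W x)) x := by
      intro x hx
      rw [hφ_def]
      have h1 : HasDerivAt (fun y => (W y) ^ 2) (2 * W x * W' x) x := by
        have := (hderiv x ⟨hx.1.le, hx.2⟩).fun_pow 2
        simpa [mul_comm] using this
      have h2 : HasDerivAt (fun y => K' * (g y) ^ 2) (K' * (2 * g x * W x)) x := by
        have := ((hgderiv x hx).fun_pow 2).const_mul K'
        exact this.congr_deriv (by push_cast; ring)
      exact h1.sub h2
    have hφmono : MonotoneOn φ (Set.Ico 0 c) := by
      apply monotoneOn_of_deriv_nonneg (convex_Ico 0 c)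
      · rw [hφ_def]
        exact (hWcont.pow 2).sub ((continuous_const.mul (hgcont.pow 2)).continuousOn)
      · rw [interior_Ico]
        intro x hx
        exact (hφderiv x hx).differentiableAt.differentiableWithinAt
      · rw [interior_Ico]
        intro x hx
        rw [(hφderiv x hx).deriv]
        have hWx : W x < 0 := hneg x ⟨hx.1.le, hx.2⟩
        have h5 := hW'le2 x hx
        have h6 := hgpos x ⟨hx.1.le, hx.2⟩
        nlinarith
    have hφlim : Tendsto φ (nhdsWithin c (Set.Iio c)) (nhds 0) := by
      rw [hφ_def]
      have := (hlim.pow 2).sub ((hglim.pow 2).const_mul K')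
      simpa using this
    have hφle : ∀ x ∈ Set.Ico (0:ℝ) c, φ x ≤ 0 := by
      intro x hx
      refine ge_of_tendsto hφlim ?_
      filter_upwards [Ioo_mem_nhdsLT hx.2] with y hy
      exact hφmono hx ⟨le_trans hx.1 hy.1.le, hy.2⟩ hy.1.le
    -- hence -W ≤ √K' g
    have hbound : ∀ x ∈ Set.Ico (0:ℝ) c, -W x ≤ Real.sqrt K' * g x := by
      intro x hx
      have h1 : (W x) ^ 2 ≤ K' * (g x) ^ 2 := by
        have h0 := hφle x hx
        rw [hφx x] at h0
        linarith
      have h2 : -W x = Real.sqrt ((W x) ^ 2) := by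
        rw [Real.sqrt_sq_eq_abs, abs_of_nonpos (hneg x hx).le]
      rw [h2]
      calc Real.sqrt ((W x) ^ 2) ≤ Real.sqrt (K' * (g x) ^ 2) := Real.sqrt_le_sqrt h1
        _ = Real.sqrt K' * g x := by
            rw [Real.sqrt_mul hK'pos.le, Real.sqrt_sq (hgpos x hx).le]
    -- the function η = g · exp(√K' x) is monotone
    obtain ⟨η, hη_def⟩ : ∃ f : ℝ → ℝ,
        f = fun x => g x * Real.exp (Real.sqrt K' * x) := ⟨_, rfl⟩
    have hηx : ∀ y : ℝ, η y = g y * Real.exp (Real.sqrt K' * y) := fun y => by rw [hη_def]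
    have hηderiv : ∀ x ∈ Set.Ioo (0:ℝ) c,
        HasDerivAt η (W x * Real.exp (Real.sqrt K' * x)
          + g x * (Real.exp (Real.sqrt K' * x) * Real.sqrt K')) x := by
      intro x hx
      rw [hη_def]
      have hexp : HasDerivAt (fun y => Real.exp (Real.sqrt K' * y))
          (Real.exp (Real.sqrt K' * x) * Real.sqrt K') x := by
        have := ((hasDerivAt_id x).const_mul (Real.sqrt K')).exp
        simpa using this
      exact (hgderiv x hx).mul hexp
    have hηmono : MonotoneOn η (Set.Ico 0 c) := by
      apply monotoneOn_of_deriv_nonneg (convex_Ico 0 c)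
      · rw [hη_def]
        exact (hgcont.mul
          ((Real.continuous_exp).comp (continuous_const.mul continuous_id))).continuousOn
      · rw [interior_Ico]
        intro x hx
        exact (hηderiv x hx).differentiableAt.differentiableWithinAt
      · rw [interior_Ico]
        intro x hx
        rw [(hηderiv x hx).deriv]
        have h1 := hbound x ⟨hx.1.le, hx.2⟩
        have hexp_pos : 0 < Real.exp (Real.sqrt K' * x) := Real.exp_pos _
        nlinarith
    have hηlim : Tendsto η (nhdsWithin c (Set.Iio c)) (nhds 0) := by
      rw [hη_def]
      have hexp : Tendsto (fun x => Real.exp (Real.sqrt K' * x)) (nhdsWithin c (Set.Iio c))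
          (nhds (Real.exp (Real.sqrt K' * c))) :=
        (((Real.continuous_exp).comp (continuous_const.mul continuous_id)).tendsto c).mono_left
          nhdsWithin_le_nhds
      simpa using hglim.mul hexp
    have hη0 : η 0 ≤ 0 := by
      refine ge_of_tendsto hηlim ?_
      filter_upwards [hIoo_mem] with y hy
      exact hηmono ⟨le_rfl, hc⟩ ⟨hy.1.le, hy.2⟩ hy.1.le
    have hη0pos : 0 < η 0 := by
      rw [hηx 0, mul_zero, Real.exp_zero, mul_one]
      exact hgpos 0 ⟨le_rfl, hc⟩
    linarith
  · -- Case E > 0 : W is eventually decreasing, contradicting W < 0 → 0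
    have h1 : ∀ᶠ t in nhdsWithin c (Set.Iio c), |W t| < E / 2 := by
      have := Metric.tendsto_nhds.mp hlim (E / 2) (half_pos hEpos)
      filter_upwards [this] with t ht
      rw [Real.dist_eq, sub_zero] at ht
      exact ht
    rw [eventually_iff, mem_nhdsLT_iff_exists_Ioo_subset] at h1
    obtain ⟨x0, hx0c, hsub⟩ := h1
    set x1 : ℝ := max x0 0 with hx1_def
    have hx1c : x1 < c := max_lt hx0c hc
    have hx1nonneg : (0:ℝ) ≤ x1 := le_max_right _ _
    -- g is negative on (x1, c)
    have hgneg : ∀ x ∈ Set.Ioo x1 c, g x ≤ -(E/2) * (c - x) := by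
      intro x hx
      have hxc : x ≤ c := hx.2.le
      have hmono : (∫ _s in x..c, E / 2) ≤ ∫ s in x..c, We2 s := by
        apply intervalIntegral.integral_mono_on hxc intervalIntegrable_const (hWe2_int x c)
        intro t ht
        by_cases hmem : t ∈ Set.Ico (0:ℝ) c
        · have htW : |W t| < E / 2 := by
            apply hsub
            refine Set.mem_Ioo.mpr ⟨?_, hmem.2⟩
            exact lt_of_le_of_lt (le_max_left x0 0) (lt_of_lt_of_le hx.1 ht.1)
          have h2 : -(E/2) < W t := neg_lt_of_abs_lt htW
          rw [hWe2_eval t hmem]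
          linarith
        · rw [hWe2_def]
          show E / 2 ≤ We t + E
          rw [hWe_def, Set.indicator_of_notMem hmem]
          linarith
      rw [intervalIntegral.integral_const, smul_eq_mul] at hmono
      have h3 := hadd x
      rw [hgx x]
      nlinarith [hmono, h3]
    -- hence W' ≤ 0 on (x1, c)
    have hW'np : ∀ x ∈ Set.Ioo x1 c, W' x ≤ 0 := by
      intro x hx
      have hx' : x ∈ Set.Ioo (0:ℝ) c := ⟨lt_of_le_of_lt hx1nonneg hx.1, hx.2⟩
      have h2 := hW'le x hx'
      have h3 := hgneg x hx
      have h4 : 0 < c - x := by linarith [hx.2]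
      have h5 : α * g x ≤ α * (-(E/2) * (c - x)) := mul_le_mul_of_nonneg_left h3 hα.le
      have h6 : -(E/2) * (c - x) ≤ 0 := by nlinarith
      have h7 : α * (-(E/2) * (c - x)) ≤ 0 := mul_nonpos_of_nonneg_of_nonpos hα.le h6
      by_contra hpos
      push_neg at hpos
      have h8 : 0 < σ ^ 2 / 2 * W' x := mul_pos (by positivity) hpos
      linarith
    -- W is antitone on [x1, c)
    have hanti : AntitoneOn W (Set.Ico x1 c) := by
      apply antitoneOn_of_deriv_nonpos (convex_Ico x1 c)
      · exact hWcont.mono (fun t ht => ⟨le_trans hx1nonneg ht.1, ht.2⟩)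
      · rw [interior_Ico]
        intro x hx
        have hx' : x ∈ Set.Ico (0:ℝ) c := ⟨le_trans hx1nonneg hx.1.le, hx.2⟩
        exact (hderiv x hx').differentiableAt.differentiableWithinAt
      · rw [interior_Ico]
        intro x hx
        have hx' : x ∈ Set.Ico (0:ℝ) c := ⟨le_trans hx1nonneg hx.1.le, hx.2⟩
        rw [(hderiv x hx').deriv]
        exact hW'np x hx
    set x2 : ℝ := (x1 + c) / 2 with hx2_def
    have hx2mem : x2 ∈ Set.Ico x1 c := ⟨by rw [hx2_def]; linarith, by rw [hx2_def]; linarith⟩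
    have hx2mem' : x2 ∈ Set.Ico (0:ℝ) c := ⟨le_trans hx1nonneg hx2mem.1, hx2mem.2⟩
    have h0le : (0:ℝ) ≤ W x2 := by
      refine le_of_tendsto hlim ?_
      filter_upwards [Ioo_mem_nhdsLT hx2mem.2] with y hy
      exact hanti hx2mem ⟨le_trans hx2mem.1 hy.1.le, hy.2⟩ hy.1.le
    have := hneg x2 hx2mem'
    linarith
end

section
/- There exists r₀ > 0 such that for every r with 0 < r ≤ r₀, the solution W̃_r of the F̃-ODE with initial slope r satisfies W̃_r(x) < 0 for all x ≥ 0, and W̃_r attains a strict local maximum, i.e., there exists ξ ≥ 0 with W̃_r'(ξ) = 0 and W̃_r''(ξ) < 0. -/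
open Set Filter Topology

lemma aux_right_lt {f : ℝ → ℝ} {t d : ℝ} (hf : HasDerivAt f d t) (hd : d < 0) :
    ∃ ε > 0, ∀ s, t < s → s < t + ε → f s < f t := by
  have h1 : Tendsto (slope f t) (𝓝[≠] t) (𝓝 d) := hasDerivAt_iff_tendsto_slope.mp hf
  have h2 : ∀ᶠ z in 𝓝[≠] t, slope f t z < 0 := h1.eventually_lt_const hd
  have h3 : ∀ᶠ z in 𝓝[>] t, slope f t z < 0 :=
    h2.filter_mono (nhdsWithin_mono t (fun z hz => ne_of_gt hz))
  rw [(nhdsGT_basis t).eventually_iff] at h3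
  obtain ⟨b, hb, hball⟩ := h3
  refine ⟨b - t, by linarith, fun s hs1 hs2 => ?_⟩
  have hsl : slope f t s < 0 := hball ⟨hs1, by linarith⟩
  rw [slope_def_field] at hsl
  have hst : 0 < s - t := by linarith
  rcases div_neg_iff.mp hsl with ⟨h', h''⟩ | ⟨h', h''⟩ <;> linarith

lemma aux_left_le {f : ℝ → ℝ} (hf : Continuous f) {a t m : ℝ} (hat : a < t)
    (hb : ∀ x, a < x → x < t → f x ≤ m) : f t ≤ m := by
  have h1 : Tendsto f (𝓝[<] t) (𝓝 (f t)) := (hf.tendsto t).mono_left nhdsWithin_le_nhds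
  have h2 : ∀ᶠ x in 𝓝[<] t, f x ≤ m :=
    eventually_of_mem (Ioo_mem_nhdsLT hat) (fun x hx => hb x hx.1 hx.2)
  exact le_of_tendsto h1 h2

lemma aux_left_ge {f : ℝ → ℝ} (hf : Continuous f) {a t m : ℝ} (hat : a < t)
    (hb : ∀ x, a < x → x < t → m ≤ f x) : m ≤ f t := by
  have h1 : Tendsto f (𝓝[<] t) (𝓝 (f t)) := (hf.tendsto t).mono_left nhdsWithin_le_nhds
  have h2 : ∀ᶠ x in 𝓝[<] t, m ≤ f x :=
    eventually_of_mem (Ioo_mem_nhdsLT hat) (fun x hx => hb x hx.1 hx.2)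
  exact ge_of_tendsto h1 h2

lemma aux_mvt {f : ℝ → ℝ} (hf : Differentiable ℝ f) {a b m : ℝ} (hab : a ≤ b)
    (hd : ∀ s, a < s → s < b → deriv f s ≤ m) : f b - f a ≤ m * (b - a) := by
  rcases eq_or_lt_of_le hab with rfl | h
  · simp
  · obtain ⟨s, hs, heq⟩ := exists_deriv_eq_slope f h hf.continuous.continuousOn
      hf.differentiableOn
    have h1 : deriv f s ≤ m := hd s hs.1 hs.2
    rw [heq] at h1
    have hba : 0 < b - a := by linarith
    calc f b - f a = (f b - f a) / (b - a) * (b - a) := by field_simp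
    _ ≤ m * (b - a) := by nlinarith

lemma LF_bddAbove (C : ℝ → ℝ) (hCnn : ∀ u ≥ (0:ℝ), 0 ≤ C u) {y : ℝ} (hy : y ≤ 0) :
    BddAbove ((fun u => u * y - C u) '' Set.Ici (0:ℝ)) := by
  refine ⟨0, fun v hv => ?_⟩
  obtain ⟨u, hu, rfl⟩ := hv
  have h1 : u * y ≤ 0 := mul_nonpos_of_nonneg_of_nonpos hu hy
  have h2 : 0 ≤ C u := hCnn u hu
  simp only
  linarith

lemma LF_ge (C : ℝ → ℝ) (hCnn : ∀ u ≥ (0:ℝ), 0 ≤ C u) {y : ℝ} (hy : y ≤ 0) :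
    -C 0 ≤ LF C y := by
  refine le_csSup (LF_bddAbove C hCnn hy) ?_
  exact ⟨0, Set.mem_Ici.mpr le_rfl, by simp⟩

lemma LF_lip (C : ℝ → ℝ) (hCnn : ∀ u ≥ (0:ℝ), 0 ≤ C u) {δ : ℝ} (hδ0 : 0 < δ)
    {a b : ℝ} (ha : a ≤ -δ/2) (hb : b ≤ -δ/2) :
    LF C a ≤ LF C b + (2*(C 0+1)/δ) * |a - b| := by
  set K := 2*(C 0+1)/δ with hK
  have hC00 : 0 ≤ C 0 := hCnn 0 le_rfl
  have hKpos : 0 < K := by positivity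
  have hKδ : K * δ = 2*(C 0 + 1) := by rw [hK, div_mul_cancel₀ _ hδ0.ne']
  have hLb : -C 0 ≤ LF C b := LF_ge C hCnn (by linarith)
  refine csSup_le (Set.Nonempty.image _ ⟨0, Set.mem_Ici.mpr le_rfl⟩) ?_
  rintro v ⟨u, hu, rfl⟩
  simp only
  rcases le_or_gt u K with hcase | hcase
  · have h1 : u * b - C u ≤ LF C b :=
      le_csSup (LF_bddAbove C hCnn (by linarith)) ⟨u, hu, rfl⟩
    have h2 : u * (a - b) ≤ K * |a - b| := by
      calc u * (a - b) ≤ u * |a - b| := mul_le_mul_of_nonneg_left (le_abs_self _) hu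
      _ ≤ K * |a - b| := mul_le_mul_of_nonneg_right hcase (abs_nonneg _)
    nlinarith
  · have h1 : u * a ≤ K * a := by
      have : 0 ≤ (u - K) * (-a) := mul_nonneg (by linarith) (by linarith)
      nlinarith
    have h2 : K * a ≤ -(C 0 + 1) := by nlinarith
    have h3 : 0 ≤ C u := hCnn u hu
    have h4 : 0 ≤ K * |a - b| := mul_nonneg hKpos.le (abs_nonneg _)
    nlinarith

lemma deriv_LF_bound (C : ℝ → ℝ) (hCnn : ∀ u ≥ (0:ℝ), 0 ≤ C u) {δ y : ℝ}
    (hδ0 : 0 < δ) (hy : y < -δ) : |deriv (LF C) y| ≤ 2*(C 0+1)/δ := by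
  set K := 2*(C 0+1)/δ with hK
  have hC00 : 0 ≤ C 0 := hCnn 0 le_rfl
  have hKpos : 0 < K := by positivity
  by_cases hdiff : DifferentiableAt ℝ (LF C) y
  · have hder : Tendsto (slope (LF C) y) (𝓝[≠] y) (𝓝 (deriv (LF C) y)) :=
      hasDerivAt_iff_tendsto_slope.mp hdiff.hasDerivAt
    have habs : Tendsto (fun z => |slope (LF C) y z|) (𝓝[≠] y) (𝓝 |deriv (LF C) y|) :=
      hder.abs
    refine le_of_tendsto habs ?_
    have hmem : Set.Iio (-δ/2) ∈ 𝓝[≠] y :=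
      mem_nhdsWithin_of_mem_nhds (Iio_mem_nhds (by linarith))
    filter_upwards [hmem, self_mem_nhdsWithin] with z hz hzne
    have hz2 : z ≤ -δ/2 := le_of_lt hz
    have hy2 : y ≤ -δ/2 := by linarith
    have hzy : z ≠ y := hzne
    have h1 : LF C z - LF C y ≤ K * |z - y| := by
      have := LF_lip C hCnn hδ0 hz2 hy2
      rw [← hK] at this; linarith [this, abs_sub_comm z y]
    have h2 : LF C y - LF C z ≤ K * |z - y| := by
      have := LF_lip C hCnn hδ0 hy2 hz2
      rw [← hK] at this
      calc LF C y - LF C z ≤ K * |y - z| := by linarith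
      _ = K * |z - y| := by rw [abs_sub_comm]
    rw [slope_def_field, abs_div]
    rw [div_le_iff₀ (abs_pos.mpr (sub_ne_zero.mpr hzy))]
    exact abs_le.mpr ⟨by linarith, by linarith⟩
  · rw [deriv_zero_of_not_differentiableAt hdiff]
    simpa using hKpos.le

lemma deriv_Ftilde_lt (C h : ℝ → ℝ) {δ y : ℝ} (hy : y < -δ) :
    deriv (Ftilde C h δ) y = deriv (LF C) y := by
  apply Filter.EventuallyEq.deriv_eq
  filter_upwards [Iio_mem_nhds hy] with z hz
  exact if_pos (le_of_lt hz)

lemma deriv_Ftilde_gt (C h : ℝ → ℝ) {δ y : ℝ} (hy : -δ < y) :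
    deriv (Ftilde C h δ) y = h (-δ) := by
  have he : Ftilde C h δ =ᶠ[𝓝 y] (fun z => h (-δ) * (z + δ) + LF C (-δ)) := by
    filter_upwards [Ioi_mem_nhds hy] with z hz
    exact if_neg (not_le.mpr hz)
  rw [he.deriv_eq]
  have hd : HasDerivAt (fun z => h (-δ) * (z + δ) + LF C (-δ)) (h (-δ) * 1) y :=
    (((hasDerivAt_id y).add_const δ).const_mul (h (-δ))).add_const _
  rw [hd.deriv, mul_one]


set_option maxHeartbeats 4000000 in
/-- For all sufficiently small initial slopes `0 < r ≤ r₀`, the solution `W̃_r` of the `F̃`-ODE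
stays strictly negative on `[0,∞)` and attains a strict local maximum: there is `ξ ≥ 0` with
`W̃_r'(ξ) = 0` and `W̃_r''(ξ) < 0`. -/
theorem statement4
    (C h : ℝ → ℝ) (σ θ α p δ : ℝ)
    (hσ : 0 < σ) (hθ : 0 < θ) (hα : 0 < α) (hp : 0 < p)
    (hC2 : ContDiff ℝ 2 C)
    (hCanti : AntitoneOn C (Set.Ici 0))
    (hCconv : ConvexOn ℝ (Set.Ici 0) C)
    (hC0 : 0 < C 0)
    (hClim : Tendsto C atTop (nhds 0))
    (hC'' : ∀ u ≥ (0 : ℝ), 0 < deriv (deriv C) u)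
    (hC'0 : deriv C 0 < 0)
    (hinv₁ : ∀ u ≥ (0 : ℝ), h (deriv C u) = u)
    (hinv₂ : ∀ y : ℝ, deriv C 0 ≤ y → y < 0 → 0 ≤ h y ∧ deriv C (h y) = y)
    (hδ0 : 0 < δ) (hδ : δ < min p (-deriv C 0)) :
    ∃ r₀ : ℝ, 0 < r₀ ∧
      ∀ r : ℝ, 0 < r → r ≤ r₀ →
        ∀ W : ℝ → ℝ, SolvesFtildeODE C h δ σ θ α p r W →
          (∀ x ≥ (0 : ℝ), W x < 0) ∧
          ∃ ξ ≥ (0 : ℝ), deriv W ξ = 0 ∧ deriv (deriv W) ξ < 0 := by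
  have hCnn : ∀ u ≥ (0:ℝ), 0 ≤ C u := by
    intro u hu
    refine le_of_tendsto hClim ?_
    filter_upwards [eventually_ge_atTop u] with v hv
    exact hCanti hu (le_trans hu hv) hv
  have hδp : δ < p := lt_of_lt_of_le hδ (min_le_left _ _)
  have hδC : deriv C 0 < -δ := by
    have := lt_of_lt_of_le hδ (min_le_right _ _); linarith
  have hhδ : 0 ≤ h (-δ) := (hinv₂ (-δ) (by linarith) (by linarith)).1
  set K := 2*(C 0+1)/δ with hKdef
  have hK0 : 0 < K := by positivity
  set M := max K (max (h (-δ)) |deriv (Ftilde C h δ) (-δ)|) with hMdef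
  have hM0 : 0 < M := lt_of_lt_of_le hK0 (le_max_left _ _)
  have hMb : ∀ y : ℝ, |deriv (Ftilde C h δ) y| ≤ M := by
    intro y
    rcases lt_trichotomy y (-δ) with hy | hy | hy
    · rw [deriv_Ftilde_lt C h hy]
      exact le_trans (deriv_LF_bound C hCnn hδ0 hy) (le_max_left _ _)
    · rw [hy]
      exact le_trans (le_max_right (h (-δ)) _) (le_max_right K _)
    · rw [deriv_Ftilde_gt C h hy, abs_of_nonneg hhδ]
      exact le_trans (le_max_left (h (-δ)) _) (le_max_right K _)
  set c := (θ+α)*p/(4*σ^2) with hcdef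
  have hσ2 : (0:ℝ) < σ^2 := by positivity
  have hc0 : 0 < c := by
    apply div_pos
    · nlinarith
    · nlinarith
  refine ⟨min (min ((θ+α)*p/(4*(M+θ))) (c/2)) (p/4),
    lt_min (lt_min (div_pos (by nlinarith) (by nlinarith)) (by linarith)) (by linarith), ?_⟩
  intro r hr hrle W hsol
  obtain ⟨hW2, hW0, hWd0, hODE⟩ := hsol
  -- regularity
  have hdiffW : Differentiable ℝ W := hW2.differentiable (by norm_num)
  have hcontW : Continuous W := hdiffW.continuous
  have hW1 : ContDiff ℝ 1 (deriv W) := by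
    have he2 : (2 : WithTop ℕ∞) = 1 + 1 := by norm_num
    rw [he2] at hW2
    exact (contDiff_succ_iff_deriv.mp hW2).2.2
  have hdiffW' : Differentiable ℝ (deriv W) := hW1.differentiable one_ne_zero
  have hcontW' : Continuous (deriv W) := hdiffW'.continuous
  -- bounds on r
  have hrA : r ≤ (θ+α)*p/(4*(M+θ)) :=
    le_trans hrle (le_trans (min_le_left _ _) (min_le_left _ _))
  have hr1 : r*(M+θ) ≤ (θ+α)*p/4 := by
    rw [le_div_iff₀ (by nlinarith : (0:ℝ) < 4*(M+θ))] at hrA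
    linarith
  have hrc : r ≤ c/2 := le_trans hrle (le_trans (min_le_left _ _) (min_le_right _ _))
  have hrp : r ≤ p/4 := le_trans hrle (min_le_right _ _)
  -- ODE rearranged
  have hODE' : ∀ x, 0 ≤ x → σ^2/2 * deriv (deriv W) x =
      deriv (Ftilde C h δ) (W x) * deriv W x + θ*x*deriv W x + (θ+α)*W x := by
    intro x hx
    have := hODE x hx
    linarith
  have hσc : σ^2 * c = (θ+α)*p/4 := by rw [hcdef]; field_simp
  -- second derivative bound
  have hW''le : ∀ t, 0 ≤ t → t ≤ 1 → 0 < deriv W t → deriv W t ≤ r → W t ≤ -p/2 →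
      deriv (deriv W) t ≤ -(2*c) := by
    intro t ht0 ht1 hV0 hVr hWt
    have hG : deriv (Ftilde C h δ) (W t) * deriv W t ≤ M * r := by
      have h1 : deriv (Ftilde C h δ) (W t) * deriv W t ≤ M * deriv W t :=
        mul_le_mul_of_nonneg_right (le_of_abs_le (hMb (W t))) hV0.le
      have h2 : M * deriv W t ≤ M * r := mul_le_mul_of_nonneg_left hVr hM0.le
      linarith
    have h10 : t * deriv W t ≤ r := by
      have hprod : 0 ≤ (1 - t) * deriv W t := mul_nonneg (by linarith) hV0.le
      nlinarith [hprod]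
    have hθt : θ*t*deriv W t ≤ θ*r := by
      have := mul_le_mul_of_nonneg_left h10 hθ.le
      linarith [this]
    have hW3 : (θ+α)*W t ≤ (θ+α)*(-p/2) :=
      mul_le_mul_of_nonneg_left hWt (by linarith)
    have hsum := hODE' t ht0
    have hsum2 : σ^2/2 * deriv (deriv W) t ≤ -(σ^2*c) := by
      rw [hσc]; linarith
    by_contra hA
    push_neg at hA
    have hmul : σ^2/2 * (-(2*c)) < σ^2/2 * deriv (deriv W) t :=
      mul_lt_mul_of_pos_left hA (by positivity)
    have he : σ^2/2 * (-(2*c)) = -(σ^2*c) := by ring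
    linarith
  -- barrier lemma
  have hbar : ∀ T, T ≤ 1 → (∀ x, 0 ≤ x → x < T → 0 < deriv W x) →
      ∀ x, 0 ≤ x → x < T → deriv W x ≤ r - c*x := by
    intro T hT1 Hpos
    by_contra hcon
    push_neg at hcon
    obtain ⟨x₀, hx₀0, hx₀T, hx₀⟩ := hcon
    set S := {x : ℝ | x ∈ Set.Icc 0 x₀ ∧ r - c*x < deriv W x} with hSdef
    have hSne : S.Nonempty := ⟨x₀, ⟨⟨hx₀0, le_rfl⟩, hx₀⟩⟩
    have hSbd : BddBelow S := ⟨0, fun s hs => hs.1.1⟩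
    set t := sInf S with htdef
    have ht0 : 0 ≤ t := le_csInf hSne (fun s hs => hs.1.1)
    have htx₀ : t ≤ x₀ := csInf_le hSbd ⟨⟨hx₀0, le_rfl⟩, hx₀⟩
    have htT : t < T := lt_of_le_of_lt htx₀ hx₀T
    have ht1 : t ≤ 1 := le_trans htx₀ (le_trans hx₀T.le hT1)
    have hleft : ∀ x, 0 ≤ x → x < t → deriv W x ≤ r - c*x := by
      intro x hx0 hxt
      by_contra hc2
      push_neg at hc2
      have hmem : x ∈ S := ⟨⟨hx0, le_trans hxt.le htx₀⟩, hc2⟩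
      exact absurd (csInf_le hSbd hmem) (not_le.mpr hxt)
    have hge : r - c*t ≤ deriv W t := by
      have hcl : IsClosed {x : ℝ | r - c*x ≤ deriv W x} :=
        isClosed_le (by continuity) hcontW'
      exact hcl.closure_subset_iff.mpr (fun s hs => hs.2.le) (csInf_mem_closure hSne hSbd)
    have hle : deriv W t ≤ r - c*t := by
      rcases eq_or_lt_of_le ht0 with h0 | h0
      · rw [← h0, hWd0]; linarith
      · have h6 : deriv W t + c*t ≤ r := by
          refine aux_left_le (f := fun x => deriv W x + c*x)
            (hcontW'.add (continuous_const.mul continuous_id)) h0 (fun x hx1 hx2 => ?_)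
          have h5 := hleft x hx1.le hx2
          show deriv W x + c*x ≤ r
          linarith
        linarith
    have heq : deriv W t = r - c*t := le_antisymm hle hge
    have htpos : 0 < deriv W t := Hpos t ht0 htT
    have hVr : deriv W t ≤ r := by nlinarith [hc0]
    have hWt : W t ≤ -p/2 := by
      have hmv : W t - W 0 ≤ r * (t - 0) := by
        refine aux_mvt hdiffW ht0 (fun s hs1 hs2 => ?_)
        have := hleft s hs1.le hs2
        nlinarith [hc0]
      rw [hW0] at hmv
      nlinarith [hrp, ht1, hr]
    have hW'' := hW''le t ht0 ht1 htpos hVr hWt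
    have hgd : HasDerivAt (fun x => deriv W x + c*x) (deriv (deriv W) t + c*1) t :=
      (hdiffW' t).hasDerivAt.add ((hasDerivAt_id t).const_mul c)
    obtain ⟨ε, hε0, hεlt⟩ := aux_right_lt hgd (by linarith [hc0] : deriv (deriv W) t + c*1 < 0)
    have hlb : ∀ s ∈ S, t + ε ≤ s := by
      intro s hs
      by_contra hc3
      push_neg at hc3
      have hst : t ≤ s := csInf_le hSbd hs
      rcases eq_or_lt_of_le hst with h4 | h4
      · rw [← h4] at hs
        have := hs.2
        linarith [heq]
      · have h5 := hεlt s h4 hc3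
        have h6 : deriv W s + c*s < deriv W t + c*t := h5
        have h7 := hs.2
        linarith [heq]
    have hfin := le_csInf hSne hlb
    linarith
  -- step 1: W' has a zero in [0,1]
  set Z := Set.Icc (0:ℝ) 1 ∩ {x : ℝ | deriv W x ≤ 0} with hZdef
  have hZne : Z.Nonempty := by
    by_contra hne
    have Hpos : ∀ x, 0 ≤ x → x < 1 → 0 < deriv W x := by
      intro x hx0 hx1
      by_contra h6
      push_neg at h6
      exact hne ⟨x, ⟨⟨hx0, hx1.le⟩, h6⟩⟩
    have h7 := hbar 1 le_rfl Hpos (3/4) (by norm_num) (by norm_num)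
    have h8 : 0 < deriv W (3/4 : ℝ) := Hpos _ (by norm_num) (by norm_num)
    nlinarith [hrc, hc0]
  have hZbd : BddBelow Z := ⟨0, fun s hs => hs.1.1⟩
  have hZcl : IsClosed Z := isClosed_Icc.inter (isClosed_le hcontW' continuous_const)
  set ξ := sInf Z with hξdef
  have hξZ : ξ ∈ Z := by
    have := csInf_mem_closure hZne hZbd
    rwa [hZcl.closure_eq] at this
  have hξ0 : 0 ≤ ξ := hξZ.1.1
  have hξ1 : ξ ≤ 1 := hξZ.1.2
  have hξpos : ∀ x, 0 ≤ x → x < ξ → 0 < deriv W x := by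
    intro x hx0 hxξ
    by_contra h6
    push_neg at h6
    have hmem : x ∈ Z := ⟨⟨hx0, le_trans hxξ.le hξ1⟩, h6⟩
    exact absurd (csInf_le hZbd hmem) (not_le.mpr hxξ)
  have hξ0' : 0 < ξ := by
    rcases eq_or_lt_of_le hξ0 with h7 | h7
    · exfalso
      have h9 : deriv W ξ ≤ 0 := hξZ.2
      rw [← h7, hWd0] at h9
      linarith
    · exact h7
  have hξd : deriv W ξ = 0 :=
    le_antisymm hξZ.2 (aux_left_ge hcontW' hξ0' (fun x h1 h2 => (hξpos x h1.le h2).le))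
  have hWle : ∀ x, 0 ≤ x → x ≤ ξ → deriv W x ≤ r := by
    intro x hx0 hxξ
    rcases eq_or_lt_of_le hxξ with h7 | h7
    · rw [h7, hξd]; exact hr.le
    · have := hbar ξ hξ1 hξpos x hx0 h7
      nlinarith [hc0]
  have hWneg1 : ∀ x, 0 ≤ x → x ≤ ξ → W x ≤ -p/2 := by
    intro x hx0 hxξ
    have hmv : W x - W 0 ≤ r * (x - 0) :=
      aux_mvt hdiffW hx0 (fun s h1 h2 => hWle s h1.le (le_trans h2.le hxξ))
    rw [hW0] at hmv
    nlinarith [hrp, le_trans hxξ hξ1, hr]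
  have hWξ : W ξ ≤ -p/2 := hWneg1 ξ hξ0 le_rfl
  have hODEξ := hODE' ξ hξ0
  rw [hξd] at hODEξ
  have hW''ξ : deriv (deriv W) ξ < 0 := by
    have h8 : (θ+α)*W ξ ≤ (θ+α)*(-p/2) := mul_le_mul_of_nonneg_left hWξ (by linarith)
    nlinarith [hODEξ, hσ2, h8]
  -- step 4: W' ≤ 0 after ξ
  have hafter : ∀ x, ξ ≤ x → deriv W x ≤ 0 := by
    by_contra hcon
    push_neg at hcon
    obtain ⟨x₀, hx₀ξ, hx₀⟩ := hcon
    set N := {x : ℝ | ξ ≤ x ∧ 0 < deriv W x} with hNdef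
    have hNne : N.Nonempty := ⟨x₀, hx₀ξ, hx₀⟩
    have hNbd : BddBelow N := ⟨ξ, fun s hs => hs.1⟩
    set t := sInf N with htdef
    have htξ : ξ ≤ t := le_csInf hNne (fun s hs => hs.1)
    have hge : 0 ≤ deriv W t := by
      have hcl : IsClosed {x : ℝ | 0 ≤ deriv W x} := isClosed_le continuous_const hcontW'
      exact hcl.closure_subset_iff.mpr (fun s hs => hs.2.le) (csInf_mem_closure hNne hNbd)
    have hleft2 : ∀ x, ξ ≤ x → x < t → deriv W x ≤ 0 := by
      intro x h1 h2
      by_contra h3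
      push_neg at h3
      exact absurd (csInf_le hNbd ⟨h1, h3⟩) (not_le.mpr h2)
    have hle2 : deriv W t ≤ 0 := by
      rcases eq_or_lt_of_le htξ with h4 | h4
      · rw [← h4, hξd]
      · exact aux_left_le hcontW' (lt_of_le_of_lt hξ0 h4 |> fun _ => h4)
          (fun x h5 h6 => hleft2 x h5.le h6)
    have heq2 : deriv W t = 0 := le_antisymm hle2 hge
    have hWtneg : W t < 0 := by
      have hmv : W t - W ξ ≤ 0 * (t - ξ) :=
        aux_mvt hdiffW htξ (fun s h5 h6 => hleft2 s h5.le h6)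
      nlinarith [hWξ, hp]
    have hODEt := hODE' t (le_trans hξ0 htξ)
    rw [heq2] at hODEt
    have hW''t : deriv (deriv W) t < 0 := by
      have h8 : (θ+α)*W t < 0 := mul_neg_of_pos_of_neg (by linarith) hWtneg
      nlinarith [hODEt, hσ2]
    obtain ⟨ε, hε0, hεlt⟩ := aux_right_lt (hdiffW' t).hasDerivAt hW''t
    have hlb2 : ∀ s ∈ N, t + ε ≤ s := by
      intro s hs
      by_contra h7
      push_neg at h7
      have hst : t ≤ s := csInf_le hNbd hs
      rcases eq_or_lt_of_le hst with h8 | h8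
      · rw [← h8] at hs
        linarith [hs.2, heq2]
      · have h9 := hεlt s h8 h7
        rw [heq2] at h9
        linarith [hs.2]
    linarith [le_csInf hNne hlb2]
  constructor
  · intro x hx
    rcases le_or_gt x ξ with h1 | h1
    · linarith [hWneg1 x hx h1, hp]
    · have hmv : W x - W ξ ≤ 0 * (x - ξ) :=
        aux_mvt hdiffW h1.le (fun s h5 _ => hafter s h5.le)
      nlinarith [hWξ, hp]
  · exact ⟨ξ, hξ0, hξd, hW''ξ⟩
end

section
/- There exists r₁ > 0 such that for every r > r₁, the solution W̃_r of the F̃-ODE with initial slope r reaches the level 0 in finite time: the hitting time c_r = inf{ x > 0 : W̃_r(x) = 0 } is finite and W̃_r(c_r) = 0. -/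
open Set Filter Topology

/-- The derivative of a monotone real function is nonnegative (with the junk-value convention
`deriv f x = 0` at points of non-differentiability). -/
lemma monotone_deriv_nonneg' {f : ℝ → ℝ} (hf : Monotone f) (x : ℝ) : 0 ≤ deriv f x := by
  by_cases H : DifferentiableAt ℝ f x
  · have h1 : Tendsto (slope f x) (𝓝[≠] x) (𝓝 (deriv f x)) :=
      hasDerivAt_iff_tendsto_slope.1 H.hasDerivAt
    have h2 : Tendsto (slope f x) (𝓝[>] x) (𝓝 (deriv f x)) :=
      h1.mono_left (nhdsWithin_mono _ (fun y hy => ne_of_gt hy))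
    refine ge_of_tendsto h2 ?_
    filter_upwards [self_mem_nhdsWithin] with y hy
    have hxy : x < y := hy
    rw [slope_def_field]
    exact div_nonneg (sub_nonneg.2 (hf hxy.le)) (sub_nonneg.2 hxy.le)
  · rw [deriv_zero_of_not_differentiableAt H]

set_option maxHeartbeats 1000000

/-- For all sufficiently large initial slopes `r > r₁`, the solution `W̃_r` of the `F̃`-ODE
reaches the level `0` in finite time: the hitting time `c_r = inf{x > 0 : W̃_r(x) = 0}` is finite
and `W̃_r(c_r) = 0` (i.e. there is a first strictly positive zero). -/
theorem statement5
    (C h : ℝ → ℝ) (σ θ α p δ : ℝ)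
    (hσ : 0 < σ) (hθ : 0 < θ) (hα : 0 < α) (hp : 0 < p)
    (hC2 : ContDiff ℝ 2 C)
    (hCanti : AntitoneOn C (Set.Ici 0))
    (hCconv : ConvexOn ℝ (Set.Ici 0) C)
    (hC0 : 0 < C 0)
    (hClim : Tendsto C atTop (nhds 0))
    (hC'' : ∀ u ≥ (0 : ℝ), 0 < deriv (deriv C) u)
    (hC'0 : deriv C 0 < 0)
    (hinv₁ : ∀ u ≥ (0 : ℝ), h (deriv C u) = u)
    (hinv₂ : ∀ y : ℝ, deriv C 0 ≤ y → y < 0 → 0 ≤ h y ∧ deriv C (h y) = y)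
    (hδ0 : 0 < δ) (hδ : δ < min p (-deriv C 0)) :
    ∃ r₁ : ℝ, 0 < r₁ ∧
      ∀ r : ℝ, r₁ < r →
        ∀ W : ℝ → ℝ, SolvesFtildeODE C h δ σ θ α p r W →
          ∃ c : ℝ, 0 < c ∧ W c = 0 ∧ ∀ y : ℝ, 0 < y → W y = 0 → c ≤ y := by
  -- `C` is nonnegative on `[0,∞)`.
  have hCnn : ∀ u : ℝ, 0 ≤ u → 0 ≤ C u := by
    intro u hu
    refine le_of_tendsto hClim ?_
    filter_upwards [eventually_ge_atTop u] with v hv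
    exact hCanti hu (hu.trans hv) hv
  -- the defining families for `LF` are nonempty and, at nonpositive arguments, bounded above
  have hne : ∀ y : ℝ, ((fun u => u * y - C u) '' Ici 0).Nonempty :=
    fun y => ⟨_, ⟨0, le_refl (0:ℝ), rfl⟩⟩
  have hbdd : ∀ y : ℝ, y ≤ 0 → BddAbove ((fun u => u * y - C u) '' Ici 0) := by
    intro y hy
    refine ⟨0, ?_⟩
    rintro _ ⟨u, hu, rfl⟩
    have h1 : 0 ≤ C u := hCnn u hu
    have h2 : 0 ≤ u * (-y) := mul_nonneg hu (by linarith)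
    simp only
    nlinarith
  -- monotonicity of `LF` on nonpositive arguments
  have hLFmono : ∀ y₁ y₂ : ℝ, y₁ ≤ y₂ → y₂ ≤ 0 → LF C y₁ ≤ LF C y₂ := by
    intro y₁ y₂ h12 h20
    refine csSup_le (hne y₁) ?_
    rintro _ ⟨u, hu, rfl⟩
    have step : u * y₁ - C u ≤ u * y₂ - C u := by nlinarith [mul_le_mul_of_nonneg_left h12 hu]
    exact step.trans (le_csSup (hbdd y₂ h20) ⟨u, hu, rfl⟩)
  have hδp : δ < p := lt_of_lt_of_le hδ (min_le_left _ _)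
  have hδC : deriv C 0 < -δ := by
    have := lt_of_lt_of_le hδ (min_le_right _ _); linarith
  have hhδ : 0 ≤ h (-δ) := (hinv₂ (-δ) hδC.le (by linarith)).1
  -- `Ftilde` is monotone on all of ℝ
  have hFmono : Monotone (Ftilde C h δ) := by
    intro y₁ y₂ h12
    unfold Ftilde
    by_cases h1 : y₁ ≤ -δ
    · by_cases h2 : y₂ ≤ -δ
      · rw [if_pos h1, if_pos h2]
        exact hLFmono _ _ h12 (by linarith)
      · rw [if_pos h1, if_neg h2]
        push_neg at h2
        have hA : LF C y₁ ≤ LF C (-δ) := hLFmono _ _ h1 (by linarith)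
        have hB : 0 ≤ h (-δ) * (y₂ + δ) := mul_nonneg hhδ (by linarith)
        linarith
    · have h2 : ¬ y₂ ≤ -δ := fun hh => h1 (h12.trans hh)
      rw [if_neg h1, if_neg h2]
      have : h (-δ) * (y₁ + δ) ≤ h (-δ) * (y₂ + δ) :=
        mul_le_mul_of_nonneg_left (by linarith) hhδ
      linarith
  have hFderiv : ∀ z : ℝ, 0 ≤ deriv (Ftilde C h δ) z :=
    fun z => monotone_deriv_nonneg' hFmono z
  -- the threshold
  set K₀ : ℝ := 2 * (θ + α) * p / σ ^ 2 with hK₀def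
  have hK₀nn : 0 ≤ K₀ := by positivity
  set K : ℝ := K₀ + 1 with hKdef
  have hKpos : 0 < K := by linarith
  refine ⟨K + p + 1, by linarith, ?_⟩
  intro r hr W hWsol
  obtain ⟨hW2, hW0, hWd0, hODE⟩ := hWsol
  -- regularity facts
  have hWdiff : Differentiable ℝ W := hW2.differentiable (by norm_num)
  have hWcont : Continuous W := hWdiff.continuous
  have hW2' : ContDiff ℝ (1 + 1 : ℕ) W := by exact_mod_cast hW2
  have hg1 : ContDiff ℝ 1 (deriv W) := by
    have := (contDiff_succ_iff_deriv (n := 1)).1 (by exact_mod_cast hW2)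
    exact this.2.2
  have hgdiff : Differentiable ℝ (deriv W) := hg1.differentiable one_ne_zero
  have hgcont : Continuous (deriv W) := hgdiff.continuous
  have hg'cont : Continuous (deriv (deriv W)) := (contDiff_one_iff_deriv.1 hg1).2
  have hσ2 : (0:ℝ) < σ ^ 2 := by positivity
  -- lower bound on the second derivative
  have hW''lb : ∀ x : ℝ, 0 ≤ x → 0 ≤ deriv W x → -p ≤ W x → W x ≤ 0 →
      -K₀ ≤ deriv (deriv W) x := by
    intro x hx hgx hWl hWu
    have h0 := hODE x hx
    have h1 : 0 ≤ deriv (Ftilde C h δ) (W x) * deriv W x := mul_nonneg (hFderiv _) hgx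
    have h2 : 0 ≤ θ * x * deriv W x := mul_nonneg (mul_nonneg hθ.le hx) hgx
    have h3 : -((θ + α) * p) ≤ (θ + α) * W x := by nlinarith
    have key : -((θ + α) * p) ≤ σ ^ 2 / 2 * deriv (deriv W) x := by linarith
    rw [show -K₀ = -(2 * ((θ + α) * p)) / σ ^ 2 by rw [hK₀def]; ring,
      div_le_iff₀ hσ2]
    nlinarith
  -- there exists a strictly positive zero of W
  have hexists : ∃ x : ℝ, 0 < x ∧ W x = 0 := by
    by_contra hcon
    push_neg at hcon
    -- W is everywhere negative on [0, ∞)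
    have hneg : ∀ x : ℝ, 0 ≤ x → W x < 0 := by
      intro x hx
      rcases hx.eq_or_lt with hx0 | hx'
      · rw [← hx0, hW0]; linarith
      · rcases lt_trichotomy (W x) 0 with hlt | heq | hgt
        · exact hlt
        · exact absurd heq (hcon x hx')
        · have hsub := intermediate_value_Ioo (le_of_lt hx') hWcont.continuousOn
          have hmem : (0:ℝ) ∈ Ioo (W 0) (W x) := by rw [hW0]; exact ⟨by linarith, hgt⟩
          obtain ⟨z, hz, hz0⟩ := hsub hmem
          exact absurd hz0 (hcon z hz.1)
    -- the key differential inequality : deriv W x ≥ r - K x on [0,1]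
    have hψ : ∀ x : ℝ, 0 ≤ x → x ≤ 1 → r - K * x ≤ deriv W x := by
      by_contra hcon2
      push_neg at hcon2
      obtain ⟨x₀, hx₀0, hx₀1, hx₀⟩ := hcon2
      set S : Set ℝ := {x | x ∈ Icc 0 x₀ ∧ deriv W x < r - K * x} with hSdef
      have hSne : S.Nonempty := ⟨x₀, ⟨⟨hx₀0, le_refl _⟩, hx₀⟩⟩
      have hSbdd : BddBelow S := ⟨0, fun x hx => hx.1.1⟩
      set t := sInf S with htdef
      have hlbt : ∀ a ∈ S, t ≤ a := fun a ha => csInf_le hSbdd ha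
      have ht0 : 0 ≤ t := le_csInf hSne (fun x hx => hx.1.1)
      have htx₀ : t ≤ x₀ := csInf_le hSbdd ⟨⟨hx₀0, le_refl _⟩, hx₀⟩
      have ht1 : t ≤ 1 := htx₀.trans hx₀1
      -- before t, the inequality holds
      have hbefore : ∀ s : ℝ, 0 ≤ s → s < t → r - K * s ≤ deriv W s := by
        intro s hs hst
        by_contra hh
        push_neg at hh
        exact absurd (hlbt s ⟨⟨hs, hst.le.trans htx₀⟩, hh⟩) (not_le.2 hst)
      have hψcont : Continuous (fun x : ℝ => deriv W x - (r - K * x)) :=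
        hgcont.sub (continuous_const.sub (continuous_const.mul continuous_id))
      -- at t, `deriv W t ≤ r - K t`
      have htle : deriv W t ≤ r - K * t := by
        have hclos : t ∈ closure S := csInf_mem_closure hSne hSbdd
        have hsub : S ⊆ {x : ℝ | deriv W x - (r - K * x) ≤ 0} := by
          intro x hx; simp only [mem_setOf_eq]; linarith [hx.2]
        have hcl : IsClosed {x : ℝ | deriv W x - (r - K * x) ≤ 0} :=
          isClosed_le hψcont continuous_const
        have h5 := hcl.closure_subset ((closure_mono hsub) hclos)
        simp only [mem_setOf_eq] at h5
        linarith
      -- at t, `deriv W t ≥ r - K t`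
      have htge : r - K * t ≤ deriv W t := by
        rcases ht0.eq_or_lt with h0 | h0
        · rw [← h0, hWd0]; linarith
        · have hclos : t ∈ closure (Ico 0 t) := by
            rw [closure_Ico (ne_of_lt h0)]; exact ⟨ht0, le_refl t⟩
          have hsub : Ico 0 t ⊆ {x : ℝ | 0 ≤ deriv W x - (r - K * x)} := by
            intro x hx; exact sub_nonneg.2 (hbefore x hx.1 hx.2)
          have hcl : IsClosed {x : ℝ | 0 ≤ deriv W x - (r - K * x)} :=
            isClosed_le continuous_const hψcont
          have h5 := hcl.closure_subset ((closure_mono hsub) hclos)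
          simp only [mem_setOf_eq] at h5
          linarith
      have hteq : deriv W t = r - K * t := le_antisymm htle htge
      -- deriv W ≥ 0 on [0, t]
      have hgpos : ∀ s : ℝ, 0 ≤ s → s ≤ t → 0 ≤ deriv W s := by
        intro s hs hst
        rcases hst.eq_or_lt with hseq | hslt
        · rw [hseq, hteq]; nlinarith
        · have := hbefore s hs hslt; nlinarith
      -- W is monotone on [0, t], hence between -p and 0
      have hWmono : MonotoneOn W (Icc 0 t) := by
        refine monotoneOn_of_deriv_nonneg (convex_Icc 0 t) hWcont.continuousOn
          (hWdiff.differentiableOn) ?_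
        intro x hx
        rw [interior_Icc] at hx
        exact hgpos x hx.1.le hx.2.le
      have hWt_ge : -p ≤ W t := by
        have := hWmono ⟨le_refl (0:ℝ), ht0⟩ ⟨ht0, le_refl t⟩ ht0
        rw [hW0] at this; exact this
      have hWt_lt : W t < 0 := hneg t ht0
      -- second derivative bound at t
      have hχt : -K₀ ≤ deriv (deriv W) t := hW''lb t ht0 (hgpos t ht0 le_rfl) hWt_ge hWt_lt.le
      -- find a right neighborhood of t where deriv (deriv W) + K > 0
      have hUopen : IsOpen {x : ℝ | 0 < deriv (deriv W) x + K} :=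
        isOpen_lt continuous_const (hg'cont.add continuous_const)
      have htU : t ∈ {x : ℝ | 0 < deriv (deriv W) x + K} := by
        simp only [mem_setOf_eq]; linarith
      obtain ⟨ε, hε, hball⟩ := Metric.isOpen_iff.1 hUopen t htU
      -- ψ := deriv W + K·x is strictly monotone on [t, t + ε/2]
      have hψsm : StrictMonoOn (fun x : ℝ => deriv W x + K * x) (Icc t (t + ε / 2)) := by
        refine strictMonoOn_of_deriv_pos (convex_Icc _ _) ((hgcont.add (continuous_const.mul continuous_id)).continuousOn) ?_
        intro x hx
        rw [interior_Icc] at hx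
        have hdx : HasDerivAt (fun y : ℝ => deriv W y + K * y)
            (deriv (deriv W) x + K) x := by
          have h1 := (hgdiff x).hasDerivAt
          have h2 : HasDerivAt (fun y : ℝ => K * y) K x := by
            simpa using (hasDerivAt_id x).const_mul K
          exact h1.add h2
        rw [hdx.deriv]
        have hxball : x ∈ Metric.ball t ε := by
          rw [Metric.mem_ball, Real.dist_eq, abs_of_pos (by linarith [hx.1] : (0:ℝ) < x - t)]
          linarith [hx.1, hx.2]
        exact hball hxball
      -- pick an element of S below t + ε/2 and derive a contradiction
      obtain ⟨a, haS, halt⟩ := exists_lt_of_csInf_lt hSne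
        (lt_add_of_pos_right t (by linarith : (0:ℝ) < ε / 2))
      have hat : t ≤ a := hlbt a haS
      rcases hat.eq_or_lt with haeq | halt'
      · have := haS.2; rw [← haeq, hteq] at this; linarith
      · have hmono : deriv W t + K * t < deriv W a + K * a :=
          hψsm ⟨le_refl t, by linarith⟩ ⟨hat, halt.le⟩ halt'
        have h1 : deriv W t + K * t = r := by rw [hteq]; ring
        have h2 : deriv W a + K * a < r := by linarith [haS.2]
        linarith
    -- conclude: W 1 > 0, contradicting negativity
    have hmono2 : MonotoneOn (fun x : ℝ => W x - (r - K) * x) (Icc 0 1) := by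
      refine monotoneOn_of_deriv_nonneg (convex_Icc 0 1)
        ((hWcont.sub (continuous_const.mul continuous_id)).continuousOn)
        ((hWdiff.sub (differentiable_id.const_mul _)).differentiableOn) ?_
      intro x hx
      rw [interior_Icc] at hx
      have hdx : HasDerivAt (fun y : ℝ => W y - (r - K) * y)
          (deriv W x - (r - K)) x := by
        have h1 := (hWdiff x).hasDerivAt
        have h2 : HasDerivAt (fun y : ℝ => (r - K) * y) (r - K) x := by
          simpa using (hasDerivAt_id x).const_mul (r - K)
        exact h1.sub h2
      rw [hdx.deriv]
      have := hψ x hx.1.le hx.2.le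
      nlinarith [hx.1.le, hx.2.le]
    have hfin := hmono2 ⟨le_refl (0:ℝ), zero_le_one⟩ ⟨zero_le_one, le_refl (1:ℝ)⟩ zero_le_one
    simp only [hW0] at hfin
    have hW1 : W 1 < 0 := hneg 1 zero_le_one
    -- from hfin : -p - 0 ≤ W 1 - (r - K) * 1
    nlinarith [hfin]
  -- hitting-time construction
  obtain ⟨x₁, hx₁pos, hx₁zero⟩ := hexists
  have hW0neg : W 0 < 0 := by rw [hW0]; linarith
  obtain ⟨ε, hε, hball⟩ := Metric.isOpen_iff.1 (isOpen_Iio.preimage hWcont) 0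
    (by simpa [Set.mem_preimage] using hW0neg)
  set T : Set ℝ := {x : ℝ | W x = 0} ∩ Ici ε with hTdef
  have hTsub : ∀ y : ℝ, 0 < y → W y = 0 → y ∈ T := by
    intro y hy hWy
    refine ⟨hWy, ?_⟩
    by_contra hh
    simp only [Set.mem_Ici, not_le] at hh
    have hyb : y ∈ Metric.ball (0:ℝ) ε := by
      rw [Metric.mem_ball, Real.dist_eq, sub_zero, abs_of_pos hy]; exact hh
    have hlt := hball hyb
    simp only [Set.mem_preimage, Set.mem_Iio] at hlt
    rw [hWy] at hlt
    exact lt_irrefl 0 hlt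
  have hTne : T.Nonempty := ⟨x₁, hTsub x₁ hx₁pos hx₁zero⟩
  have hTbdd : BddBelow T := ⟨ε, fun x hx => hx.2⟩
  have hTclosed : IsClosed T :=
    (isClosed_eq hWcont continuous_const).inter isClosed_Ici
  have hmem := hTclosed.csInf_mem hTne hTbdd
  refine ⟨sInf T, ?_, hmem.1, ?_⟩
  · have := hmem.2; exact lt_of_lt_of_le hε this
  · intro y hy hWy
    exact csInf_le hTbdd (hTsub y hy hWy)
end

section
/- For every r ≥ 0 there exists a unique twice continuously differentiable function W̃_r : [0,∞) → ℝ solving the F̃-ODE with initial slope r, i.e., satisfying (σ²/2)·W̃_r''(x) − F̃'(W̃_r(x))·W̃_r'(x) − θ·x·W̃_r'(x) − (θ+α)·W̃_r(x) = 0 for all x ≥ 0, W̃_r(0) = −p, and W̃_r'(0) = r; in particular the solution exists globally on [0,∞). -/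
open Set Filter Asymptotics

private lemma clamp_lip (aa c y y' : ℝ) :
    |max aa (min y c) - max aa (min y' c)| ≤ |y - y'| := by
  have h1 : |min y c - min y' c| ≤ |y - y'| := by
    have l1 := le_abs_self (y - y')
    have l2 := neg_abs_le (y - y')
    rcases le_total y c with h | h <;> rcases le_total y' c with h' | h'
    · rw [min_eq_left h, min_eq_left h']
    · rw [min_eq_left h, min_eq_right h']
      exact abs_le.mpr ⟨by linarith, by linarith [abs_nonneg (y - y')]⟩
    · rw [min_eq_right h, min_eq_left h']
      exact abs_le.mpr ⟨by linarith [abs_nonneg (y - y')], by linarith⟩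
    · rw [min_eq_right h, min_eq_right h']
      simpa using abs_nonneg (y - y')
  calc |max aa (min y c) - max aa (min y' c)|
      = |min y c ⊔ aa - min y' c ⊔ aa| := by rw [max_comm aa, max_comm aa]
    _ ≤ |min y c - min y' c| := abs_max_sub_max_le_abs _ _ _
    _ ≤ |y - y'| := h1

/-- Part I: the linear extension `Ftilde` is differentiable everywhere, with a bounded
nonnegative Lipschitz derivative. -/
lemma exists_deriv_Ftilde (C h : ℝ → ℝ) (δ : ℝ)
    (hC2 : ContDiff ℝ 2 C)
    (hC'' : ∀ u ≥ (0 : ℝ), 0 < deriv (deriv C) u)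
    (hC'0 : deriv C 0 < 0)
    (hinv₁ : ∀ u ≥ (0 : ℝ), h (deriv C u) = u)
    (hinv₂ : ∀ y : ℝ, deriv C 0 ≤ y → y < 0 → 0 ≤ h y ∧ deriv C (h y) = y)
    (hδ0 : 0 < δ) (hδa' : δ < -deriv C 0) :
    ∃ (g : ℝ → ℝ) (K : NNReal),
      (∀ y, HasDerivAt (Ftilde C h δ) (g y) y) ∧ LipschitzWith K g ∧
      (∀ y, 0 ≤ g y ∧ g y ≤ h (-δ)) := by
  set a := deriv C 0 with ha_def
  have haneg : a < 0 := hC'0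
  have hδa : a ≤ -δ := by linarith
  have hδneg : -δ < 0 := by linarith
  -- regularity of C
  have hCdiff : Differentiable ℝ C := hC2.differentiable (by norm_num)
  have hC2' : ContDiff ℝ (1 + 1) C := by norm_num; exact hC2
  have hC1' : ContDiff ℝ 1 (deriv C) := (contDiff_succ_iff_deriv.mp hC2').2.2
  have hC'diff : Differentiable ℝ (deriv C) := hC1'.differentiable one_ne_zero
  have hC'cont : Continuous (deriv C) := hC'diff.continuous
  have hC''cont : Continuous (deriv (deriv C)) := by
    have : ContDiff ℝ (0 + 1) (deriv C) := by norm_num; exact hC1'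
    exact ((contDiff_succ_iff_deriv.mp this).2.2).continuous
  -- strict monotonicity of C'
  have sC' : StrictMonoOn (deriv C) (Ici (0 : ℝ)) := by
    apply strictMonoOn_of_deriv_pos (convex_Ici 0) hC'cont.continuousOn
    intro x hx
    rw [interior_Ici] at hx
    exact hC'' x (le_of_lt hx)
  -- values of h
  have hmemh : ∀ y ∈ Icc a (-δ), 0 ≤ h y ∧ deriv C (h y) = y := fun y hy =>
    hinv₂ y hy.1 (lt_of_le_of_lt hy.2 hδneg)
  have hmono : ∀ y ∈ Icc a (-δ), ∀ y' ∈ Icc a (-δ), y ≤ y' → h y ≤ h y' := by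
    intro y hy y' hy' hle
    by_contra hc
    push_neg at hc
    have := sC' (hmemh y' hy').1 (hmemh y hy).1 hc
    rw [(hmemh y hy).2, (hmemh y' hy').2] at this
    linarith
  set M := h (-δ) with hM_def
  have hMmem : 0 ≤ M ∧ deriv C M = -δ := hmemh (-δ) ⟨hδa, le_rfl⟩
  have hrange : ∀ y ∈ Icc a (-δ), h y ∈ Icc 0 M := fun y hy =>
    ⟨(hmemh y hy).1, hmono y hy (-δ) ⟨hδa, le_rfl⟩ hy.2⟩
  -- lower bound on C'' on [0, M]
  obtain ⟨u₁, hu₁, hu₁min⟩ := (isCompact_Icc (a := (0:ℝ)) (b := M)).exists_isMinOn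
    (nonempty_Icc.mpr hMmem.1) hC''cont.continuousOn
  set m := deriv (deriv C) u₁ with hm_def
  have hm0 : 0 < m := hC'' u₁ hu₁.1
  have hmlb : ∀ u ∈ Icc 0 M, m ≤ deriv (deriv C) u := fun u hu => hu₁min hu
  -- C' expands by factor m on [0, M]
  have hC'exp : ∀ u ∈ Icc (0:ℝ) M, ∀ u' ∈ Icc (0:ℝ) M, u ≤ u' →
      m * (u' - u) ≤ deriv C u' - deriv C u := by
    intro u hu u' hu' hle
    rcases eq_or_lt_of_le hle with rfl | hlt
    · simp
    · obtain ⟨c, hc, hceq⟩ := exists_hasDerivAt_eq_slope (deriv C) (deriv (deriv C)) hlt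
        hC'cont.continuousOn (fun x _ => hC'diff.differentiableAt.hasDerivAt)
      have hcm : m ≤ deriv (deriv C) c :=
        hmlb c ⟨le_trans hu.1 (le_of_lt hc.1), le_trans (le_of_lt hc.2) hu'.2⟩
      rw [hceq, le_div_iff₀ (by linarith)] at hcm
      linarith
  -- Lipschitz bound for h on [a, -δ]
  have hhlip : ∀ y ∈ Icc a (-δ), ∀ y' ∈ Icc a (-δ), |h y - h y'| ≤ (1/m) * |y - y'| := by
    have key : ∀ y ∈ Icc a (-δ), ∀ y' ∈ Icc a (-δ), y ≤ y' →
        |h y - h y'| ≤ (1/m) * |y - y'| := by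
      intro y hy y' hy' hle
      have h1 := hC'exp (h y) (hrange y hy) (h y') (hrange y' hy')
        (hmono y hy y' hy' hle)
      rw [(hmemh y hy).2, (hmemh y' hy').2] at h1
      have h2 := hmono y hy y' hy' hle
      rw [abs_of_nonpos (by linarith), abs_of_nonpos (by linarith)]
      rw [div_mul_eq_mul_div, le_div_iff₀ hm0]
      nlinarith
    intro y hy y' hy'
    rcases le_total y y' with hle | hle
    · exact key y hy y' hy' hle
    · rw [abs_sub_comm (h y), abs_sub_comm y]
      exact key y' hy' y hy hle
  -- the candidate derivative g
  set clamp : ℝ → ℝ := fun y => max a (min y (-δ)) with hclamp_def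
  set g : ℝ → ℝ := fun y => h (clamp y) with hg_def
  have hclampmem : ∀ y, clamp y ∈ Icc a (-δ) :=
    fun y => ⟨le_max_left _ _, max_le hδa (min_le_right _ _)⟩
  have hgmem : ∀ y, 0 ≤ g y ∧ g y ≤ M := fun y => by
    have := hrange _ (hclampmem y)
    exact ⟨this.1, this.2⟩
  have hglip : ∀ y y', |g y - g y'| ≤ (1/m) * |y - y'| := by
    intro y y'
    calc |g y - g y'| ≤ (1/m) * |clamp y - clamp y'| :=
          hhlip _ (hclampmem y) _ (hclampmem y')
      _ ≤ (1/m) * |y - y'| := by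
          have := clamp_lip a (-δ) y y'
          have h1m : (0:ℝ) ≤ 1/m := by positivity
          exact mul_le_mul_of_nonneg_left this h1m
  have hclamp_le : ∀ y, y ≤ -δ → clamp y = max a y := fun y hy => by
    simp only [hclamp_def, min_eq_left hy]
  have hclamp_ge : ∀ y, -δ ≤ y → clamp y = -δ := fun y hy => by
    simp only [hclamp_def, min_eq_right hy, max_eq_right hδa]
  have hgδ : g (-δ) = M := by rw [hg_def]; simp only [hclamp_ge (-δ) le_rfl]; rfl
  have hha : h a = 0 := by
    have := hinv₁ 0 le_rfl
    rwa [← ha_def] at this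
  -- value of clamp below/above a
  have hclamp_y : ∀ y, a ≤ y → y ≤ -δ → clamp y = y := fun y h1 h2 => by
    rw [hclamp_le y h2, max_eq_right h1]
  have hclamp_a : ∀ y, y ≤ a → clamp y = a := fun y h1 => by
    rw [hclamp_le y (le_trans h1 hδa), max_eq_left h1]
  -- the supremum in LF is attained at g y, for y ≤ -δ
  have hgr : ∀ y ≤ -δ, IsGreatest ((fun u => u * y - C u) '' Ici (0:ℝ))
      (g y * y - C (g y)) := by
    intro y hy
    have hg0 : (0:ℝ) ≤ g y := (hgmem y).1
    constructor
    · exact ⟨g y, hg0, rfl⟩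
    · rintro z ⟨u, hu, rfl⟩
      simp only [mem_Ici] at hu
      have hψ : ∀ t : ℝ, HasDerivAt (fun s => s * y - C s) (y - deriv C t) t :=
        fun t => by
          have h1 := ((hasDerivAt_id' t).mul_const y).sub hCdiff.differentiableAt.hasDerivAt
          rwa [one_mul] at h1
      have hψcont : Continuous fun s : ℝ => s * y - C s :=
        (continuous_id.mul continuous_const).sub hCdiff.continuous
      have hψdiff : Differentiable ℝ fun s : ℝ => s * y - C s :=
        fun t => ((hψ t).differentiableAt)
      have hψderiv : ∀ t : ℝ, deriv (fun s : ℝ => s * y - C s) t = y - deriv C t :=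
        fun t => (hψ t).deriv
      show u * y - C u ≤ g y * y - C (g y)
      rcases le_total u (g y) with hcase | hcase
      · -- monotone on [u, g y]
        rcases le_total a y with hay | hay
        · have hCg : deriv C (g y) = y := by
            rw [hg_def]; simp only [hclamp_y y hay hy]
            exact (hmemh y ⟨hay, hy⟩).2
          have hmono2 : MonotoneOn (fun s : ℝ => s * y - C s) (Icc u (g y)) := by
            apply monotoneOn_of_deriv_nonneg (convex_Icc _ _) hψcont.continuousOn
              hψdiff.differentiableOn
            intro t ht
            rw [interior_Icc] at ht
            rw [hψderiv]
            have ht0 : (0:ℝ) ≤ t := le_trans hu (le_of_lt ht.1)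
            have := sC' (mem_Ici.mpr ht0) (mem_Ici.mpr hg0) ht.2
            rw [hCg] at this
            linarith
          exact hmono2 (left_mem_Icc.mpr hcase) (right_mem_Icc.mpr hcase) hcase
        · -- y ≤ a : g y = 0 and u = 0
          have hg0' : g y = 0 := by
            rw [hg_def]; simp only [hclamp_a y hay]; exact hha
          have hu0 : u = 0 := le_antisymm (hg0' ▸ hcase) hu
          rw [hu0, hg0']
      · -- antitone on [g y, u]
        have hkey : y ≤ deriv C (g y) := by
          rcases le_total a y with hay | hay
          · have : deriv C (g y) = y := by
              rw [hg_def]; simp only [hclamp_y y hay hy]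
              exact (hmemh y ⟨hay, hy⟩).2
            linarith [this.ge]
          · have : g y = 0 := by
              rw [hg_def]; simp only [hclamp_a y hay]; exact hha
            rw [this, ← ha_def]
            exact hay
        have hanti : AntitoneOn (fun s : ℝ => s * y - C s) (Icc (g y) u) := by
          apply antitoneOn_of_deriv_nonpos (convex_Icc _ _) hψcont.continuousOn
            hψdiff.differentiableOn
          intro t ht
          rw [interior_Icc] at ht
          rw [hψderiv]
          have := (sC'.monotoneOn) (mem_Ici.mpr hg0)
            (mem_Ici.mpr (le_trans hg0 (le_of_lt ht.1))) (le_of_lt ht.1)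
          linarith
        exact hanti (left_mem_Icc.mpr hcase) (right_mem_Icc.mpr hcase) hcase
  -- formula for LF at y ≤ -δ
  have hLF : ∀ y ≤ -δ, LF C y = g y * y - C (g y) := fun y hy =>
    (hgr y hy).csSup_eq
  -- subgradient inequality for LF
  have hsub : ∀ y ≤ -δ, ∀ y' ≤ -δ, LF C y + g y * (y' - y) ≤ LF C y' := by
    intro y hy y' hy'
    have hmem' : g y * y' - C (g y) ∈ (fun u => u * y' - C u) '' Ici (0:ℝ) :=
      ⟨g y, (hgmem y).1, rfl⟩
    have := le_csSup (hgr y' hy').bddAbove hmem'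
    rw [show sSup ((fun u => u * y' - C u) '' Ici (0:ℝ)) = LF C y' from rfl] at this
    rw [hLF y hy]
    linarith
  have hgy_ge : ∀ y, -δ ≤ y → g y = M := fun y hy => by
    rw [hg_def]; simp only [hclamp_ge y hy]; rfl
  -- global subgradient inequality for Ftilde
  have hS : ∀ y₁ y₂, Ftilde C h δ y₁ + g y₁ * (y₂ - y₁) ≤ Ftilde C h δ y₂ := by
    intro y₁ y₂
    by_cases h₁ : y₁ ≤ -δ <;> by_cases h₂ : y₂ ≤ -δ <;>
      simp only [Ftilde, if_pos, if_neg, h₁, h₂, if_true, if_false]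
    · exact hsub y₁ h₁ y₂ h₂
    · push_neg at h₂
      have e1 := hsub y₁ h₁ (-δ) le_rfl
      have e2 : g y₁ * (y₂ + δ) ≤ M * (y₂ + δ) :=
        mul_le_mul_of_nonneg_right (hgmem y₁).2 (by linarith)
      have e3 : g y₁ * (y₂ - y₁) = g y₁ * (-δ - y₁) + g y₁ * (y₂ + δ) := by ring
      linarith
    · push_neg at h₁
      have hgy₁ : g y₁ = M := hgy_ge y₁ (le_of_lt h₁)
      have e1 := hsub (-δ) le_rfl y₂ h₂
      rw [hgδ] at e1
      have e3 : M * (y₁ + δ) + M * (y₂ - y₁) = M * (y₂ - -δ) := by ring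
      rw [hgy₁]
      linarith
    · push_neg at h₁
      have hgy₁ : g y₁ = M := hgy_ge y₁ (le_of_lt h₁)
      rw [hgy₁]
      have e3 : M * (y₁ + δ) + M * (y₂ - y₁) = M * (y₂ + δ) := by ring
      linarith
  -- quadratic remainder bound
  have hquad : ∀ y₀ y, |Ftilde C h δ y - Ftilde C h δ y₀ - g y₀ * (y - y₀)|
      ≤ (1/m) * (y - y₀)^2 := by
    intro y₀ y
    have e1 := hS y₀ y
    have e2 := hS y y₀
    have e3 : (g y - g y₀) * (y - y₀) ≤ |g y - g y₀| * |y - y₀| := by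
      rw [← abs_mul]; exact le_abs_self _
    have e4 : |g y - g y₀| * |y - y₀| ≤ ((1/m) * |y - y₀|) * |y - y₀| :=
      mul_le_mul_of_nonneg_right (hglip y y₀) (abs_nonneg _)
    have e5 : ((1/m) * |y - y₀|) * |y - y₀| = (1/m) * (y - y₀)^2 := by
      rw [mul_assoc, ← abs_mul, ← sq, abs_of_nonneg (sq_nonneg _)]
    have e6 : (0:ℝ) ≤ (1/m) * (y - y₀)^2 := by positivity
    rw [abs_le]
    constructor
    · nlinarith
    · nlinarith
  -- Ftilde has derivative g everywhere
  have hder : ∀ y₀, HasDerivAt (Ftilde C h δ) (g y₀) y₀ := by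
    intro y₀
    rw [hasDerivAt_iff_isLittleO, Asymptotics.isLittleO_iff]
    intro c hc
    rw [Metric.eventually_nhds_iff]
    refine ⟨c * m, by positivity, fun y hy => ?_⟩
    rw [Real.dist_eq] at hy
    have h1 := hquad y₀ y
    have h2 : (y - y₀)^2 = |y - y₀| * |y - y₀| := by
      rw [← abs_mul, ← sq, abs_of_nonneg (sq_nonneg _)]
    have h3 : (1/m) * (y - y₀)^2 ≤ c * |y - y₀| := by
      rw [h2]
      have habs : (0:ℝ) ≤ |y - y₀| := abs_nonneg _
      have : (1/m) * |y - y₀| ≤ c := by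
        rw [div_mul_eq_mul_div, one_mul, div_le_iff₀ hm0]
        linarith [hy]
      nlinarith
    calc ‖Ftilde C h δ y - Ftilde C h δ y₀ - (y - y₀) • g y₀‖
        = |Ftilde C h δ y - Ftilde C h δ y₀ - g y₀ * (y - y₀)| := by
          rw [smul_eq_mul, Real.norm_eq_abs, mul_comm]
      _ ≤ (1/m) * (y - y₀)^2 := h1
      _ ≤ c * |y - y₀| := h3
      _ = c * ‖y - y₀‖ := by rw [Real.norm_eq_abs]
  refine ⟨g, Real.toNNReal (1/m), hder, ?_, hgmem⟩
  apply LipschitzWith.of_dist_le_mul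
  intro x y
  rw [Real.dist_eq, Real.dist_eq, Real.coe_toNNReal _ (by positivity)]
  exact hglip x y

namespace ODEwork

variable (g : ℝ → ℝ) (b θ c1 : ℝ)

/-- The first-order system vector field for the scalar ODE. -/
noncomputable def vf : ℝ → ℝ × ℝ → ℝ × ℝ := fun t x =>
  (x.2, b * (g x.1 * x.2 + θ * t * x.2 + c1 * x.1))

variable {g b θ c1}

section basic

variable {K : NNReal} {M : ℝ}
variable (hgK : LipschitzWith K g) (hgM : ∀ y, |g y| ≤ M)
variable (hb : 0 ≤ b) (hθ : 0 ≤ θ) (hc1 : 0 ≤ c1) (hM : 0 ≤ M)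

/-- shorthand for the linear growth constant on `[-T, T]`. -/
noncomputable def κ (M b θ c1 T : ℝ) : ℝ := max 1 (b * (M + θ * T + c1))

lemma κ_ge_one {M b θ c1 T : ℝ} : 1 ≤ κ M b θ c1 T := le_max_left _ _

lemma κ_pos {M b θ c1 T : ℝ} : 0 < κ M b θ c1 T := lt_of_lt_of_le one_pos κ_ge_one

include hgM hb hθ hc1 hM in
lemma vf_norm_le {T : ℝ} (t : ℝ) (x : ℝ × ℝ) (ht : |t| ≤ T) :
    ‖vf g b θ c1 t x‖ ≤ κ M b θ c1 T * ‖x‖ := by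
  have hx1 : |x.1| ≤ ‖x‖ := by
    rw [Prod.norm_def]; exact le_max_of_le_left (le_of_eq (Real.norm_eq_abs _).symm)
  have hx2 : |x.2| ≤ ‖x‖ := by
    rw [Prod.norm_def]; exact le_max_of_le_right (le_of_eq (Real.norm_eq_abs _).symm)
  have hxn : 0 ≤ ‖x‖ := norm_nonneg _
  have hT : 0 ≤ T := le_trans (abs_nonneg t) ht
  rw [vf, Prod.norm_def]
  apply max_le
  · rw [Real.norm_eq_abs]
    calc |x.2| ≤ 1 * ‖x‖ := by rwa [one_mul]
      _ ≤ κ M b θ c1 T * ‖x‖ := mul_le_mul_of_nonneg_right κ_ge_one hxn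
  · rw [Real.norm_eq_abs]
    have e1 : |g x.1 * x.2| ≤ M * ‖x‖ := by
      rw [abs_mul]
      exact mul_le_mul (hgM x.1) hx2 (abs_nonneg _) hM
    have e2 : |θ * t * x.2| ≤ θ * T * ‖x‖ := by
      rw [abs_mul, abs_mul, abs_of_nonneg hθ]
      exact mul_le_mul (mul_le_mul_of_nonneg_left ht hθ) hx2 (abs_nonneg _)
        (by positivity)
    have e3 : |c1 * x.1| ≤ c1 * ‖x‖ := by
      rw [abs_mul, abs_of_nonneg hc1]
      exact mul_le_mul_of_nonneg_left hx1 hc1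
    calc |b * (g x.1 * x.2 + θ * t * x.2 + c1 * x.1)|
        = b * |g x.1 * x.2 + θ * t * x.2 + c1 * x.1| := by
          rw [abs_mul, abs_of_nonneg hb]
      _ ≤ b * (M * ‖x‖ + θ * T * ‖x‖ + c1 * ‖x‖) := by
          apply mul_le_mul_of_nonneg_left _ hb
          calc |g x.1 * x.2 + θ * t * x.2 + c1 * x.1|
              ≤ |g x.1 * x.2 + θ * t * x.2| + |c1 * x.1| := abs_add_le _ _
            _ ≤ |g x.1 * x.2| + |θ * t * x.2| + |c1 * x.1| := by
                linarith [abs_add_le (g x.1 * x.2) (θ * t * x.2)]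
            _ ≤ M * ‖x‖ + θ * T * ‖x‖ + c1 * ‖x‖ := by linarith
      _ = (b * (M + θ * T + c1)) * ‖x‖ := by ring
      _ ≤ κ M b θ c1 T * ‖x‖ :=
          mul_le_mul_of_nonneg_right (le_max_right _ _) hxn

/-- Lipschitz constant of the vector field on a centered ball of radius `ρ`, times `[-T,T]`. -/
noncomputable def Lc (M b θ c1 : ℝ) (K : NNReal) (T ρ : ℝ) : NNReal :=
  Real.toNNReal (max 1 (b * (M + θ * T + c1 + K * ρ)))

include hgK hgM hb hθ hc1 hM in
lemma vf_lipschitz {T ρ : ℝ} (t : ℝ) (ht : |t| ≤ T) (hρ : 0 ≤ ρ) :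
    LipschitzOnWith (Lc M b θ c1 K T ρ) (vf g b θ c1 t) (Metric.closedBall 0 ρ) := by
  rw [lipschitzOnWith_iff_dist_le_mul]
  intro x hx y hy
  have hyρ : ‖y‖ ≤ ρ := by simpa [Metric.mem_closedBall, dist_zero_right] using hy
  have hy2 : |y.2| ≤ ρ := by
    refine le_trans ?_ hyρ
    rw [Prod.norm_def]; exact le_max_of_le_right (le_of_eq (Real.norm_eq_abs _).symm)
  set d := dist x y with hd_def
  have hd0 : 0 ≤ d := dist_nonneg
  have hd1 : |x.1 - y.1| ≤ d := by
    rw [hd_def, Prod.dist_eq]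
    exact le_max_of_le_left (le_of_eq (Real.dist_eq _ _).symm)
  have hd2 : |x.2 - y.2| ≤ d := by
    rw [hd_def, Prod.dist_eq]
    exact le_max_of_le_right (le_of_eq (Real.dist_eq _ _).symm)
  have hgd : |g x.1 - g y.1| ≤ (K : ℝ) * d := by
    have := hgK.dist_le_mul x.1 y.1
    rw [Real.dist_eq, Real.dist_eq] at this
    exact le_trans this (mul_le_mul_of_nonneg_left hd1 K.coe_nonneg)
  have hLc : max 1 (b * (M + θ * T + c1 + K * ρ)) ≤ (Lc M b θ c1 K T ρ : ℝ) := by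
    rw [Lc, Real.coe_toNNReal _ (le_trans zero_le_one (le_max_left _ _))]
  have hLc1 : (1:ℝ) ≤ (Lc M b θ c1 K T ρ : ℝ) := le_trans (le_max_left _ _) hLc
  have hT : 0 ≤ T := le_trans (abs_nonneg t) ht
  rw [vf, vf, Prod.dist_eq]
  apply max_le
  · rw [Real.dist_eq]
    calc |x.2 - y.2| ≤ 1 * d := by rwa [one_mul]
      _ ≤ (Lc M b θ c1 K T ρ : ℝ) * d := mul_le_mul_of_nonneg_right hLc1 hd0
  · rw [Real.dist_eq]
    have key : |g x.1 * x.2 - g y.1 * y.2| ≤ (M + K * ρ) * d := by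
      have e : g x.1 * x.2 - g y.1 * y.2
          = g x.1 * (x.2 - y.2) + (g x.1 - g y.1) * y.2 := by ring
      rw [e]
      calc |g x.1 * (x.2 - y.2) + (g x.1 - g y.1) * y.2|
          ≤ |g x.1 * (x.2 - y.2)| + |(g x.1 - g y.1) * y.2| := abs_add_le _ _
        _ ≤ M * d + ((K:ℝ) * d) * ρ := by
            rw [abs_mul, abs_mul]
            have b1 : |g x.1| * |x.2 - y.2| ≤ M * d :=
              mul_le_mul (hgM x.1) hd2 (abs_nonneg _) hM
            have b2 : |g x.1 - g y.1| * |y.2| ≤ ((K:ℝ) * d) * ρ :=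
              mul_le_mul hgd hy2 (abs_nonneg _) (mul_nonneg K.coe_nonneg hd0)
            linarith
        _ = (M + K * ρ) * d := by ring
    have e2 : |θ * t * (x.2 - y.2)| ≤ θ * T * d := by
      rw [abs_mul, abs_mul, abs_of_nonneg hθ]
      exact mul_le_mul (mul_le_mul_of_nonneg_left ht hθ) hd2 (abs_nonneg _)
        (mul_nonneg hθ hT)
    have e3 : |c1 * (x.1 - y.1)| ≤ c1 * d := by
      rw [abs_mul, abs_of_nonneg hc1]
      exact mul_le_mul_of_nonneg_left hd1 hc1
    have e : b * (g x.1 * x.2 + θ * t * x.2 + c1 * x.1)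
        - b * (g y.1 * y.2 + θ * t * y.2 + c1 * y.1)
        = b * ((g x.1 * x.2 - g y.1 * y.2) + θ * t * (x.2 - y.2) + c1 * (x.1 - y.1)) := by
      ring
    rw [e, abs_mul, abs_of_nonneg hb]
    calc b * |g x.1 * x.2 - g y.1 * y.2 + θ * t * (x.2 - y.2) + c1 * (x.1 - y.1)|
        ≤ b * ((M + K * ρ) * d + θ * T * d + c1 * d) := by
          apply mul_le_mul_of_nonneg_left _ hb
          calc |g x.1 * x.2 - g y.1 * y.2 + θ * t * (x.2 - y.2) + c1 * (x.1 - y.1)|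
              ≤ |g x.1 * x.2 - g y.1 * y.2 + θ * t * (x.2 - y.2)| + |c1 * (x.1 - y.1)| :=
                abs_add_le _ _
            _ ≤ |g x.1 * x.2 - g y.1 * y.2| + |θ * t * (x.2 - y.2)| + |c1 * (x.1 - y.1)| := by
                linarith [abs_add_le (g x.1 * x.2 - g y.1 * y.2) (θ * t * (x.2 - y.2))]
            _ ≤ (M + K * ρ) * d + θ * T * d + c1 * d := by linarith
      _ = (b * (M + θ * T + c1 + K * ρ)) * d := by ring
      _ ≤ (Lc M b θ c1 K T ρ : ℝ) * d :=
          mul_le_mul_of_nonneg_right (le_trans (le_max_right _ _) hLc) hd0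

include hgK in
lemma vf_cont_t (x : ℝ × ℝ) : Continuous (fun t : ℝ => vf g b θ c1 t x) := by
  apply Continuous.prodMk continuous_const
  fun_prop

include hgK hgM hb hθ hc1 hM in
/-- One Picard–Lindelöf step of uniform length. -/
lemma pl_step {T tl tr t₀ : ℝ} (x₀ : ℝ × ℝ) (hmem : t₀ ∈ Icc tl tr)
    (hsub : Icc tl tr ⊆ Icc (-T) T)
    (hτr : tr - t₀ ≤ 1 / (2 * κ M b θ c1 T))
    (hτl : t₀ - tl ≤ 1 / (2 * κ M b θ c1 T)) :
    ∃ Y : ℝ → ℝ × ℝ, Y t₀ = x₀ ∧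
      ∀ t ∈ Icc tl tr, HasDerivWithinAt Y (vf g b θ c1 t (Y t)) (Icc tl tr) t := by
  set κ' := κ M b θ c1 T with hκ'_def
  have hκ1 : (1:ℝ) ≤ κ' := κ_ge_one
  have hκ0 : (0:ℝ) < κ' := κ_pos
  set R : ℝ := ‖x₀‖ + 1 with hR_def
  have hR0 : (0:ℝ) ≤ R := by positivity
  set Cb : ℝ := κ' * (‖x₀‖ + R) with hCb_def
  set L : NNReal := Lc M b θ c1 K T (‖x₀‖ + R) with hL_def
  have habsT : ∀ t ∈ Icc tl tr, |t| ≤ T := by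
    intro t ht
    have := hsub ht
    rw [abs_le]; exact ⟨this.1, this.2⟩
  have hRc : ((Real.toNNReal R : NNReal) : ℝ) = R := Real.coe_toNNReal _ hR0
  have hCbc : ((Real.toNNReal Cb : NNReal) : ℝ) = Cb := Real.coe_toNNReal _ (by positivity)
  have hpl : IsPicardLindelof (vf g b θ c1) (⟨t₀, hmem⟩ : Icc tl tr) x₀ (Real.toNNReal R) 0
      (Real.toNNReal Cb) L := by
    constructor
    · intro t ht
      apply (vf_lipschitz hgK hgM hb hθ hc1 hM t (habsT t ht) (by positivity)).mono
      intro x hx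
      rw [Metric.mem_closedBall, hRc] at hx
      rw [Metric.mem_closedBall]
      calc dist x 0 ≤ dist x x₀ + dist x₀ 0 := dist_triangle _ _ _
        _ ≤ R + ‖x₀‖ := by
            rw [dist_zero_right]
            exact add_le_add hx le_rfl
        _ = ‖x₀‖ + R := by ring
    · intro x _
      exact (vf_cont_t hgK x).continuousOn
    · intro t ht x hx
      have hxb : ‖x‖ ≤ ‖x₀‖ + R := by
        rw [Metric.mem_closedBall, hRc] at hx
        calc ‖x‖ = dist x 0 := (dist_zero_right x).symm
          _ ≤ dist x x₀ + dist x₀ 0 := dist_triangle _ _ _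
          _ ≤ R + ‖x₀‖ := by rw [dist_zero_right]; exact add_le_add hx le_rfl
          _ = ‖x₀‖ + R := by ring
      rw [hCbc]
      calc ‖vf g b θ c1 t x‖ ≤ κ' * ‖x‖ :=
            vf_norm_le hgM hb hθ hc1 hM t x (habsT t ht)
        _ ≤ Cb := mul_le_mul_of_nonneg_left hxb (le_of_lt hκ0)
    · simp only [hCbc, hRc, NNReal.coe_zero, sub_zero]
      have hmax : max (tr - t₀) (t₀ - tl) ≤ 1 / (2 * κ') := max_le hτr hτl
      have hCb0 : 0 ≤ Cb := by positivity
      calc Cb * max (tr - t₀) (t₀ - tl) ≤ Cb * (1 / (2 * κ')) :=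
            mul_le_mul_of_nonneg_left hmax hCb0
        _ = (‖x₀‖ + R) / 2 := by
            rw [hCb_def]; field_simp
        _ ≤ R := by
            rw [hR_def]
            have := norm_nonneg x₀
            linarith
  exact IsPicardLindelof.exists_eq_forall_mem_Icc_hasDerivWithinAt₀ hpl

end basic

/-- Concatenation of two solutions at a junction point. -/
lemma concat {v : ℝ → ℝ × ℝ → ℝ × ℝ} {A B c : ℝ} {X Y : ℝ → ℝ × ℝ}
    (hAc : A ≤ c) (hcB : c ≤ B)
    (hX : ∀ t ∈ Icc A c, HasDerivWithinAt X (v t (X t)) (Icc A c) t)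
    (hY : ∀ t ∈ Icc c B, HasDerivWithinAt Y (v t (Y t)) (Icc c B) t)
    (hXY : X c = Y c) :
    ∃ Z : ℝ → ℝ × ℝ, (∀ t, t ≤ c → Z t = X t) ∧ (∀ t, c < t → Z t = Y t) ∧
      ∀ t ∈ Icc A B, HasDerivWithinAt Z (v t (Z t)) (Icc A B) t := by
  classical
  refine ⟨fun t => if t ≤ c then X t else Y t, fun t ht => if_pos ht,
    fun t ht => if_neg (not_le.mpr ht), ?_⟩
  set Z : ℝ → ℝ × ℝ := fun t => if t ≤ c then X t else Y t with hZ_def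
  intro t ht
  rcases lt_trichotomy t c with htc | htc | htc
  · -- t < c : Z agrees with X near t
    have hmem : Icc A c ∈ nhdsWithin t (Icc A B) :=
      Filter.mem_of_superset (inter_mem_nhdsWithin (Icc A B) (Iio_mem_nhds htc))
        (fun s hs => ⟨hs.1.1, le_of_lt hs.2⟩)
    have hXd : HasDerivWithinAt X (v t (X t)) (Icc A B) t :=
      (hX t ⟨ht.1, le_of_lt htc⟩).mono_of_mem_nhdsWithin hmem
    have hev : Z =ᶠ[nhdsWithin t (Icc A B)] X := by
      apply Filter.EventuallyEq.filter_mono _ nhdsWithin_le_nhds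
      filter_upwards [Iio_mem_nhds htc] with s hs
      exact if_pos (le_of_lt (mem_Iio.mp hs))
    have hZt : Z t = X t := if_pos (le_of_lt htc)
    rw [hZt]
    exact hXd.congr_of_eventuallyEq hev hZt
  · -- t = c : combine the two one-sided derivatives
    subst htc
    have hZt : Z t = X t := if_pos le_rfl
    have hleft : HasDerivWithinAt Z (v t (Z t)) (Icc A t) t := by
      rw [hZt]
      exact (hX t ⟨ht.1, le_rfl⟩).congr (fun s hs => if_pos hs.2) hZt
    have hright : HasDerivWithinAt Z (v t (Z t)) (Icc t B) t := by
      have hvv : v t (Z t) = v t (Y t) := by rw [hZt, hXY]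
      rw [hvv]
      apply (hY t ⟨le_rfl, ht.2⟩).congr _ (by rw [hZt, hXY])
      intro s hs
      rcases eq_or_lt_of_le hs.1 with hsc | hsc
      · rw [hZ_def]; simp only [← hsc, if_pos le_rfl]; exact hXY
      · exact if_neg (not_le.mpr hsc)
    have := hleft.union hright
    rwa [Icc_union_Icc_eq_Icc ht.1 ht.2] at this
  · -- c < t : Z agrees with Y near t
    have hmem : Icc c B ∈ nhdsWithin t (Icc A B) :=
      Filter.mem_of_superset (inter_mem_nhdsWithin (Icc A B) (Ioi_mem_nhds htc))
        (fun s hs => ⟨le_of_lt hs.2, hs.1.2⟩)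
    have hYd : HasDerivWithinAt Y (v t (Y t)) (Icc A B) t :=
      (hY t ⟨le_of_lt htc, ht.2⟩).mono_of_mem_nhdsWithin hmem
    have hev : Z =ᶠ[nhdsWithin t (Icc A B)] Y := by
      apply Filter.EventuallyEq.filter_mono _ nhdsWithin_le_nhds
      filter_upwards [Ioi_mem_nhds htc] with s hs
      exact if_neg (not_le.mpr (mem_Ioi.mp hs))
    have hZt : Z t = Y t := if_neg (not_le.mpr htc)
    rw [hZt]
    exact hYd.congr_of_eventuallyEq hev hZt

lemma hasDerivWithinAt_singleton' (f : ℝ → ℝ × ℝ) (f' : ℝ × ℝ) (x : ℝ) :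
    HasDerivWithinAt f f' {x} x := by
  rw [hasDerivWithinAt_iff_isLittleO, nhdsWithin_singleton]
  rw [Asymptotics.isLittleO_pure]
  simp

section existence

variable {K : NNReal} {M : ℝ}
variable (hgK : LipschitzWith K g) (hgM : ∀ y, |g y| ≤ M)
variable (hb : 0 ≤ b) (hθ : 0 ≤ θ) (hc1 : 0 ≤ c1) (hM : 0 ≤ M)

include hgK hgM hb hθ hc1 hM in
lemma exists_sol_Icc (init : ℝ × ℝ) (T : ℝ) (hT : 0 ≤ T) :
    ∃ X : ℝ → ℝ × ℝ, X 0 = init ∧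
      ∀ t ∈ Icc (-T) T, HasDerivWithinAt X (vf g b θ c1 t (X t)) (Icc (-T) T) t := by
  set κ' := κ M b θ c1 T with hκ'_def
  have hκ0 : (0:ℝ) < κ' := κ_pos
  set τ : ℝ := 1 / (2 * κ') with hτ_def
  have hτ0 : 0 < τ := by positivity
  set P : ℝ → Prop := fun s => ∃ X : ℝ → ℝ × ℝ, X 0 = init ∧
      ∀ t ∈ Icc (-s) s, HasDerivWithinAt X (vf g b θ c1 t (X t)) (Icc (-s) s) t
    with hP_def
  have main : ∀ k : ℕ, P (min ((k : ℝ) * τ) T) := by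
    intro k
    induction k with
    | zero =>
      have h0 : min ((0 : ℕ) * τ) T = 0 := by
        rw [Nat.cast_zero, zero_mul, min_eq_left hT]
      rw [h0]
      refine ⟨fun _ => init, rfl, ?_⟩
      intro t ht
      rw [neg_zero, Icc_self] at ht ⊢
      rw [mem_singleton_iff] at ht
      subst ht
      exact hasDerivWithinAt_singleton' _ _ _
    | succ k ih =>
      obtain ⟨X, hX0, hX⟩ := ih
      set s : ℝ := min ((k : ℝ) * τ) T with hs_def
      set s' : ℝ := min (((k : ℕ) + 1 : ℝ) * τ) T with hs'_def
      have hcast : ((k + 1 : ℕ) : ℝ) * τ = ((k : ℕ) + 1 : ℝ) * τ := by push_cast; ring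
      rw [hcast, ← hs'_def]
      have hk0 : (0:ℝ) ≤ (k : ℝ) * τ := by positivity
      have hs0 : 0 ≤ s := le_min hk0 hT
      have hss' : s ≤ s' := min_le_min (by nlinarith) le_rfl
      by_cases hcap : T ≤ (k : ℝ) * τ
      · have h1 : s = T := min_eq_right hcap
        have h2 : s' = T := min_eq_right (le_trans hcap (by nlinarith))
        rw [h2, ← h1]
        exact ⟨X, hX0, hX⟩
      · push_neg at hcap
        have hs_eq : s = (k : ℝ) * τ := min_eq_left (le_of_lt hcap)
        have hs'T : s' ≤ T := min_le_right _ _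
        have hstep : s' - s ≤ τ := by
          rw [hs_eq]
          have := min_le_left (((k : ℕ) + 1 : ℝ) * τ) T
          rw [← hs'_def] at this
          nlinarith
        have hsubR : Icc s s' ⊆ Icc (-T) T := fun t ht =>
          ⟨le_trans (by linarith) ht.1, le_trans ht.2 hs'T⟩
        -- extend to the right
        obtain ⟨Y, hY0, hY⟩ := pl_step hgK hgM hb hθ hc1 hM (X s)
          (left_mem_Icc.mpr hss') hsubR (by linarith) (by linarith)
        obtain ⟨Z₁, hZ₁X, hZ₁Y, hZ₁⟩ := concat (by linarith : -s ≤ s) hss' hX hY hY0.symm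
        have hZ₁0 : Z₁ 0 = init := by rw [hZ₁X 0 hs0, hX0]
        -- extend to the left
        have hsubL : Icc (-s') (-s) ⊆ Icc (-T) T := fun t ht =>
          ⟨le_trans (by linarith) ht.1, le_trans ht.2 (by linarith)⟩
        obtain ⟨Yl, hYl0, hYl⟩ := pl_step hgK hgM hb hθ hc1 hM (Z₁ (-s))
          (right_mem_Icc.mpr (by linarith)) hsubL (by linarith) (by linarith)
        obtain ⟨Z₂, hZ₂l, hZ₂r, hZ₂⟩ := concat (by linarith : -s' ≤ -s)
          (by linarith : -s ≤ s') hYl hZ₁ hYl0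
        refine ⟨Z₂, ?_, hZ₂⟩
        rcases eq_or_lt_of_le hs0 with h0 | h0
        · have hns : -s = 0 := by rw [← h0, neg_zero]
          rw [hZ₂l 0 (by rw [hns]), show (0:ℝ) = -s from hns.symm, hYl0, hZ₁X (-s) (by linarith)]
          rw [hns, hX0]
        · rw [hZ₂r 0 (by linarith), hZ₁0]
  obtain ⟨k, hk⟩ := exists_nat_ge (T / τ)
  have hkT : T ≤ (k : ℝ) * τ := by
    rw [div_le_iff₀ hτ0] at hk
    linarith
  have := main k
  rwa [min_eq_right hkT] at this

include hgK hgM hb hθ hc1 hM in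
/-- One-sided uniqueness on `[A, B]` (forward from `A`). -/
lemma uniq_right {A B : ℝ} {X Y : ℝ → ℝ × ℝ}
    (hXc : ContinuousOn X (Icc A B))
    (hX : ∀ t ∈ Ico A B, HasDerivWithinAt X (vf g b θ c1 t (X t)) (Ici t) t)
    (hYc : ContinuousOn Y (Icc A B))
    (hY : ∀ t ∈ Ico A B, HasDerivWithinAt Y (vf g b θ c1 t (Y t)) (Ici t) t)
    (hinit : X A = Y A) : EqOn X Y (Icc A B) := by
  classical
  set T : ℝ := max |A| |B| with hT_def
  obtain ⟨ρ₁, hρ₁⟩ := isCompact_Icc.exists_bound_of_continuousOn hXc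
  obtain ⟨ρ₂, hρ₂⟩ := isCompact_Icc.exists_bound_of_continuousOn hYc
  set ρ : ℝ := max (max ρ₁ ρ₂) 0 with hρ_def
  have hρ0 : 0 ≤ ρ := le_max_right _ _
  set sets : ℝ → Set (ℝ × ℝ) := fun t =>
    if t ∈ Icc A B then Metric.closedBall 0 ρ else ∅ with hsets_def
  have hv : ∀ t, LipschitzOnWith (Lc M b θ c1 K T ρ) (vf g b θ c1 t) (sets t) := by
    intro t
    by_cases hmem : t ∈ Icc A B
    · have habs : |t| ≤ T := by
        rw [abs_le]
        constructor
        · linarith [neg_abs_le A, le_max_left |A| |B|, hmem.1]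
        · linarith [le_abs_self B, le_max_right |A| |B|, hmem.2]
      simpa only [hsets_def, if_pos hmem] using
        vf_lipschitz hgK hgM hb hθ hc1 hM t habs hρ0
    · simpa only [hsets_def, if_neg hmem] using
        lipschitzOnWith_empty (Lc M b θ c1 K T ρ) (vf g b θ c1 t)
  have hfs : ∀ t ∈ Ico A B, X t ∈ sets t := by
    intro t ht
    simp only [hsets_def, if_pos (Ico_subset_Icc_self ht), Metric.mem_closedBall,
      dist_zero_right]
    exact le_trans (hρ₁ t (Ico_subset_Icc_self ht)) (le_trans (le_max_left _ _) (le_max_left _ _))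
  have hgs : ∀ t ∈ Ico A B, Y t ∈ sets t := by
    intro t ht
    simp only [hsets_def, if_pos (Ico_subset_Icc_self ht), Metric.mem_closedBall,
      dist_zero_right]
    exact le_trans (hρ₂ t (Ico_subset_Icc_self ht)) (le_trans (le_max_right _ _) (le_max_left _ _))
  exact ODE_solution_unique_of_mem_Icc_right (fun t _ => hv t) hXc hX hfs hYc hY hgs hinit

include hgK hgM hb hθ hc1 hM in
/-- Two-sided uniqueness on `[A, B]` from an interior initial time `t₀`. -/
lemma uniq_two_sided {A B t₀ : ℝ} {X Y : ℝ → ℝ × ℝ} (ht₀ : t₀ ∈ Ioo A B)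
    (hXc : ContinuousOn X (Icc A B))
    (hX : ∀ t ∈ Ioo A B, HasDerivAt X (vf g b θ c1 t (X t)) t)
    (hYc : ContinuousOn Y (Icc A B))
    (hY : ∀ t ∈ Ioo A B, HasDerivAt Y (vf g b θ c1 t (Y t)) t)
    (hinit : X t₀ = Y t₀) : EqOn X Y (Icc A B) := by
  classical
  set T : ℝ := max |A| |B| with hT_def
  obtain ⟨ρ₁, hρ₁⟩ := isCompact_Icc.exists_bound_of_continuousOn hXc
  obtain ⟨ρ₂, hρ₂⟩ := isCompact_Icc.exists_bound_of_continuousOn hYc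
  set ρ : ℝ := max (max ρ₁ ρ₂) 0 with hρ_def
  have hρ0 : 0 ≤ ρ := le_max_right _ _
  set sets : ℝ → Set (ℝ × ℝ) := fun t =>
    if t ∈ Icc A B then Metric.closedBall 0 ρ else ∅ with hsets_def
  have hv : ∀ t, LipschitzOnWith (Lc M b θ c1 K T ρ) (vf g b θ c1 t) (sets t) := by
    intro t
    by_cases hmem : t ∈ Icc A B
    · have habs : |t| ≤ T := by
        rw [abs_le]
        constructor
        · linarith [neg_abs_le A, le_max_left |A| |B|, hmem.1]
        · linarith [le_abs_self B, le_max_right |A| |B|, hmem.2]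
      simpa only [hsets_def, if_pos hmem] using
        vf_lipschitz hgK hgM hb hθ hc1 hM t habs hρ0
    · simpa only [hsets_def, if_neg hmem] using
        lipschitzOnWith_empty (Lc M b θ c1 K T ρ) (vf g b θ c1 t)
  have hfs : ∀ t ∈ Ioo A B, X t ∈ sets t := by
    intro t ht
    simp only [hsets_def, if_pos (Ioo_subset_Icc_self ht), Metric.mem_closedBall,
      dist_zero_right]
    exact le_trans (hρ₁ t (Ioo_subset_Icc_self ht)) (le_trans (le_max_left _ _) (le_max_left _ _))
  have hgs : ∀ t ∈ Ioo A B, Y t ∈ sets t := by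
    intro t ht
    simp only [hsets_def, if_pos (Ioo_subset_Icc_self ht), Metric.mem_closedBall,
      dist_zero_right]
    exact le_trans (hρ₂ t (Ioo_subset_Icc_self ht)) (le_trans (le_max_right _ _) (le_max_left _ _))
  exact ODE_solution_unique_of_mem_Icc (fun t _ => hv t) ht₀ hXc hX hfs hYc hY hgs hinit

include hgK hgM hb hθ hc1 hM in
/-- A global solution of the first-order system, with arbitrary initial value at `t = 0`. -/
lemma exists_global (init : ℝ × ℝ) :
    ∃ X : ℝ → ℝ × ℝ, X 0 = init ∧ ∀ t, HasDerivAt X (vf g b θ c1 t (X t)) t := by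
  have sol : ∀ n : ℕ, ∃ X : ℝ → ℝ × ℝ, X 0 = init ∧
      ∀ t ∈ Icc (-((n : ℝ) + 1)) ((n : ℝ) + 1),
        HasDerivWithinAt X (vf g b θ c1 t (X t)) (Icc (-((n : ℝ) + 1)) ((n : ℝ) + 1)) t :=
    fun n => exists_sol_Icc hgK hgM hb hθ hc1 hM init ((n : ℝ) + 1) (by positivity)
  choose Xf hXf0 hXf using sol
  have hXfc : ∀ n : ℕ, ContinuousOn (Xf n) (Icc (-((n : ℝ) + 1)) ((n : ℝ) + 1)) :=
    fun n t ht => ((hXf n t ht).continuousWithinAt)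
  have hXfd : ∀ (n : ℕ) (t : ℝ), t ∈ Ioo (-((n : ℝ) + 1)) ((n : ℝ) + 1) →
      HasDerivAt (Xf n) (vf g b θ c1 t (Xf n t)) t := by
    intro n t ht
    exact (hXf n t (Ioo_subset_Icc_self ht)).hasDerivAt (Icc_mem_nhds ht.1 ht.2)
  have agree : ∀ (nm n : ℕ), nm ≤ n →
      EqOn (Xf nm) (Xf n) (Icc (-((nm : ℝ) + 1)) ((nm : ℝ) + 1)) := by
    intro nm n hle
    have hcast : ((nm : ℝ) + 1) ≤ ((n : ℝ) + 1) := by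
      have : (nm : ℝ) ≤ n := Nat.cast_le.mpr hle
      linarith
    have hIoo : (0:ℝ) ∈ Ioo (-((nm : ℝ) + 1)) ((nm : ℝ) + 1) := by
      constructor <;> [linarith [Nat.cast_nonneg (α := ℝ) nm]; linarith [Nat.cast_nonneg (α := ℝ) nm]]
    apply uniq_two_sided hgK hgM hb hθ hc1 hM hIoo
      ((hXfc nm))
      (fun t ht => hXfd nm t ht)
      ((hXfc n).mono (Icc_subset_Icc (by linarith) hcast))
      (fun t ht => hXfd n t ⟨by linarith [ht.1], by linarith [ht.2]⟩)
      (by rw [hXf0 nm, hXf0 n])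
  refine ⟨fun t => Xf ⌊|t|⌋₊ t, ?_, ?_⟩
  · simp only [abs_zero, Nat.floor_zero]
    exact hXf0 0
  · intro t
    set N := ⌊|t|⌋₊ with hN_def
    have htN : |t| < (N : ℝ) + 1 := Nat.lt_floor_add_one _
    have htmem : t ∈ Ioo (-((N : ℝ) + 1)) ((N : ℝ) + 1) := by
      rw [mem_Ioo, ← abs_lt]
      exact htN
    have hev : (fun s => Xf ⌊|s|⌋₊ s) =ᶠ[nhds t] Xf N := by
      have hopen : IsOpen {s : ℝ | |s| < (N : ℝ) + 1} :=
        isOpen_lt continuous_abs continuous_const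
      filter_upwards [hopen.mem_nhds htN] with s hs
      have hs' : |s| < (N : ℝ) + 1 := hs
      have hsN : ⌊|s|⌋₊ ≤ N := by
        have h1 : |s| < ((N + 1 : ℕ) : ℝ) := by push_cast; exact hs'
        have := (Nat.floor_lt (abs_nonneg s)).mpr h1
        omega
      apply agree ⌊|s|⌋₊ N hsN
      have := Nat.lt_floor_add_one |s|
      constructor
      · linarith [neg_abs_le s]
      · linarith [le_abs_self s]
    have hdN : HasDerivAt (Xf N) (vf g b θ c1 t (Xf N t)) t := hXfd N t htmem
    have hval : (fun s => Xf ⌊|s|⌋₊ s) t = Xf N t := rfl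
    rw [show vf g b θ c1 t ((fun s => Xf ⌊|s|⌋₊ s) t) = vf g b θ c1 t (Xf N t) from by rw [hval]]
    exact (hev.hasDerivAt_iff).mpr hdN

end existence

end ODEwork


/-- For every `r ≥ 0` the `F̃`-ODE with initial slope `r` has a global solution on `[0,∞)`, and
any two solutions agree on `[0,∞)` (existence and uniqueness). -/
theorem statement6
    (C h : ℝ → ℝ) (σ θ α p δ : ℝ)
    (hσ : 0 < σ) (hθ : 0 < θ) (hα : 0 < α) (hp : 0 < p)
    (hC2 : ContDiff ℝ 2 C)
    (hCanti : AntitoneOn C (Set.Ici 0))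
    (hCconv : ConvexOn ℝ (Set.Ici 0) C)
    (hC0 : 0 < C 0)
    (hClim : Tendsto C atTop (nhds 0))
    (hC'' : ∀ u ≥ (0 : ℝ), 0 < deriv (deriv C) u)
    (hC'0 : deriv C 0 < 0)
    (hinv₁ : ∀ u ≥ (0 : ℝ), h (deriv C u) = u)
    (hinv₂ : ∀ y : ℝ, deriv C 0 ≤ y → y < 0 → 0 ≤ h y ∧ deriv C (h y) = y)
    (hδ0 : 0 < δ) (hδ : δ < min p (-deriv C 0)) :
    ∀ r ≥ (0 : ℝ),
      (∃ W : ℝ → ℝ, SolvesFtildeODE C h δ σ θ α p r W) ∧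
      (∀ W₁ W₂ : ℝ → ℝ, SolvesFtildeODE C h δ σ θ α p r W₁ →
        SolvesFtildeODE C h δ σ θ α p r W₂ → ∀ x ≥ (0 : ℝ), W₁ x = W₂ x) := by
  intro r hr
  classical
  -- Part I: the derivative of Ftilde
  obtain ⟨g, K, hder, hgK, hgmem⟩ := exists_deriv_Ftilde C h δ hC2 hC'' hC'0 hinv₁ hinv₂ hδ0
    (lt_of_lt_of_le hδ (min_le_right _ _))
  have derivF : deriv (Ftilde C h δ) = g := funext fun y => (hder y).deriv
  set M : ℝ := h (-δ) with hM_def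
  have hM0 : 0 ≤ M := le_trans (hgmem 0).1 (hgmem 0).2
  have hgM : ∀ y, |g y| ≤ M := fun y =>
    abs_le.mpr ⟨by linarith [(hgmem y).1], (hgmem y).2⟩
  have hσ2 : (σ:ℝ) ^ 2 ≠ 0 := pow_ne_zero 2 (ne_of_gt hσ)
  set b : ℝ := 2 / σ ^ 2 with hb_def
  have hb : 0 ≤ b := by positivity
  set c1 : ℝ := θ + α with hc1_def
  have hc1 : 0 ≤ c1 := by positivity
  constructor
  · -- Existence
    obtain ⟨X, hX0, hX⟩ := ODEwork.exists_global hgK hgM hb hθ.le hc1 hM0 (-p, r)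
    set W : ℝ → ℝ := fun t => (X t).1 with hW_def
    set Z : ℝ → ℝ := fun t => (X t).2 with hZ_def
    have hW' : ∀ t, HasDerivAt W (Z t) t := by
      intro t
      have := (ContinuousLinearMap.fst ℝ ℝ ℝ).hasFDerivAt.comp_hasDerivAt t (hX t)
      exact this
    have hZ' : ∀ t, HasDerivAt Z (b * (g (W t) * Z t + θ * t * Z t + c1 * W t)) t := by
      intro t
      have := (ContinuousLinearMap.snd ℝ ℝ ℝ).hasFDerivAt.comp_hasDerivAt t (hX t)
      exact this
    have hdW : deriv W = Z := funext fun t => (hW' t).deriv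
    have hdZ : ∀ t, deriv Z t = b * (g (W t) * Z t + θ * t * Z t + c1 * W t) :=
      fun t => (hZ' t).deriv
    have hWd : Differentiable ℝ W := fun t => (hW' t).differentiableAt
    have hZd : Differentiable ℝ Z := fun t => (hZ' t).differentiableAt
    have hgc : Continuous g := hgK.continuous
    have hdZc : Continuous (deriv Z) := by
      have he : deriv Z = fun t => b * (g (W t) * Z t + θ * t * Z t + c1 * W t) :=
        funext hdZ
      rw [he]
      exact continuous_const.mul ((((hgc.comp hWd.continuous).mul hZd.continuous).add
        (((continuous_const.mul continuous_id).mul hZd.continuous))).add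
        (continuous_const.mul hWd.continuous))
    have hZ1 : ContDiff ℝ 1 Z := by
      rw [show ((1 : WithTop ℕ∞)) = 0 + 1 from by norm_num, contDiff_succ_iff_deriv]
      exact ⟨hZd, by simp, contDiff_zero.mpr hdZc⟩
    have hW2 : ContDiff ℝ 2 W := by
      rw [show ((2 : WithTop ℕ∞)) = 1 + 1 from by norm_num, contDiff_succ_iff_deriv]
      exact ⟨hWd, by simp, by rw [hdW]; exact hZ1⟩
    refine ⟨W, hW2, ?_, ?_, ?_⟩
    · show (X 0).1 = -p
      rw [hX0]
    · rw [hdW]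
      show (X 0).2 = r
      rw [hX0]
    · intro x _
      rw [derivF, hdW, hdZ x]
      rw [hb_def, hc1_def]
      field_simp
      ring
  · -- Uniqueness
    intro W₁ W₂ h₁ h₂ x hx
    obtain ⟨hW₁2, hW₁0, hW₁d0, hW₁eq⟩ := h₁
    obtain ⟨hW₂2, hW₂0, hW₂d0, hW₂eq⟩ := h₂
    have key : ∀ (W' : ℝ → ℝ), ContDiff ℝ 2 W' → W' 0 = -p → deriv W' 0 = r →
        (∀ t ≥ (0:ℝ), σ ^ 2 / 2 * deriv (deriv W') t - deriv (Ftilde C h δ) (W' t) * deriv W' t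
          - θ * t * deriv W' t - (θ + α) * W' t = 0) →
        (fun t => (W' t, deriv W' t)) 0 = (-p, r) ∧
        ∀ t ∈ Ico 0 x, HasDerivWithinAt (fun t => (W' t, deriv W' t))
          (ODEwork.vf g b θ c1 t ((fun t => (W' t, deriv W' t)) t)) (Ici t) t := by
      intro W' hW'2 hW'0 hW'd0 hW'eq
      have hd : Differentiable ℝ W' := hW'2.differentiable (by norm_num)
      have h2' : ContDiff ℝ (1 + 1) W' := by norm_num; exact hW'2
      have hc' : ContDiff ℝ 1 (deriv W') := (contDiff_succ_iff_deriv.mp h2').2.2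
      have hd' : Differentiable ℝ (deriv W') := hc'.differentiable one_ne_zero
      refine ⟨by rw [Prod.mk.injEq]; exact ⟨hW'0, hW'd0⟩, ?_⟩
      intro t ht
      have hD : HasDerivAt (fun s => (W' s, deriv W' s)) (deriv W' t, deriv (deriv W') t) t :=
        (hd t).hasDerivAt.prodMk (hd' t).hasDerivAt
      have heq : deriv (deriv W') t
          = b * (g (W' t) * deriv W' t + θ * t * deriv W' t + c1 * W' t) := by
        have e := hW'eq t ht.1
        rw [derivF] at e
        rw [hb_def, hc1_def]
        field_simp
        linarith [e]
      have : (deriv W' t, deriv (deriv W') t)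
          = ODEwork.vf g b θ c1 t (W' t, deriv W' t) := by
        rw [ODEwork.vf, heq]
      rw [this] at hD
      exact hD.hasDerivWithinAt
    obtain ⟨hinit₁, hder₁⟩ := key W₁ hW₁2 hW₁0 hW₁d0 hW₁eq
    obtain ⟨hinit₂, hder₂⟩ := key W₂ hW₂2 hW₂0 hW₂d0 hW₂eq
    have hcont₁ : ContinuousOn (fun t => (W₁ t, deriv W₁ t)) (Icc 0 x) := by
      apply Continuous.continuousOn
      have hd : Differentiable ℝ W₁ := hW₁2.differentiable (by norm_num)
      have h2' : ContDiff ℝ (1 + 1) W₁ := by norm_num; exact hW₁2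
      have hc' : ContDiff ℝ 1 (deriv W₁) := (contDiff_succ_iff_deriv.mp h2').2.2
      exact hd.continuous.prodMk (hc'.differentiable one_ne_zero).continuous
    have hcont₂ : ContinuousOn (fun t => (W₂ t, deriv W₂ t)) (Icc 0 x) := by
      apply Continuous.continuousOn
      have hd : Differentiable ℝ W₂ := hW₂2.differentiable (by norm_num)
      have h2' : ContDiff ℝ (1 + 1) W₂ := by norm_num; exact hW₂2
      have hc' : ContDiff ℝ 1 (deriv W₂) := (contDiff_succ_iff_deriv.mp h2').2.2
      exact hd.continuous.prodMk (hc'.differentiable one_ne_zero).continuous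
    have := ODEwork.uniq_right hgK hgM hb hθ.le hc1 hM0 hcont₁ hder₁ hcont₂ hder₂
      (hinit₁.trans hinit₂.symm)
    have hxx := this (right_mem_Icc.mpr hx)
    exact congrArg Prod.fst hxx
end

section
/- There exist a bounded, twice continuously differentiable function U : [0,∞) → ℝ and a constant M > 0 such that U(x) > 0 for all x ≥ 0, U'(0) = −1, −M ≤ U'(x) < 0 for all x ≥ 0, and (σ²/2)·U''(x) − θ·x·U'(x) − α·U(x) = 0 for all x ≥ 0. -/
open Set Filter MeasureTheory Topology

/-- The parametric integral `∫_{t>0} t^p exp(-γ t² - x t) dt`. -/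
noncomputable def ouJ (γ p x : ℝ) : ℝ :=
    ∫ t in Ioi (0 : ℝ), t ^ p * Real.exp (-γ * t ^ 2 - x * t)

lemma ouJ_integrable {γ : ℝ} (hγ : 0 < γ) {p : ℝ} (hp : -1 < p) (x : ℝ) :
    IntegrableOn (fun t : ℝ => t ^ p * Real.exp (-γ * t ^ 2 - x * t)) (Ioi 0) := by
  have hmeas : AEStronglyMeasurable (fun t : ℝ => t ^ p * Real.exp (-γ * t ^ 2 - x * t))
      (volume.restrict (Ioi 0)) := by
    apply Measurable.aestronglyMeasurable
    fun_prop
  refine Integrable.mono'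
    (((integrableOn_rpow_mul_exp_neg_mul_sq (half_pos hγ) hp)).const_mul
      (Real.exp (x ^ 2 / (2 * γ)))) hmeas ?_
  rw [ae_restrict_iff' measurableSet_Ioi]
  refine Eventually.of_forall fun t ht => ?_
  have ht0 : (0 : ℝ) < t := ht
  rw [Real.norm_eq_abs, abs_of_nonneg (by positivity)]
  have key : x ^ 2 / (2 * γ) + -(γ / 2) * t ^ 2 - (-γ * t ^ 2 - x * t)
      = (γ * t + x) ^ 2 / (2 * γ) := by
    field_simp
    ring
  have h1 : Real.exp (-γ * t ^ 2 - x * t)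
      ≤ Real.exp (x ^ 2 / (2 * γ)) * Real.exp (-(γ / 2) * t ^ 2) := by
    rw [← Real.exp_add]
    apply Real.exp_le_exp.2
    have := div_nonneg (sq_nonneg (γ * t + x)) (by linarith : (0 : ℝ) ≤ 2 * γ)
    linarith [key]
  calc t ^ p * Real.exp (-γ * t ^ 2 - x * t)
      ≤ t ^ p * (Real.exp (x ^ 2 / (2 * γ)) * Real.exp (-(γ / 2) * t ^ 2)) :=
        mul_le_mul_of_nonneg_left h1 (Real.rpow_nonneg ht0.le p)
    _ = Real.exp (x ^ 2 / (2 * γ)) * (t ^ p * Real.exp (-(γ / 2) * t ^ 2)) := by ring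

lemma ouJ_hasDerivAt {γ : ℝ} (hγ : 0 < γ) {p : ℝ} (hp : -1 < p) (x₀ : ℝ) :
    HasDerivAt (ouJ γ p) (-(ouJ γ (p + 1) x₀)) x₀ := by
  have hp1 : (-1 : ℝ) < p + 1 := by linarith
  set c : ℝ := |x₀| + 1 with hc
  have key := hasDerivAt_integral_of_dominated_loc_of_deriv_le
    (F := fun x t => t ^ p * Real.exp (-γ * t ^ 2 - x * t))
    (F' := fun x t => -(t ^ (p + 1) * Real.exp (-γ * t ^ 2 - x * t)))
    (μ := volume.restrict (Ioi 0)) (x₀ := x₀)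
    (bound := fun t => Real.exp (c ^ 2 / (2 * γ)) * (t ^ (p + 1) * Real.exp (-(γ / 2) * t ^ 2)))
    (s := Metric.ball x₀ 1) (Metric.ball_mem_nhds x₀ one_pos)
    (Eventually.of_forall fun x => (ouJ_integrable hγ hp x).aestronglyMeasurable)
    (ouJ_integrable hγ hp x₀)
    ((ouJ_integrable hγ hp1 x₀).neg.aestronglyMeasurable)
    ?_
    (((integrableOn_rpow_mul_exp_neg_mul_sq (half_pos hγ) hp1)).const_mul _)
    ?_
  · have h2 := key.2
    have : (∫ t in Ioi (0:ℝ), -(t ^ (p + 1) * Real.exp (-γ * t ^ 2 - x₀ * t)))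
        = -(ouJ γ (p + 1) x₀) := by
      rw [integral_neg]; rfl
    rw [this] at h2
    exact h2
  · -- bound
    rw [ae_restrict_iff' measurableSet_Ioi]
    refine Eventually.of_forall fun t ht => fun x hx => ?_
    have ht0 : (0 : ℝ) < t := ht
    have hxc : |x| ≤ c := by
      have := abs_sub_abs_le_abs_sub x x₀
      have hb : |x - x₀| < 1 := by simpa [Real.dist_eq] using hx
      rw [hc]; linarith
    rw [norm_neg, Real.norm_eq_abs, abs_of_nonneg (by positivity)]
    have key2 : c ^ 2 / (2 * γ) + -(γ / 2) * t ^ 2 - (-γ * t ^ 2 - (-c) * t)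
        = (γ * t - c) ^ 2 / (2 * γ) := by
      field_simp
      ring
    have hxt : -(c * t) ≤ x * t := by
      have h1 : -c ≤ x := neg_le_of_abs_le hxc
      nlinarith [ht0.le]
    have h1 : Real.exp (-γ * t ^ 2 - x * t)
        ≤ Real.exp (c ^ 2 / (2 * γ)) * Real.exp (-(γ / 2) * t ^ 2) := by
      rw [← Real.exp_add]
      apply Real.exp_le_exp.2
      have := div_nonneg (sq_nonneg (γ * t - c)) (by linarith : (0 : ℝ) ≤ 2 * γ)
      nlinarith [key2]
    calc t ^ (p + 1) * Real.exp (-γ * t ^ 2 - x * t)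
        ≤ t ^ (p + 1) * (Real.exp (c ^ 2 / (2 * γ)) * Real.exp (-(γ / 2) * t ^ 2)) :=
          mul_le_mul_of_nonneg_left h1 (Real.rpow_nonneg ht0.le _)
      _ = Real.exp (c ^ 2 / (2 * γ)) * (t ^ (p + 1) * Real.exp (-(γ / 2) * t ^ 2)) := by ring
  · -- differentiability in x
    rw [ae_restrict_iff' measurableSet_Ioi]
    refine Eventually.of_forall fun t ht => fun x _ => ?_
    have ht0 : (0 : ℝ) < t := ht
    have hin : HasDerivAt (fun x : ℝ => -γ * t ^ 2 - x * t) (-t) x := by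
      have := ((hasDerivAt_id x).mul_const t).const_sub (-γ * t ^ 2)
      simpa using this
    have h2 : HasDerivAt (fun x : ℝ => Real.exp (-γ * t ^ 2 - x * t))
        (Real.exp (-γ * t ^ 2 - x * t) * (-t)) x := hin.exp
    have h3 := h2.const_mul (t ^ p)
    refine h3.congr_deriv ?_
    show _ = -(t ^ (p + 1) * Real.exp (-γ * t ^ 2 - x * t))
    rw [Real.rpow_add_one ht0.ne']
    ring

lemma ouJ_tendsto_atTop {γ : ℝ} (hγ : 0 < γ) (q x : ℝ) :
    Tendsto (fun t : ℝ => t ^ q * Real.exp (-γ * t ^ 2 - x * t)) atTop (𝓝 0) := by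
  have hg : Tendsto (fun t : ℝ => t ^ q * Real.exp (-(γ / 2) * t ^ 2)) atTop (𝓝 0) := by
    refine (rpow_mul_exp_neg_mul_sq_isLittleO_exp_neg (half_pos hγ) q).isBigO.trans_tendsto ?_
    have h1 : Tendsto (fun t : ℝ => -(1 / 2) * t) atTop atBot :=
      Tendsto.const_mul_atTop_of_neg (by norm_num) tendsto_id
    exact Real.tendsto_exp_atBot.comp h1
  have hg' : Tendsto (fun t : ℝ => Real.exp (x ^ 2 / (2 * γ)) *
      (t ^ q * Real.exp (-(γ / 2) * t ^ 2))) atTop (𝓝 0) := by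
    simpa using hg.const_mul (Real.exp (x ^ 2 / (2 * γ)))
  refine squeeze_zero' ?_ ?_ hg'
  · filter_upwards [eventually_gt_atTop (0 : ℝ)] with t ht
    positivity
  · filter_upwards [eventually_gt_atTop (0 : ℝ)] with t ht
    have key : x ^ 2 / (2 * γ) + -(γ / 2) * t ^ 2 - (-γ * t ^ 2 - x * t)
        = (γ * t + x) ^ 2 / (2 * γ) := by
      field_simp
      ring
    have h1 : Real.exp (-γ * t ^ 2 - x * t)
        ≤ Real.exp (x ^ 2 / (2 * γ)) * Real.exp (-(γ / 2) * t ^ 2) := by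
      rw [← Real.exp_add]
      apply Real.exp_le_exp.2
      have := div_nonneg (sq_nonneg (γ * t + x)) (by linarith : (0 : ℝ) ≤ 2 * γ)
      linarith [key]
    calc t ^ q * Real.exp (-γ * t ^ 2 - x * t)
        ≤ t ^ q * (Real.exp (x ^ 2 / (2 * γ)) * Real.exp (-(γ / 2) * t ^ 2)) :=
          mul_le_mul_of_nonneg_left h1 (Real.rpow_nonneg ht.le q)
      _ = Real.exp (x ^ 2 / (2 * γ)) * (t ^ q * Real.exp (-(γ / 2) * t ^ 2)) := by ring

lemma ouJ_pos {γ : ℝ} (hγ : 0 < γ) {p : ℝ} (hp : -1 < p) (x : ℝ) : 0 < ouJ γ p x := by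
  have hsupp : Ioi (0 : ℝ) ⊆
      Function.support (fun t : ℝ => t ^ p * Real.exp (-γ * t ^ 2 - x * t)) ∩ Ioi 0 := by
    intro t ht
    have ht0 : (0 : ℝ) < t := ht
    have hpos : 0 < t ^ p * Real.exp (-γ * t ^ 2 - x * t) := by positivity
    exact ⟨Function.mem_support.2 hpos.ne', ht⟩
  have hmeaspos : (0 : ENNReal) <
      volume (Function.support (fun t : ℝ => t ^ p * Real.exp (-γ * t ^ 2 - x * t)) ∩ Ioi 0) := by
    refine lt_of_lt_of_le ?_ (measure_mono hsupp)
    simp [Real.volume_Ioi]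
  have hnonneg : (0 : ℝ → ℝ) ≤ᵐ[volume.restrict (Ioi 0)]
      fun t : ℝ => t ^ p * Real.exp (-γ * t ^ 2 - x * t) := by
    refine (ae_restrict_iff' measurableSet_Ioi).2 (Eventually.of_forall fun t ht => ?_)
    have ht0 : (0 : ℝ) < t := ht
    have : 0 < t ^ p * Real.exp (-γ * t ^ 2 - x * t) := by positivity
    simpa using this.le
  rw [ouJ]
  exact (setIntegral_pos_iff_support_of_nonneg_ae hnonneg (ouJ_integrable hγ hp x)).2 hmeaspos

lemma ouJ_mono {γ : ℝ} (hγ : 0 < γ) {p : ℝ} (hp : -1 < p) {x : ℝ} (hx : 0 ≤ x) :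
    ouJ γ p x ≤ ouJ γ p 0 := by
  refine setIntegral_mono_on (ouJ_integrable hγ hp x) (ouJ_integrable hγ hp 0)
    measurableSet_Ioi fun t ht => ?_
  have ht0 : (0 : ℝ) < t := ht
  refine mul_le_mul_of_nonneg_left ?_ (Real.rpow_nonneg ht0.le p)
  apply Real.exp_le_exp.2
  nlinarith [mul_nonneg hx ht0.le]

lemma ouJ_ode {γ : ℝ} (hγ : 0 < γ) {β : ℝ} (hβ : 0 < β) (x : ℝ) :
    β * ouJ γ (β - 1) x - 2 * γ * ouJ γ (β + 1) x - x * ouJ γ β x = 0 := by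
  have hb1 : (-1 : ℝ) < β - 1 := by linarith
  have hb2 : (-1 : ℝ) < β := by linarith
  have hb3 : (-1 : ℝ) < β + 1 := by linarith
  set f : ℝ → ℝ := fun t => t ^ β * Real.exp (-γ * t ^ 2 - x * t) with hf
  set f' : ℝ → ℝ := fun t =>
      β * (t ^ (β - 1) * Real.exp (-γ * t ^ 2 - x * t))
      - 2 * γ * (t ^ (β + 1) * Real.exp (-γ * t ^ 2 - x * t))
      - x * (t ^ β * Real.exp (-γ * t ^ 2 - x * t)) with hf'
  have hderiv : ∀ t ∈ Ioi (0 : ℝ), HasDerivAt f (f' t) t := by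
    intro t ht
    have ht0 : (0 : ℝ) < t := ht
    have hin : HasDerivAt (fun t : ℝ => -γ * t ^ 2 - x * t) (-γ * (2 * t) - x) t := by
      have h1 : HasDerivAt (fun t : ℝ => t ^ 2) (2 * t) t := by
        simpa using hasDerivAt_pow 2 t
      have := (h1.const_mul (-γ)).sub ((hasDerivAt_id t).const_mul x)
      exact this.congr_deriv (by ring)
    have hexp : HasDerivAt (fun t : ℝ => Real.exp (-γ * t ^ 2 - x * t))
        (Real.exp (-γ * t ^ 2 - x * t) * (-γ * (2 * t) - x)) t := hin.exp
    have hpow : HasDerivAt (fun t : ℝ => t ^ β) (β * t ^ (β - 1)) t :=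
      Real.hasDerivAt_rpow_const (Or.inl ht0.ne')
    have := hpow.mul hexp
    refine this.congr_deriv ?_
    simp only [hf']
    have e1 : t ^ (β + 1) = t ^ β * t := Real.rpow_add_one ht0.ne' β
    rw [e1]
    ring
  have hint : IntegrableOn f' (Ioi 0) := by
    refine (((ouJ_integrable hγ hb1 x).const_mul β).sub
      ((ouJ_integrable hγ hb3 x).const_mul (2 * γ))).sub
      ((ouJ_integrable hγ hb2 x).const_mul x)
  have hcont : ContinuousWithinAt f (Ici 0) 0 := by
    have c1 : ContinuousAt (fun t : ℝ => t ^ β) 0 :=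
      Real.continuousAt_rpow_const 0 β (Or.inr hβ.le)
    have c2 : Continuous fun t : ℝ => Real.exp (-γ * t ^ 2 - x * t) := by fun_prop
    exact (c1.mul c2.continuousAt).continuousWithinAt
  have htend : Tendsto f atTop (𝓝 0) := ouJ_tendsto_atTop hγ β x
  have h0 : f 0 = 0 := by
    simp [hf, Real.zero_rpow hβ.ne']
  have hFTC := integral_Ioi_of_hasDerivAt_of_tendsto hcont hderiv hint htend
  rw [h0, sub_zero] at hFTC
  have hsplit : (∫ t in Ioi (0:ℝ), f' t)
      = β * ouJ γ (β - 1) x - 2 * γ * ouJ γ (β + 1) x - x * ouJ γ β x := by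
    have i1 : Integrable (fun t : ℝ => β * (t ^ (β - 1) * Real.exp (-γ * t ^ 2 - x * t)))
        (volume.restrict (Ioi 0)) := (ouJ_integrable hγ hb1 x).const_mul β
    have i2 : Integrable (fun t : ℝ => 2 * γ * (t ^ (β + 1) * Real.exp (-γ * t ^ 2 - x * t)))
        (volume.restrict (Ioi 0)) := (ouJ_integrable hγ hb3 x).const_mul (2 * γ)
    have i3 : Integrable (fun t : ℝ => x * (t ^ β * Real.exp (-γ * t ^ 2 - x * t)))
        (volume.restrict (Ioi 0)) := (ouJ_integrable hγ hb2 x).const_mul x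
    have i12 : Integrable (fun t : ℝ => β * (t ^ (β - 1) * Real.exp (-γ * t ^ 2 - x * t))
        - 2 * γ * (t ^ (β + 1) * Real.exp (-γ * t ^ 2 - x * t)))
        (volume.restrict (Ioi 0)) := i1.sub i2
    rw [hf']
    rw [integral_sub i12 i3, integral_sub i1 i2,
      integral_const_mul, integral_const_mul, integral_const_mul]
    rfl
  rw [hsplit] at hFTC
  exact hFTC

/-- There exist a bounded, twice continuously differentiable function `U : [0,∞) → ℝ` and a
constant `M > 0` such that `U > 0`, `U'(0) = -1`, `-M ≤ U'(x) < 0` for all `x ≥ 0`, and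
`(σ²/2)U''(x) − θxU'(x) − αU(x) = 0` for all `x ≥ 0`. -/
theorem statement7
    (σ θ α : ℝ) (hσ : 0 < σ) (hθ : 0 < θ) (hα : 0 < α) :
    ∃ U : ℝ → ℝ, ∃ M : ℝ,
      0 < M ∧
      ContDiff ℝ 2 U ∧
      (∃ B : ℝ, ∀ x ≥ (0 : ℝ), |U x| ≤ B) ∧
      (∀ x ≥ (0 : ℝ), 0 < U x) ∧
      deriv U 0 = -1 ∧
      (∀ x ≥ (0 : ℝ), -M ≤ deriv U x ∧ deriv U x < 0) ∧
      (∀ x ≥ (0 : ℝ),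
        σ ^ 2 / 2 * deriv (deriv U) x - θ * x * deriv U x - α * U x = 0) := by
  set γ : ℝ := σ ^ 2 / (4 * θ) with hγdef
  set β : ℝ := α / θ with hβdef
  have hγ : 0 < γ := by positivity
  have hβ : 0 < β := by positivity
  have hb1 : (-1 : ℝ) < β - 1 := by linarith
  have hb2 : (-1 : ℝ) < β := by linarith
  have hb3 : (-1 : ℝ) < β + 1 := by linarith
  have hb4 : (-1 : ℝ) < β + 2 := by linarith
  set c : ℝ := (ouJ γ β 0)⁻¹ with hcdef
  have hc : 0 < c := inv_pos.2 (ouJ_pos hγ hb2 0)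
  set U : ℝ → ℝ := fun x => c * ouJ γ (β - 1) x with hUdef
  have hU' : ∀ x, HasDerivAt U (-(c * ouJ γ β x)) x := by
    intro x
    have := (ouJ_hasDerivAt hγ hb1 x).const_mul c
    have e : β - 1 + 1 = β := by ring
    rw [e] at this
    refine this.congr_deriv ?_
    ring
  have hU'' : ∀ x, HasDerivAt (fun x => -(c * ouJ γ β x)) (c * ouJ γ (β + 1) x) x := by
    intro x
    have := ((ouJ_hasDerivAt hγ hb2 x).const_mul c).neg
    refine this.congr_deriv ?_
    ring
  have hU''' : ∀ x, HasDerivAt (fun x => c * ouJ γ (β + 1) x) (-(c * ouJ γ (β + 2) x)) x := by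
    intro x
    have := (ouJ_hasDerivAt hγ hb3 x).const_mul c
    have e : β + 1 + 1 = β + 2 := by ring
    rw [e] at this
    refine this.congr_deriv ?_
    ring
  have hderivU : deriv U = fun x => -(c * ouJ γ β x) := funext fun x => (hU' x).deriv
  have hderiv2 : deriv (deriv U) = fun x => c * ouJ γ (β + 1) x := by
    rw [hderivU]
    exact funext fun x => (hU'' x).deriv
  refine ⟨U, 1, one_pos, ?_, ?_, ?_, ?_, ?_, ?_⟩
  · -- ContDiff ℝ 2 U
    rw [show ((2 : WithTop ℕ∞)) = 1 + 1 from rfl, contDiff_succ_iff_deriv,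
      contDiff_one_iff_deriv]
    refine ⟨fun x => (hU' x).differentiableAt, by simp, ?_, ?_⟩
    · rw [hderivU]
      exact fun x => (hU'' x).differentiableAt
    · rw [hderiv2]
      have hd : Differentiable ℝ fun x => c * ouJ γ (β + 1) x :=
        fun x => (hU''' x).differentiableAt
      exact hd.continuous
  · -- bounded
    refine ⟨c * ouJ γ (β - 1) 0, fun x hx => ?_⟩
    have h1 : 0 < U x := mul_pos hc (ouJ_pos hγ hb1 x)
    rw [abs_of_pos h1]
    exact mul_le_mul_of_nonneg_left (ouJ_mono hγ hb1 hx) hc.le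
  · -- positive
    exact fun x _ => mul_pos hc (ouJ_pos hγ hb1 x)
  · -- deriv U 0 = -1
    rw [hderivU]
    simp only
    rw [hcdef, inv_mul_cancel₀ (ouJ_pos hγ hb2 0).ne']
  · -- -1 ≤ deriv U x < 0
    intro x hx
    rw [hderivU]
    constructor
    · simp only [neg_le_neg_iff]
      have h1 : ouJ γ β x ≤ ouJ γ β 0 := ouJ_mono hγ hb2 hx
      have h2 : c * ouJ γ β x ≤ c * ouJ γ β 0 := mul_le_mul_of_nonneg_left h1 hc.le
      rw [hcdef, inv_mul_cancel₀ (ouJ_pos hγ hb2 0).ne'] at h2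
      linarith
    · simp only [neg_neg, Left.neg_neg_iff]
      exact mul_pos hc (ouJ_pos hγ hb2 x)
  · -- ODE
    intro x _
    rw [hderiv2, hderivU]
    simp only
    have hode := ouJ_ode hγ hβ x
    have hrel1 : σ ^ 2 / 2 = θ * (2 * γ) := by
      rw [hγdef]; field_simp; ring
    have hrel2 : α = θ * β := by
      rw [hβdef]; field_simp
    rw [hrel1, hrel2, hUdef]
    simp only
    linear_combination (-(c * θ)) * hode
end

section
/- Let r ≥ 0, a > 0, and suppose W : [0, a] → ℝ is continuously differentiable with W(0) = −p, −p ≤ W(x) ≤ 0 for all x ∈ [0, a], and (σ²/2)·W'(x) = F̃(W(x)) + θ·x·W(x) + α·∫₀ˣ W(v) dv + (σ²/2)·r − F̃(−p) for all x ∈ [0, a]. Then for every s ∈ [0, a], W(s) ≥ −p + (r − 2·C(0)/σ²)·s − (p·(θ+α)/σ²)·s². -/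
open Set Filter

/-- Quadratic lower bound: if `W` is continuously differentiable on `[0, a]` with `W(0) = -p`,
`-p ≤ W ≤ 0` there, and `(σ²/2)W'(x) = F̃(W(x)) + θxW(x) + α∫₀ˣW + (σ²/2)r − F̃(-p)`, then
`W(s) ≥ -p + (r − 2C(0)/σ²)s − (p(θ+α)/σ²)s²` for every `s ∈ [0, a]`. -/
theorem statement14
    (C h : ℝ → ℝ) (σ θ α p δ : ℝ)
    (hσ : 0 < σ) (hθ : 0 < θ) (hα : 0 < α) (hp : 0 < p)
    (hC2 : ContDiff ℝ 2 C)
    (hCanti : AntitoneOn C (Set.Ici 0))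
    (hCconv : ConvexOn ℝ (Set.Ici 0) C)
    (hC0 : 0 < C 0)
    (hClim : Tendsto C atTop (nhds 0))
    (hC'' : ∀ u ≥ (0 : ℝ), 0 < deriv (deriv C) u)
    (hC'0 : deriv C 0 < 0)
    (hinv₁ : ∀ u ≥ (0 : ℝ), h (deriv C u) = u)
    (hinv₂ : ∀ y : ℝ, deriv C 0 ≤ y → y < 0 → 0 ≤ h y ∧ deriv C (h y) = y)
    (hδ0 : 0 < δ) (hδ : δ < min p (-deriv C 0))
    (r a : ℝ) (hr : 0 ≤ r) (ha : 0 < a)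
    (W : ℝ → ℝ) (hW : ContDiff ℝ 1 W)
    (hW0 : W 0 = -p)
    (hbd : ∀ x ∈ Set.Icc (0 : ℝ) a, -p ≤ W x ∧ W x ≤ 0)
    (heq : ∀ x ∈ Set.Icc (0 : ℝ) a,
      σ ^ 2 / 2 * deriv W x
        = Ftilde C h δ (W x) + θ * x * W x + α * (∫ v in (0 : ℝ)..x, W v)
          + (σ ^ 2 / 2 * r - Ftilde C h δ (-p))) :
    ∀ s ∈ Set.Icc (0 : ℝ) a,
      -p + (r - 2 * C 0 / σ ^ 2) * s - p * (θ + α) / σ ^ 2 * s ^ 2 ≤ W s := by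
  have hσ2 : (0:ℝ) < σ ^ 2 := by positivity
  -- C is nonnegative on [0, ∞)
  have hCnn : ∀ u : ℝ, 0 ≤ u → 0 ≤ C u := by
    intro u hu
    refine le_of_tendsto hClim ?_
    filter_upwards [eventually_ge_atTop u] with v hv
    exact hCanti hu (le_trans hu hv) hv
  -- boundedness of the LF set for y ≤ 0
  have hbdd : ∀ y : ℝ, y ≤ 0 → BddAbove ((fun u => u * y - C u) '' Set.Ici (0:ℝ)) := by
    intro y hy
    refine ⟨0, ?_⟩
    rintro z ⟨u, hu, rfl⟩
    have : u * y ≤ 0 := mul_nonpos_iff.mpr (Or.inl ⟨hu, hy⟩)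
    have := hCnn u hu
    simp only []
    linarith
  have hne : ∀ y : ℝ, ((fun u => u * y - C u) '' Set.Ici (0:ℝ)).Nonempty :=
    fun y => ⟨0 * y - C 0, ⟨0, Set.mem_Ici.mpr le_rfl, rfl⟩⟩
  -- LF lower bound
  have hLFlb : ∀ y : ℝ, y ≤ 0 → -C 0 ≤ LF C y := by
    intro y hy
    have : (0:ℝ) * y - C 0 ∈ (fun u => u * y - C u) '' Set.Ici (0:ℝ) := ⟨0, Set.mem_Ici.mpr le_rfl, rfl⟩
    have := le_csSup (hbdd y hy) this
    simpa [LF] using this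
  -- LF (-p) ≤ 0
  have hLFp : LF C (-p) ≤ 0 := by
    refine csSup_le (hne _) ?_
    rintro z ⟨u, hu, rfl⟩
    have h1 : u * (-p) ≤ 0 := mul_nonpos_iff.mpr (Or.inl ⟨hu, by linarith⟩)
    have h2 := hCnn u hu
    simp only []
    linarith
  have hδp : δ < p := lt_of_lt_of_le hδ (min_le_left _ _)
  have hδC : δ < -deriv C 0 := lt_of_lt_of_le hδ (min_le_right _ _)
  -- Ftilde at -p
  have hFp : Ftilde C h δ (-p) = LF C (-p) := if_pos (by linarith)
  -- h(-δ) ≥ 0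
  have hhδ : 0 ≤ h (-δ) := (hinv₂ (-δ) (by linarith) (by linarith)).1
  -- Ftilde lower bound
  have hFlb : ∀ y : ℝ, y ≤ 0 → -C 0 ≤ Ftilde C h δ y := by
    intro y hy
    unfold Ftilde
    split_ifs with hyδ
    · exact hLFlb y hy
    · push_neg at hyδ
      have h1 : 0 ≤ h (-δ) * (y + δ) := mul_nonneg hhδ (by linarith)
      have h2 : -C 0 ≤ LF C (-δ) := hLFlb _ (by linarith)
      linarith
  -- the derivative lower bound on Icc 0 a
  have hW' : ∀ x ∈ Set.Icc (0:ℝ) a,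
      r - 2 * C 0 / σ ^ 2 - 2 * (p * (θ + α) / σ ^ 2) * x ≤ deriv W x := by
    intro x hx
    obtain ⟨hx0, hxa⟩ := hx
    obtain ⟨hWl, hWu⟩ := hbd x ⟨hx0, hxa⟩
    have hint : -p * x ≤ ∫ v in (0:ℝ)..x, W v := by
      have : ∫ v in (0:ℝ)..x, (-p) ≤ ∫ v in (0:ℝ)..x, W v := by
        refine intervalIntegral.integral_mono_on hx0 (intervalIntegrable_const)
          (hW.continuous.intervalIntegrable 0 x) ?_
        intro v hv
        exact (hbd v ⟨hv.1, le_trans hv.2 hxa⟩).1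
      simpa [mul_comm] using this
    have hθx : θ * x * (-p) ≤ θ * x * W x := by
      have : 0 ≤ θ * x := mul_nonneg hθ.le hx0
      exact mul_le_mul_of_nonneg_left hWl this
    have hF : -C 0 ≤ Ftilde C h δ (W x) := hFlb _ hWu
    have hFp' : Ftilde C h δ (-p) ≤ 0 := hFp ▸ hLFp
    have key := heq x ⟨hx0, hxa⟩
    have h5 : σ ^ 2 / 2 * (r - 2 * C 0 / σ ^ 2 - 2 * (p * (θ + α) / σ ^ 2) * x)
        ≤ σ ^ 2 / 2 * deriv W x := by
      rw [key]
      have hexp : σ ^ 2 / 2 * (r - 2 * C 0 / σ ^ 2 - 2 * (p * (θ + α) / σ ^ 2) * x)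
          = σ ^ 2 / 2 * r - C 0 - p * θ * x - p * α * x := by
        field_simp
        ring
      rw [hexp]
      have hαint : α * (-p * x) ≤ α * ∫ v in (0:ℝ)..x, W v :=
        mul_le_mul_of_nonneg_left hint hα.le
      nlinarith [hθx, hF, hFp', hαint]
    have := (mul_le_mul_iff_of_pos_left (by positivity : (0:ℝ) < σ ^ 2 / 2)).mp h5
    linarith
  -- the comparison function
  intro s hs
  set c : ℝ := r - 2 * C 0 / σ ^ 2 with hc
  set m : ℝ := p * (θ + α) / σ ^ 2 with hm
  set g : ℝ → ℝ := fun x => W x + (p - c * x + m * x ^ 2) with hg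
  have hgd : ∀ x : ℝ, HasDerivAt g (deriv W x + (-(c * 1) + m * (2 * x ^ 1))) x := by
    intro x
    exact ((hW.differentiable one_ne_zero x).hasDerivAt).add
      ((((hasDerivAt_id x).const_mul c).const_sub p).add ((hasDerivAt_pow 2 x).const_mul m))
  have hmono : MonotoneOn g (Set.Icc 0 a) := by
    refine monotoneOn_of_deriv_nonneg (convex_Icc 0 a) ?_ ?_ ?_
    · exact fun x _ => ((hgd x).continuousAt).continuousWithinAt
    · exact fun x _ => ((hgd x).differentiableAt).differentiableWithinAt
    · intro x hx
      rw [interior_Icc] at hx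
      rw [(hgd x).deriv]
      have := hW' x ⟨hx.1.le, hx.2.le⟩
      simp only [pow_one, mul_one]
      rw [hc, hm] at *
      linarith
  have h0 : g 0 = 0 := by simp [hg, hW0]
  have hgs : 0 ≤ g s := by
    have := hmono ⟨le_rfl, ha.le⟩ hs hs.1
    rwa [h0] at this
  simp only [hg] at hgs
  linarith
end

section
/- Suppose W : [0,∞) → ℝ solves the integral equation with parameter r (for some r ≥ 0) on all of [0,∞), and suppose W(x) < 0 and W'(x) > 0 for every x ≥ 0. Then W(x) → 0 as x → ∞. -/
open Set Filter

/-- If `W` solves the integral equation `(σ²/2)W'(x) = F(W(x)) + θxW(x) + α∫₀ˣW + αK_r` on all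
of `[0,∞)` with `W(0) = -p`, and `W(x) < 0`, `W'(x) > 0` for every `x ≥ 0`, then `W(x) → 0` as
`x → ∞`. -/
theorem statement15
    (C : ℝ → ℝ) (σ θ α p : ℝ)
    (hσ : 0 < σ) (hθ : 0 < θ) (hα : 0 < α) (hp : 0 < p)
    (hC2 : ContDiff ℝ 2 C)
    (hCanti : AntitoneOn C (Set.Ici 0))
    (hCconv : ConvexOn ℝ (Set.Ici 0) C)
    (hC0 : 0 < C 0)
    (hClim : Tendsto C atTop (nhds 0))
    (hFneg : ∀ y ≤ (0 : ℝ), LF C y ≤ 0)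
    (r : ℝ) (hr : 0 ≤ r)
    (W : ℝ → ℝ) (hW : ContDiff ℝ 1 W) (hW0 : W 0 = -p)
    (hIE : ∀ x ≥ (0 : ℝ),
      σ ^ 2 / 2 * deriv W x
        = LF C (W x) + θ * x * W x + α * (∫ s in (0 : ℝ)..x, W s)
          + α * (1 / α * (σ ^ 2 / 2 * r - LF C (-p))))
    (hneg : ∀ x ≥ (0 : ℝ), W x < 0)
    (hinc : ∀ x ≥ (0 : ℝ), 0 < deriv W x) :
    Tendsto W atTop (nhds 0) := by
  have hWc : Continuous W := hW.continuous
  -- W is strictly monotone on [0, ∞)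
  have hmono : StrictMonoOn W (Set.Ici (0 : ℝ)) := by
    apply strictMonoOn_of_deriv_pos (convex_Ici 0) hWc.continuousOn
    intro x hx
    rw [interior_Ici] at hx
    exact hinc x (le_of_lt hx)
  -- auxiliary monotone function on all of ℝ
  set V : ℝ → ℝ := fun x => W (max x 0) with hV
  have hVmono : Monotone V := by
    intro x y hxy
    exact hmono.monotoneOn (le_max_right x 0) (le_max_right y 0)
      (max_le_max hxy le_rfl)
  have hVneg : ∀ x, V x < 0 := fun x => hneg _ (le_max_right x 0)
  have hVbdd : BddAbove (Set.range V) := by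
    refine ⟨0, ?_⟩
    rintro _ ⟨x, rfl⟩
    exact (hVneg x).le
  set L : ℝ := ⨆ x, V x with hL
  have hVtend : Tendsto V atTop (nhds L) := tendsto_atTop_ciSup hVmono hVbdd
  have hEq : W =ᶠ[atTop] V := by
    filter_upwards [eventually_ge_atTop (0 : ℝ)] with x hx
    simp [hV, max_eq_left hx]
  have hWtend : Tendsto W atTop (nhds L) := hVtend.congr' hEq.symm
  have hle : ∀ x ≥ (0 : ℝ), W x ≤ L := by
    intro x hx
    have := le_ciSup hVbdd x
    simpa [hV, max_eq_left hx] using this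
  have hLle : L ≤ 0 := by
    have : V 0 < 0 := hVneg 0
    exact le_of_tendsto hVtend (Filter.Eventually.of_forall fun x => (hVneg x).le)
  -- show L = 0
  rcases lt_or_eq_of_le hLle with hLlt | hLeq
  · exfalso
    set c : ℝ := α * (1 / α * (σ ^ 2 / 2 * r - LF C (-p))) with hc
    set A : ℝ := (θ + α) * (-L) with hA
    have hApos : 0 < A := by
      apply mul_pos (by linarith) (by linarith)
    set x : ℝ := max 1 ((|c| + 1) / A) with hx
    have hx0 : (0 : ℝ) ≤ x := le_trans zero_le_one (le_max_left _ _)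
    have hxA : A * x ≥ |c| + 1 := by
      have : (|c| + 1) / A ≤ x := le_max_right _ _
      calc |c| + 1 = (|c| + 1) / A * A := by field_simp
        _ ≤ x * A := by
            apply mul_le_mul_of_nonneg_right this hApos.le
        _ = A * x := mul_comm _ _
    have hIEx := hIE x hx0
    have h1 : LF C (W x) ≤ 0 := hFneg _ (hneg x hx0).le
    have h2 : θ * x * W x ≤ θ * x * L := by
      apply mul_le_mul_of_nonneg_left (hle x hx0)
      positivity
    have h3 : (∫ s in (0 : ℝ)..x, W s) ≤ x * L := by
      have : (∫ s in (0 : ℝ)..x, W s) ≤ ∫ s in (0 : ℝ)..x, L := by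
        apply intervalIntegral.integral_mono_on hx0
          (hWc.intervalIntegrable 0 x) (intervalIntegrable_const)
        intro s hs
        exact hle s hs.1
      simpa using this
    have h4 : α * (∫ s in (0 : ℝ)..x, W s) ≤ α * (x * L) :=
      mul_le_mul_of_nonneg_left h3 hα.le
    have h5 : 0 < σ ^ 2 / 2 * deriv W x := by
      apply mul_pos (by positivity) (hinc x hx0)
    have hcabs : c ≤ |c| := le_abs_self c
    nlinarith [hIEx, h1, h2, h4, h5, hxA]
  · rw [hLeq] at hWtend
    exact hWtend
end
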